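/- arXiv:1110.5488 — 5 statements merged into one kernel-verified Lean document; each statement's English description precedes it below -/
import Mathlib

section
/- Suppose the Perron–Frobenius operator P is quasi-compact of diagonal type on B, i.e. P = Σ_{i=1}^s λ_i Π_i + Q where the λ_i are complex numbers of modulus 1, the Π_i are finite-rank bounded projections on B with Π_iΠ_j = 0 for i ≠ j, and Q is a bounded operator on B with spectral radius strictly less than 1 satisfying QΠ_i = Π_iQ = 0 for all i. Then for every f ∈ B with f ≥ 0 m-a.e. and ∫ f dm = 1, the Cesàro averages (1/n) Σ_{k=0}^{n-1} P^k f converge in the norm of B to some f* ∈ B with f* ≥ 0 m-a.e., ∫ f* dm = 1 and Pf* = f*; consequently the measure μ_f with dμ_f/dm = f* is a T-invariant probability absolutely continuous with respect to m, and 1 is an eigenvalue of P on B. -/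
open MeasureTheory Filter Topology
open scoped ENNReal

section Stmt3Aux

variable {E : Type*} [NormedAddCommGroup E] [NormedSpace ℂ E]

lemma stmt3_cesaro_zero (v : ℕ → E) (C : ℝ)
    (hC : ∀ n, ‖∑ k ∈ Finset.range n, v k‖ ≤ C) :
    Tendsto (fun n : ℕ => (n : ℂ)⁻¹ • ∑ k ∈ Finset.range n, v k) atTop (𝓝 0) := by
  apply squeeze_zero_norm (a := fun n : ℕ => (n : ℝ)⁻¹ * C)
  · intro n
    rw [norm_smul, norm_inv]
    simp only [Complex.norm_natCast]
    exact mul_le_mul_of_nonneg_left (hC n) (by positivity)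
  · simpa using (tendsto_inv_atTop_nhds_zero_nat (𝕜 := ℝ)).mul_const C

lemma stmt3_cesaro_scalar (lam : ℂ) (h : ‖lam‖ = 1) :
    Tendsto (fun n : ℕ => (n : ℂ)⁻¹ * ∑ k ∈ Finset.range n, lam ^ k) atTop
      (𝓝 (if lam = 1 then 1 else 0)) := by
  by_cases h1 : lam = 1
  · simp only [h1, if_pos rfl, one_pow, Finset.sum_const, Finset.card_range, nsmul_eq_mul,
      mul_one]
    apply Tendsto.congr' (f₁ := fun _ : ℕ => (1 : ℂ))
    · filter_upwards [eventually_ge_atTop 1] with n hn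
      rw [inv_mul_cancel₀]
      exact_mod_cast (Nat.pos_of_ne_zero (by omega)).ne'
    · exact tendsto_const_nhds
  · rw [if_neg h1]
    have key := stmt3_cesaro_zero (E := ℂ) (fun k => lam ^ k) (2 / ‖lam - 1‖) ?_
    · simpa [smul_eq_mul] using key
    · intro n
      rw [geom_sum_eq h1, norm_div]
      have hnum : ‖lam ^ n - 1‖ ≤ 2 := by
        calc ‖lam ^ n - 1‖ ≤ ‖lam ^ n‖ + ‖(1 : ℂ)‖ := norm_sub_le _ _
        _ = 2 := by rw [norm_pow, h]; norm_num
      have hden : (0:ℝ) < ‖lam - 1‖ := by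
        rw [norm_pos_iff]; exact sub_ne_zero_of_ne h1
      exact div_le_div_of_nonneg_right hnum hden.le

end Stmt3Aux

set_option maxHeartbeats 1600000

/-- If the Perron–Frobenius operator is quasi-compact of diagonal type on a
Banach space `B ⊂ L¹(m)` (containing the constants, continuously embedded, stable under `P`,
with spectral radius one), then the Cesàro averages of `Pⁿf` of any nonnegative normalized
`f ∈ B` converge in `B` to a fixed density `f*`, yielding a `T`-invariant absolutely continuous
probability measure; in particular `1` is an eigenvalue of `P` on `B`. -/
theorem stmt_3 {X : Type*} [MeasurableSpace X] (m : Measure X) [IsProbabilityMeasure m]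
    (T : X → X) (hT : Measurable T)
    (hns : ∀ A : Set X, MeasurableSet A → m A = 0 → m (T ⁻¹' A) = 0)
    -- B is a complex Banach space ...
    {B : Type*} [NormedAddCommGroup B] [NormedSpace ℂ B] [CompleteSpace B]
    -- ... continuously embedded in L¹(m)
    (ι : B →L[ℂ] Lp ℂ 1 m) (hι : Function.Injective ι)
    -- constant functions lie in B
    (oneB : B) (honeB : ∀ᵐ x ∂m, (ι oneB : X → ℂ) x = 1)
    -- P(B) ⊂ B and P restricted to B is bounded: PB is the restriction of the
    -- Perron-Frobenius operator to B
    (PB : B →L[ℂ] B)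
    (hPB : ∀ (f : B) (A : Set X), MeasurableSet A →
        ∫ x in A, (ι (PB f) : X → ℂ) x ∂m = ∫ x in T ⁻¹' A, (ι f : X → ℂ) x ∂m)
    -- spectral radius of P on B is one
    (hrad : spectralRadius ℂ (PB : B →L[ℂ] B) = 1)
    -- P is quasi-compact of diagonal type on B :
    (s : ℕ) (lam : Fin s → ℂ) (hlam : ∀ i, ‖lam i‖ = 1)
    (Pr : Fin s → B →L[ℂ] B)
    (hproj : ∀ i, (Pr i).comp (Pr i) = Pr i)
    (hfinrank : ∀ i, FiniteDimensional ℂ (LinearMap.range (Pr i : B →ₗ[ℂ] B)))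
    (horth : ∀ i j, i ≠ j → (Pr i).comp (Pr j) = 0)
    (Q : B →L[ℂ] B) (hQrad : spectralRadius ℂ (Q : B →L[ℂ] B) < 1)
    (hQPr : ∀ i, Q.comp (Pr i) = 0) (hPrQ : ∀ i, (Pr i).comp Q = 0)
    (hdecomp : PB = (∑ i, lam i • Pr i) + Q) :
    ∀ f : B, (∀ᵐ x ∂m, 0 ≤ ((ι f : X → ℂ) x).re ∧ ((ι f : X → ℂ) x).im = 0) →
      (∫ x, (ι f : X → ℂ) x ∂m = 1) →
      ∃ fstar : B,
        -- Cesàro averages converge in B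
        Tendsto (fun n : ℕ => (n : ℂ)⁻¹ • ∑ k ∈ Finset.range n, (PB ^ k) f)
          atTop (𝓝 fstar) ∧
        (∀ᵐ x ∂m, 0 ≤ ((ι fstar : X → ℂ) x).re ∧ ((ι fstar : X → ℂ) x).im = 0) ∧
        (∫ x, (ι fstar : X → ℂ) x ∂m = 1) ∧
        PB fstar = fstar ∧
        -- the associated measure μ_f is a T-invariant absolutely continuous probability
        (∃ μf : Measure X,
          μf = m.withDensity (fun x => ENNReal.ofReal ((ι fstar : X → ℂ) x).re) ∧
          IsProbabilityMeasure μf ∧ μf ≪ m ∧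
            ∀ A : Set X, MeasurableSet A → μf (T ⁻¹' A) = μf A) ∧
        -- 1 is an eigenvalue of P on B
        (∃ g : B, g ≠ 0 ∧ PB g = g) := by
  intro f hf hfint
  -- basic integrability of L¹ elements
  have intg : ∀ g : Lp ℂ 1 m, Integrable (g : X → ℂ) m := fun g => L1.integrable_coeFn g
  -- real and imaginary parts of set integrals
  have setInt_re : ∀ (g : Lp ℂ 1 m) (A : Set X),
      ∫ x in A, ((g : X → ℂ) x).re ∂m = (∫ x in A, (g : X → ℂ) x ∂m).re := by
    intro g A
    simpa using (Complex.reCLM).integral_comp_comm ((intg g).integrableOn (s := A))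
  have setInt_im : ∀ (g : Lp ℂ 1 m) (A : Set X),
      ∫ x in A, ((g : X → ℂ) x).im ∂m = (∫ x in A, (g : X → ℂ) x ∂m).im := by
    intro g A
    simpa using (Complex.imCLM).integral_comp_comm ((intg g).integrableOn (s := A))
  -- positivity from set integrals
  have pos_of_setInt : ∀ g : Lp ℂ 1 m,
      (∀ A : Set X, MeasurableSet A →
        0 ≤ (∫ x in A, (g : X → ℂ) x ∂m).re ∧ (∫ x in A, (g : X → ℂ) x ∂m).im = 0) →
      ∀ᵐ x ∂m, 0 ≤ ((g : X → ℂ) x).re ∧ ((g : X → ℂ) x).im = 0 := by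
    intro g hg
    have hre : 0 ≤ᵐ[m] fun x => ((g : X → ℂ) x).re := by
      refine ae_nonneg_of_forall_setIntegral_nonneg (intg g).re (fun A hA _ => ?_)
      rw [setInt_re g A]; exact (hg A hA).1
    have him : 0 ≤ᵐ[m] fun x => ((g : X → ℂ) x).im := by
      refine ae_nonneg_of_forall_setIntegral_nonneg (intg g).im (fun A hA _ => ?_)
      rw [setInt_im g A, (hg A hA).2]
    have him' : 0 ≤ᵐ[m] fun x => -((g : X → ℂ) x).im := by
      refine ae_nonneg_of_forall_setIntegral_nonneg (intg g).im.neg (fun A hA _ => ?_)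
      rw [integral_neg, setInt_im g A, (hg A hA).2, neg_zero]
    filter_upwards [hre, him, him'] with x h1 h2 h3
    simp only [Pi.zero_apply] at h1 h2 h3
    exact ⟨h1, le_antisymm (by linarith) h2⟩
  -- P preserves positivity
  have pos_preserve : ∀ g : B,
      (∀ᵐ x ∂m, 0 ≤ ((ι g : X → ℂ) x).re ∧ ((ι g : X → ℂ) x).im = 0) →
      (∀ᵐ x ∂m, 0 ≤ ((ι (PB g) : X → ℂ) x).re ∧ ((ι (PB g) : X → ℂ) x).im = 0) := by
    intro g hg
    apply pos_of_setInt
    intro A hA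
    rw [hPB g A hA]
    constructor
    · rw [← setInt_re]
      exact integral_nonneg_of_ae (ae_restrict_of_ae (hg.mono fun x hx => hx.1))
    · rw [← setInt_im]
      have h0 : (fun x => ((ι g : X → ℂ) x).im) =ᵐ[m] 0 := hg.mono fun x hx => hx.2
      rw [integral_congr_ae (ae_restrict_of_ae h0)]
      simp
  -- positivity of all iterates
  have hpos_iter : ∀ k : ℕ,
      ∀ᵐ x ∂m, 0 ≤ ((ι ((PB ^ k) f) : X → ℂ) x).re ∧ ((ι ((PB ^ k) f) : X → ℂ) x).im = 0 := by
    intro k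
    induction k with
    | zero => simpa using hf
    | succ k ih =>
      have := pos_preserve ((PB ^ k) f) ih
      simpa [pow_succ', ContinuousLinearMap.mul_apply] using this
  -- integrals of all iterates are 1
  have hint_pb : ∀ g : B, ∫ x, (ι (PB g) : X → ℂ) x ∂m = ∫ x, (ι g : X → ℂ) x ∂m := by
    intro g
    have := hPB g Set.univ MeasurableSet.univ
    simpa [Measure.restrict_univ] using this
  have hint_iter : ∀ k : ℕ, ∫ x, (ι ((PB ^ k) f) : X → ℂ) x ∂m = 1 := by
    intro k
    induction k with
    | zero => simpa using hfint
    | succ k ih =>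
      rw [pow_succ', ContinuousLinearMap.mul_apply, hint_pb]
      exact ih
  -- algebra of set integrals on L¹
  have hsmul_int : ∀ (c : ℂ) (g : Lp ℂ 1 m) (A : Set X),
      ∫ x in A, ((c • g : Lp ℂ 1 m) : X → ℂ) x ∂m = c * ∫ x in A, (g : X → ℂ) x ∂m := by
    intro c g A
    rw [integral_congr_ae (ae_restrict_of_ae (Lp.coeFn_smul c g))]
    simp only [Pi.smul_apply, smul_eq_mul, integral_const_mul]
  have hsum_int : ∀ (n : ℕ) (G : ℕ → Lp ℂ 1 m) (A : Set X),
      ∫ x in A, ((∑ k ∈ Finset.range n, G k : Lp ℂ 1 m) : X → ℂ) x ∂m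
        = ∑ k ∈ Finset.range n, ∫ x in A, (G k : X → ℂ) x ∂m := by
    intro n G A
    induction n with
    | zero =>
      simp only [Finset.range_zero, Finset.sum_empty]
      rw [integral_congr_ae (ae_restrict_of_ae (Lp.coeFn_zero ℂ 1 m))]
      simp
    | succ n ih =>
      rw [Finset.sum_range_succ, Finset.sum_range_succ, ← ih]
      rw [integral_congr_ae (ae_restrict_of_ae (Lp.coeFn_add _ _))]
      exact integral_add ((intg _).integrableOn) ((intg _).integrableOn)
  -- convergence in L¹ implies convergence of set integrals
  have hL1conv : ∀ (G : ℕ → Lp ℂ 1 m) (G0 : Lp ℂ 1 m), Tendsto G atTop (𝓝 G0) →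
      ∀ A : Set X, Tendsto (fun n => ∫ x in A, (G n : X → ℂ) x ∂m) atTop
        (𝓝 (∫ x in A, (G0 : X → ℂ) x ∂m)) := by
    intro G G0 hG A
    apply tendsto_iff_norm_sub_tendsto_zero.mpr
    apply squeeze_zero (fun n => norm_nonneg _) (g := fun n => ‖G n - G0‖)
    · intro n
      have h1 : ∫ x in A, (G n : X → ℂ) x ∂m - ∫ x in A, (G0 : X → ℂ) x ∂m
          = ∫ x in A, ((G n - G0 : Lp ℂ 1 m) : X → ℂ) x ∂m := by
        rw [integral_congr_ae (ae_restrict_of_ae (Lp.coeFn_sub (G n) G0))]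
        exact (integral_sub ((intg _).integrableOn) ((intg _).integrableOn)).symm
      rw [h1]
      calc ‖∫ x in A, ((G n - G0 : Lp ℂ 1 m) : X → ℂ) x ∂m‖
          ≤ ∫ x in A, ‖((G n - G0 : Lp ℂ 1 m) : X → ℂ) x‖ ∂m :=
            norm_integral_le_integral_norm _
        _ ≤ ∫ x, ‖((G n - G0 : Lp ℂ 1 m) : X → ℂ) x‖ ∂m :=
            setIntegral_le_integral (intg _).norm (Eventually.of_forall fun x => norm_nonneg _)
        _ = ‖G n - G0‖ := (L1.norm_eq_integral_norm _).symm
    · exact tendsto_iff_norm_sub_tendsto_zero.mp hG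
  -- products in the ring of continuous linear maps
  have hPrQ' : ∀ i, (Pr i) * Q = 0 := fun i => hPrQ i
  have hQPr' : ∀ i, Q * (Pr i) = 0 := fun i => hQPr i
  have hPrPr : ∀ i j, (Pr i) * (Pr j) = if i = j then Pr i else 0 := by
    intro i j
    by_cases hij : i = j
    · subst hij; rw [if_pos rfl]; exact hproj i
    · rw [if_neg hij]; exact horth i j hij
  have hPrQpow : ∀ (i : Fin s) (k : ℕ), (Pr i) * Q ^ (k + 1) = 0 := by
    intro i k
    rw [pow_succ', ← mul_assoc, hPrQ' i, zero_mul]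
  -- the operator power identity
  have hpow : ∀ k : ℕ, PB ^ (k + 1) = (∑ i, lam i ^ (k + 1) • Pr i) + Q ^ (k + 1) := by
    intro k
    induction k with
    | zero => simpa [pow_one] using hdecomp
    | succ k ih =>
      have t1 : (∑ i, lam i • Pr i) * (∑ j, lam j ^ (k + 1) • Pr j)
          = ∑ i, lam i ^ (k + 2) • Pr i := by
        rw [Finset.sum_mul_sum]
        refine Finset.sum_congr rfl fun i _ => ?_
        rw [Finset.sum_eq_single i]
        · rw [smul_mul_assoc, mul_smul_comm, hPrPr i i, if_pos rfl, smul_smul]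
          ring_nf
        · intro j _ hji
          rw [smul_mul_assoc, mul_smul_comm, hPrPr i j, if_neg (fun h => hji h.symm),
            smul_zero, smul_zero]
        · intro h; exact absurd (Finset.mem_univ i) h
      have t2 : (∑ i, lam i • Pr i) * Q ^ (k + 1) = 0 := by
        rw [Finset.sum_mul]
        refine Finset.sum_eq_zero fun i _ => ?_
        rw [smul_mul_assoc, hPrQpow i k, smul_zero]
      have t3 : Q * (∑ j, lam j ^ (k + 1) • Pr j) = 0 := by
        rw [Finset.mul_sum]
        refine Finset.sum_eq_zero fun j _ => ?_
        rw [mul_smul_comm, hQPr' j, smul_zero]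
      calc PB ^ (k + 2) = PB * PB ^ (k + 1) := by rw [pow_succ']
        _ = ((∑ i, lam i • Pr i) + Q) * ((∑ i, lam i ^ (k + 1) • Pr i) + Q ^ (k + 1)) := by
            rw [ih, ← hdecomp]
        _ = (∑ i, lam i ^ (k + 2) • Pr i) + Q ^ (k + 2) := by
            rw [add_mul, mul_add, mul_add, t1, t2, t3, add_zero, ← pow_succ', zero_add]
  have happly : ∀ k : ℕ,
      (PB ^ (k + 1)) f = (∑ i, lam i ^ (k + 1) • Pr i f) + (Q ^ (k + 1)) f := by
    intro k
    rw [hpow k]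
    simp [ContinuousLinearMap.add_apply, ContinuousLinearMap.coe_sum',
      ContinuousLinearMap.smul_apply, Finset.sum_apply]
  -- the remainder sequence
  set w : ℕ → B := fun k => (PB ^ k) f - ∑ i, lam i ^ k • Pr i f with hw
  have hwdef : ∀ k, (PB ^ k) f = (∑ i, lam i ^ k • Pr i f) + w k := by
    intro k; simp only [hw]; abel
  have hwk : ∀ k, w (k + 1) = (Q ^ (k + 1)) f := by
    intro k; simp only [hw]; rw [happly k]; abel
  -- geometric decay of Q-iterates
  obtain ⟨r, hr_lt, hr1⟩ := exists_between hQrad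
  have hrtop : r ≠ ⊤ := (hr1.trans_le le_top).ne
  set r' : NNReal := r.toNNReal with hr'
  have hrr' : (r' : ℝ≥0∞) = r := ENNReal.coe_toNNReal hrtop
  have hr'1 : (r' : ℝ) < 1 := by
    have : (r' : ℝ≥0∞) < 1 := by rw [hrr']; exact hr1
    exact_mod_cast this
  have hQn : ∀ᶠ n : ℕ in atTop, ‖Q ^ n‖ ≤ (r' : ℝ) ^ n := by
    have hgel := spectrum.pow_nnnorm_pow_one_div_tendsto_nhds_spectralRadius Q
    filter_upwards [hgel.eventually_lt_const hr_lt, eventually_ge_atTop 1] with n hn hn1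
    have hnne : (n : ℝ) ≠ 0 := by positivity
    have h2 := ENNReal.rpow_lt_rpow hn (by positivity : (0:ℝ) < (n:ℝ))
    rw [← ENNReal.rpow_mul, one_div, inv_mul_cancel₀ hnne, ENNReal.rpow_one, ← hrr',
      ENNReal.rpow_natCast] at h2
    have h3 : ‖Q ^ n‖₊ ≤ r' ^ n := by exact_mod_cast h2.le
    calc ‖Q ^ n‖ = (‖Q ^ n‖₊ : ℝ) := rfl
      _ ≤ ((r' ^ n : NNReal) : ℝ) := by exact_mod_cast h3
      _ = (r' : ℝ) ^ n := by push_cast; ring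
  have hsum : Summable (fun k : ℕ => ‖(Q ^ (k + 1)) f‖) := by
    apply Summable.of_norm_bounded_eventually_nat (g := fun k => (r' : ℝ) ^ (k + 1) * ‖f‖)
    · exact (summable_nat_add_iff 1).2
        ((summable_geometric_of_lt_one r'.coe_nonneg hr'1).mul_right ‖f‖)
    · have hQn' := (tendsto_add_atTop_nat 1).eventually hQn
      filter_upwards [hQn'] with k hk
      rw [Real.norm_eq_abs, abs_of_nonneg (norm_nonneg _)]
      calc ‖(Q ^ (k + 1)) f‖ ≤ ‖Q ^ (k + 1)‖ * ‖f‖ := (Q ^ (k + 1)).le_opNorm f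
        _ ≤ (r' : ℝ) ^ (k + 1) * ‖f‖ := by
            exact mul_le_mul_of_nonneg_right hk (norm_nonneg f)
  -- bounded partial sums of the remainder
  set Cw : ℝ := ‖w 0‖ + ∑' k, ‖(Q ^ (k + 1)) f‖ with hCwdef
  have hCw : ∀ n, ‖∑ k ∈ Finset.range n, w k‖ ≤ Cw := by
    intro n
    have hCw0 : (0:ℝ) ≤ ∑' k, ‖(Q ^ (k + 1)) f‖ := tsum_nonneg fun k => norm_nonneg _
    match n with
    | 0 => simp [hCwdef]; positivity
    | Nat.succ n =>
      rw [Finset.sum_range_succ']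
      calc ‖(∑ k ∈ Finset.range n, w (k + 1)) + w 0‖
          ≤ ‖∑ k ∈ Finset.range n, w (k + 1)‖ + ‖w 0‖ := norm_add_le _ _
        _ ≤ (∑' k, ‖(Q ^ (k + 1)) f‖) + ‖w 0‖ := by
            apply add_le_add_left
            calc ‖∑ k ∈ Finset.range n, w (k + 1)‖
                ≤ ∑ k ∈ Finset.range n, ‖w (k + 1)‖ := norm_sum_le _ _
              _ = ∑ k ∈ Finset.range n, ‖(Q ^ (k + 1)) f‖ := by
                  exact Finset.sum_congr rfl fun k _ => by rw [hwk k]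
              _ ≤ ∑' k, ‖(Q ^ (k + 1)) f‖ :=
                  Summable.sum_le_tsum _ (fun k _ => norm_nonneg _) hsum
        _ = Cw := by rw [hCwdef, add_comm]
  -- the candidate limit
  set fstar : B := ∑ i, (if lam i = 1 then (1:ℂ) else 0) • Pr i f with hfstar
  -- key decomposition of the Cesàro averages
  have hkey : ∀ n : ℕ, (n : ℂ)⁻¹ • ∑ k ∈ Finset.range n, (PB ^ k) f
      = (∑ i, ((n : ℂ)⁻¹ * ∑ k ∈ Finset.range n, lam i ^ k) • Pr i f)
        + (n : ℂ)⁻¹ • ∑ k ∈ Finset.range n, w k := by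
    intro n
    have hsplit : ∑ k ∈ Finset.range n, (PB ^ k) f
        = (∑ i, (∑ k ∈ Finset.range n, lam i ^ k) • Pr i f) + ∑ k ∈ Finset.range n, w k := by
      calc ∑ k ∈ Finset.range n, (PB ^ k) f
          = ∑ k ∈ Finset.range n, ((∑ i, lam i ^ k • Pr i f) + w k) :=
            Finset.sum_congr rfl fun k _ => hwdef k
        _ = (∑ k ∈ Finset.range n, ∑ i, lam i ^ k • Pr i f) + ∑ k ∈ Finset.range n, w k :=
            Finset.sum_add_distrib
        _ = (∑ i, (∑ k ∈ Finset.range n, lam i ^ k) • Pr i f) + ∑ k ∈ Finset.range n, w k := by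
            rw [Finset.sum_comm]
            congr 1
            exact Finset.sum_congr rfl fun i _ => (Finset.sum_smul).symm
    rw [hsplit, smul_add, Finset.smul_sum]
    congr 1
    exact Finset.sum_congr rfl fun i _ => (smul_smul _ _ _)
  -- convergence of the Cesàro averages
  have hconv : Tendsto (fun n : ℕ => (n : ℂ)⁻¹ • ∑ k ∈ Finset.range n, (PB ^ k) f)
      atTop (𝓝 fstar) := by
    have h1 : Tendsto (fun n : ℕ => ∑ i, ((n : ℂ)⁻¹ * ∑ k ∈ Finset.range n, lam i ^ k) • Pr i f)
        atTop (𝓝 fstar) := by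
      have := tendsto_finset_sum (Finset.univ : Finset (Fin s))
        (fun i _ => (stmt3_cesaro_scalar (lam i) (hlam i)).smul_const (Pr i f))
      simpa [hfstar] using this
    have h2 : Tendsto (fun n : ℕ => (n : ℂ)⁻¹ • ∑ k ∈ Finset.range n, w k) atTop (𝓝 0) :=
      stmt3_cesaro_zero w Cw hCw
    have := h1.add h2
    rw [add_zero] at this
    exact this.congr fun n => (hkey n).symm
  -- fstar is fixed by PB
  have hPBPr : ∀ i, PB (Pr i f) = lam i • Pr i f := by
    intro i
    have : PB * Pr i = lam i • Pr i := by
      rw [hdecomp, add_mul, Finset.sum_mul]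
      have e1 : ∑ j, (lam j • Pr j) * Pr i = lam i • Pr i := by
        rw [Finset.sum_eq_single i]
        · rw [smul_mul_assoc, hPrPr i i, if_pos rfl]
        · intro j _ hji
          rw [smul_mul_assoc, hPrPr j i, if_neg hji, smul_zero]
        · intro h; exact absurd (Finset.mem_univ i) h
      rw [e1, hQPr' i, add_zero]
    calc PB (Pr i f) = (PB * Pr i) f := rfl
      _ = (lam i • Pr i) f := by rw [this]
      _ = lam i • Pr i f := rfl
  have hfix : PB fstar = fstar := by
    rw [hfstar, map_sum]
    refine Finset.sum_congr rfl fun i _ => ?_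
    rw [_root_.map_smul, hPBPr i]
    by_cases h1 : lam i = 1
    · rw [if_pos h1, h1, one_smul, one_smul]
    · rw [if_neg h1, zero_smul, zero_smul]
  -- set integrals of the Cesàro averages
  have hcesA : ∀ (n : ℕ) (A : Set X),
      ∫ x in A, (ι ((n : ℂ)⁻¹ • ∑ k ∈ Finset.range n, (PB ^ k) f) : X → ℂ) x ∂m
        = (n : ℂ)⁻¹ * ∑ k ∈ Finset.range n, ∫ x in A, (ι ((PB ^ k) f) : X → ℂ) x ∂m := by
    intro n A
    rw [_root_.map_smul, map_sum, hsmul_int, hsum_int]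
  have hιconv : Tendsto (fun n : ℕ => ι ((n : ℂ)⁻¹ • ∑ k ∈ Finset.range n, (PB ^ k) f))
      atTop (𝓝 (ι fstar)) := (ι.continuous.tendsto fstar).comp hconv
  have hninv : ∀ n : ℕ, ((n : ℂ))⁻¹ = Complex.ofReal ((n : ℝ)⁻¹) := by
    intro n; rw [Complex.ofReal_inv, Complex.ofReal_natCast]
  -- the terms of the approximating sequence of set integrals
  have hterm : ∀ (n : ℕ) (A : Set X),
      0 ≤ (∫ x in A, (ι ((n : ℂ)⁻¹ • ∑ k ∈ Finset.range n, (PB ^ k) f) : X → ℂ) x ∂m).re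
      ∧ (∫ x in A, (ι ((n : ℂ)⁻¹ • ∑ k ∈ Finset.range n, (PB ^ k) f) : X → ℂ) x ∂m).im = 0 := by
    intro n A
    have hS : ∀ k : ℕ, 0 ≤ (∫ x in A, (ι ((PB ^ k) f) : X → ℂ) x ∂m).re
        ∧ (∫ x in A, (ι ((PB ^ k) f) : X → ℂ) x ∂m).im = 0 := by
      intro k
      constructor
      · rw [← setInt_re]
        exact integral_nonneg_of_ae (ae_restrict_of_ae ((hpos_iter k).mono fun x hx => hx.1))
      · rw [← setInt_im]
        have h0 : (fun x => ((ι ((PB ^ k) f) : X → ℂ) x).im) =ᵐ[m] 0 :=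
          (hpos_iter k).mono fun x hx => hx.2
        rw [integral_congr_ae (ae_restrict_of_ae h0)]
        simp
    rw [hcesA n A, hninv n, Complex.re_ofReal_mul, Complex.im_ofReal_mul, Complex.re_sum,
      Complex.im_sum]
    constructor
    · exact mul_nonneg (by positivity) (Finset.sum_nonneg fun k _ => (hS k).1)
    · rw [Finset.sum_congr rfl fun k _ => (hS k).2]
      simp
  -- positivity of fstar
  have hposstar : ∀ᵐ x ∂m, 0 ≤ ((ι fstar : X → ℂ) x).re ∧ ((ι fstar : X → ℂ) x).im = 0 := by
    apply pos_of_setInt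
    intro A hA
    have hconvA := hL1conv _ _ hιconv A
    constructor
    · exact ge_of_tendsto' ((Complex.continuous_re.tendsto _).comp hconvA)
        (fun n => (hterm n A).1)
    · have h1 := (Complex.continuous_im.tendsto _).comp hconvA
      rw [show ((fun z : ℂ => z.im) ∘ fun n : ℕ =>
          ∫ x in A, (ι ((n : ℂ)⁻¹ • ∑ k ∈ Finset.range n, (PB ^ k) f) : X → ℂ) x ∂m)
          = fun _ : ℕ => (0 : ℝ) from funext fun n => (hterm n A).2] at h1
      exact tendsto_nhds_unique h1 tendsto_const_nhds
  -- integral of fstar is 1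
  have hint_star : ∫ x, (ι fstar : X → ℂ) x ∂m = 1 := by
    have h1 := hL1conv _ _ hιconv Set.univ
    simp only [Measure.restrict_univ] at h1
    refine tendsto_nhds_unique h1 (tendsto_const_nhds.congr' ?_)
    filter_upwards [eventually_ge_atTop 1] with n hn
    have h3 := hcesA n Set.univ
    simp only [Measure.restrict_univ] at h3
    rw [h3, Finset.sum_congr rfl fun k _ => hint_iter k, Finset.sum_const, Finset.card_range,
      nsmul_eq_mul, mul_one, inv_mul_cancel₀]
    exact_mod_cast (Nat.pos_of_ne_zero (by omega)).ne'
  -- fstar is nonzero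
  have hne : fstar ≠ 0 := by
    intro h0
    rw [h0, map_zero] at hint_star
    rw [integral_congr_ae (Lp.coeFn_zero ℂ 1 m)] at hint_star
    simp at hint_star
  -- the invariant measure
  have hre_int : Integrable (fun x => ((ι fstar : X → ℂ) x).re) m := (intg (ι fstar)).re
  have hre_nn : 0 ≤ᵐ[m] fun x => ((ι fstar : X → ℂ) x).re := hposstar.mono fun x hx => hx.1
  have hofReal : ∀ A : Set X, MeasurableSet A →
      m.withDensity (fun x => ENNReal.ofReal ((ι fstar : X → ℂ) x).re) A
        = ENNReal.ofReal (∫ x in A, ((ι fstar : X → ℂ) x).re ∂m) := by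
    intro A hA
    rw [withDensity_apply _ hA,
      ← ofReal_integral_eq_lintegral_ofReal hre_int.integrableOn (ae_restrict_of_ae hre_nn)]
  refine ⟨fstar, hconv, hposstar, hint_star, hfix,
    ⟨m.withDensity (fun x => ENNReal.ofReal ((ι fstar : X → ℂ) x).re), rfl, ?_,
      withDensity_absolutelyContinuous _ _, ?_⟩, ⟨fstar, hne, hfix⟩⟩
  · constructor
    rw [hofReal Set.univ MeasurableSet.univ, setInt_re]
    simp only [Measure.restrict_univ]
    rw [hint_star, Complex.one_re, ENNReal.ofReal_one]
  · intro A hA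
    rw [hofReal _ (hT hA), hofReal _ hA]
    congr 1
    rw [setInt_re, setInt_re]
    congr 1
    rw [← hPB fstar A hA, hfix]
end

section
/- Under the spectral gap assumption on P (1 is a simple eigenvalue and the only eigenvalue of modulus 1, so Pf = ⟨m,f⟩v + Qf on B with Q of spectral radius < 1), there exist C ≥ 0 and 0 ≤ λ < 1 such that for every f ∈ B and every g ∈ L^∞(μ), |∫ f·(g∘Tⁿ) dμ − ∫ f dμ · ∫ g dμ| ≤ C λⁿ ‖f‖_B ‖g‖_{L^∞(μ)} for all n ≥ 1. -/
open MeasureTheory Filter Topology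
open scoped ENNReal


lemma dual_simple {X : Type*} [MeasurableSpace X] (m : Measure X)
    (T : X → X) (hT : Measurable T)
    (φ ψ : X → ℂ) (hφ : Integrable φ m) (hψ : Integrable ψ m)
    (h : ∀ A : Set X, MeasurableSet A → ∫ x in A, ψ x ∂m = ∫ x in T ⁻¹' A, φ x ∂m)
    (s : SimpleFunc X ℂ) :
    ∫ x, ψ x * s x ∂m = ∫ x, φ x * s (T x) ∂m := by
  induction s using SimpleFunc.induction with
  | @const c A hA =>
    have l1 : ∀ x, ψ x * (SimpleFunc.piecewise A hA (SimpleFunc.const X c) (SimpleFunc.const X 0)) x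
        = Set.indicator A (fun y => ψ y * c) x := by
      intro x; by_cases hx : x ∈ A <;> simp [hx, SimpleFunc.piecewise_apply]
    have l2 : ∀ x, φ x * (SimpleFunc.piecewise A hA (SimpleFunc.const X c) (SimpleFunc.const X 0)) (T x)
        = Set.indicator (T ⁻¹' A) (fun y => φ y * c) x := by
      intro x; by_cases hx : T x ∈ A <;> simp [hx, Set.mem_preimage, SimpleFunc.piecewise_apply]
    rw [integral_congr_ae (Eventually.of_forall l1), integral_congr_ae (Eventually.of_forall l2),
      integral_indicator hA, integral_indicator (hT hA),
      integral_mul_const, integral_mul_const, h A hA]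
  | @add s₁ s₂ _ ih1 ih2 =>
    have i1 : Integrable (fun x => ψ x * s₁ x) m := by
      obtain ⟨C, hC⟩ := s₁.exists_forall_norm_le
      exact (hψ.bdd_mul (s₁.stronglyMeasurable.aestronglyMeasurable) (Eventually.of_forall hC)).congr
        (Eventually.of_forall fun x => (mul_comm _ _))
    have i2 : Integrable (fun x => ψ x * s₂ x) m := by
      obtain ⟨C, hC⟩ := s₂.exists_forall_norm_le
      exact (hψ.bdd_mul (s₂.stronglyMeasurable.aestronglyMeasurable) (Eventually.of_forall hC)).congr
        (Eventually.of_forall fun x => (mul_comm _ _))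
    have j1 : Integrable (fun x => φ x * s₁ (T x)) m := by
      obtain ⟨C, hC⟩ := s₁.exists_forall_norm_le
      exact (hφ.bdd_mul ((s₁.stronglyMeasurable.measurable.comp hT).aestronglyMeasurable)
        (Eventually.of_forall fun x => hC _)).congr (Eventually.of_forall fun x => (mul_comm _ _))
    have j2 : Integrable (fun x => φ x * s₂ (T x)) m := by
      obtain ⟨C, hC⟩ := s₂.exists_forall_norm_le
      exact (hφ.bdd_mul ((s₂.stronglyMeasurable.measurable.comp hT).aestronglyMeasurable)
        (Eventually.of_forall fun x => hC _)).congr (Eventually.of_forall fun x => (mul_comm _ _))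
    simp only [SimpleFunc.coe_add, Pi.add_apply, mul_add]
    rw [integral_add i1 i2, integral_add j1 j2, ih1, ih2]

lemma dual_bdd {X : Type*} [MeasurableSpace X] (m : Measure X)
    (T : X → X) (hT : Measurable T)
    (φ ψ : X → ℂ) (hφ : Integrable φ m) (hψ : Integrable ψ m)
    (h : ∀ A : Set X, MeasurableSet A → ∫ x in A, ψ x ∂m = ∫ x in T ⁻¹' A, φ x ∂m)
    (g : X → ℂ) (hg : Measurable g) (M : ℝ) (hgM : ∀ x, ‖g x‖ ≤ M) :
    ∫ x, ψ x * g x ∂m = ∫ x, φ x * g (T x) ∂m := by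
  set s : ℕ → SimpleFunc X ℂ := fun n =>
    SimpleFunc.approxOn g hg Set.univ 0 (Set.mem_univ 0) n with hs
  have hsb : ∀ n x, ‖s n x‖ ≤ M + M := fun n x =>
    (SimpleFunc.norm_approxOn_zero_le hg (Set.mem_univ 0) x n).trans
      (add_le_add (hgM x) (hgM x))
  have hst : ∀ x, Tendsto (fun n => s n x) atTop (𝓝 (g x)) := fun x =>
    SimpleFunc.tendsto_approxOn hg (Set.mem_univ 0) (by simp)
  have hL : Tendsto (fun n => ∫ x, ψ x * s n x ∂m) atTop (𝓝 (∫ x, ψ x * g x ∂m)) := by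
    refine tendsto_integral_of_dominated_convergence (fun x => ‖ψ x‖ * (M + M))
      (fun n => hψ.1.mul (s n).stronglyMeasurable.aestronglyMeasurable)
      (hψ.norm.mul_const _) (fun n => Eventually.of_forall fun x => ?_)
      (Eventually.of_forall fun x => Tendsto.const_mul _ (hst x))
    rw [norm_mul]
    exact mul_le_mul_of_nonneg_left (hsb n x) (norm_nonneg _)
  have hR : Tendsto (fun n => ∫ x, φ x * s n (T x) ∂m) atTop
      (𝓝 (∫ x, φ x * g (T x) ∂m)) := by
    refine tendsto_integral_of_dominated_convergence (fun x => ‖φ x‖ * (M + M))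
      (fun n => hφ.1.mul ((s n).stronglyMeasurable.measurable.comp hT).aestronglyMeasurable)
      (hφ.norm.mul_const _) (fun n => Eventually.of_forall fun x => ?_)
      (Eventually.of_forall fun x => Tendsto.const_mul _ (hst (T x)))
    rw [norm_mul]
    exact mul_le_mul_of_nonneg_left (hsb n (T x)) (norm_nonneg _)
  exact tendsto_nhds_unique (hL.congr fun n => dual_simple m T hT φ ψ hφ hψ h (s n)) hR

lemma spectral_geom {B : Type*} [NormedAddCommGroup B] [NormedSpace ℂ B] [CompleteSpace B]
    (Q : B →L[ℂ] B) (hQ : spectralRadius ℂ Q < 1) :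
    ∃ C : ℝ, 0 ≤ C ∧ ∃ l : ℝ, 0 ≤ l ∧ l < 1 ∧ ∀ n : ℕ, ‖Q ^ n‖ ≤ C * l ^ n := by
  have hr : max (spectralRadius ℂ Q) (1/2 : ℝ≥0∞) < 1 := by
    refine max_lt hQ ?_
    rw [ENNReal.div_lt_iff (by norm_num) (by norm_num)]
    norm_num
  obtain ⟨c, hc1, hc2⟩ := exists_between hr
  have hcpos : (0 : ℝ≥0∞) < c := lt_of_lt_of_le (by norm_num) (le_trans (le_max_right _ _) hc1.le)
  have hcne : c ≠ ∞ := (hc2.trans (by norm_num)).ne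
  have hgel := spectrum.pow_nnnorm_pow_one_div_tendsto_nhds_spectralRadius Q
  have hev : ∀ᶠ n : ℕ in atTop, ((‖Q ^ n‖₊ : ℝ≥0∞) ^ (1 / (n : ℝ))) < c :=
    hgel.eventually_lt_const (lt_of_le_of_lt (le_max_left _ _) hc1)
  obtain ⟨N, hN⟩ := (hev.and (eventually_ge_atTop 1)).exists_forall_of_atTop
  set l : ℝ := c.toReal with hl
  have hl0 : 0 < l := ENNReal.toReal_pos hcpos.ne' hcne
  have hl1 : l < 1 := by
    rw [hl, ← ENNReal.toReal_one]
    exact ENNReal.toReal_strict_mono (by norm_num) hc2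
  have hbig : ∀ n, N ≤ n → ‖Q ^ n‖ ≤ l ^ n := by
    intro n hn
    obtain ⟨h1, h2⟩ := hN n hn
    have hn0 : (n : ℝ) ≠ 0 := Nat.cast_ne_zero.2 (by omega)
    have : ((‖Q ^ n‖₊ : ℝ≥0∞)) ≤ c ^ (n : ℝ) := by
      calc ((‖Q ^ n‖₊ : ℝ≥0∞)) = ((‖Q ^ n‖₊ : ℝ≥0∞) ^ (1 / (n : ℝ))) ^ (n : ℝ) := by
            rw [← ENNReal.rpow_mul, one_div, inv_mul_cancel₀ hn0, ENNReal.rpow_one]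
        _ ≤ c ^ (n : ℝ) := ENNReal.rpow_le_rpow h1.le (by positivity)
    have := ENNReal.toReal_mono (by
      exact ENNReal.rpow_ne_top_of_nonneg (by positivity) hcne) this
    rw [ENNReal.coe_toReal, coe_nnnorm] at this
    rwa [← ENNReal.toReal_rpow, Real.rpow_natCast] at this
  refine ⟨1 + ∑ k ∈ Finset.range N, ‖Q ^ k‖ / l ^ k, by positivity, l, hl0.le, hl1, fun n => ?_⟩
  rcases le_or_gt N n with hn | hn
  · calc ‖Q ^ n‖ ≤ l ^ n := hbig n hn
      _ = 1 * l ^ n := (one_mul _).symm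
      _ ≤ _ := by
        have : (0:ℝ) ≤ ∑ k ∈ Finset.range N, ‖Q ^ k‖ / l ^ k := by positivity
        have hp : (0:ℝ) < l ^ n := by positivity
        nlinarith
  · have hmem : ‖Q ^ n‖ / l ^ n ≤ ∑ k ∈ Finset.range N, ‖Q ^ k‖ / l ^ k :=
      Finset.single_le_sum (f := fun k => ‖Q ^ k‖ / l ^ k)
        (fun k _ => by positivity) (Finset.mem_range.2 hn)
    have hp : (0:ℝ) < l ^ n := by positivity
    rw [div_le_iff₀ hp] at hmem
    nlinarith [norm_nonneg (Q ^ n), hp.le]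

/-- Exponential decay of correlations under the spectral gap assumption :
`|∫ f (g∘Tⁿ) dμ − ∫ f dμ ∫ g dμ| ≤ C λⁿ ‖f‖_B ‖g‖_{L^∞(μ)}`. -/
theorem stmt_4
    {X : Type*} [MeasurableSpace X] (m : Measure X) [IsProbabilityMeasure m]
    (T : X → X) (hT : Measurable T)
    (hns : ∀ A : Set X, MeasurableSet A → m A = 0 → m (T ⁻¹' A) = 0)
    -- B is a complex Banach space continuously embedded in L¹(m)
    {B : Type*} [NormedAddCommGroup B] [NormedSpace ℂ B] [CompleteSpace B]
    (ι : B →L[ℂ] Lp ℂ 1 m) (hι : Function.Injective ι)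
    -- constant functions lie in B
    (oneB : B) (honeB : ∀ᵐ x ∂m, (ι oneB : X → ℂ) x = 1)
    -- B is a Banach algebra : mulB is the pointwise multiplication, a continuous
    -- bilinear map (hence ∃ C > 0, ‖f*g‖_B ≤ C ‖f‖_B ‖g‖_B with C = ‖mulB‖)
    (mulB : B →L[ℂ] B →L[ℂ] B)
    (hmulB : ∀ f g : B, ∀ᵐ x ∂m,
        (ι (mulB f g) : X → ℂ) x = (ι f : X → ℂ) x * (ι g : X → ℂ) x)
    -- B is a complex Banach lattice : stable under conjugation and modulus
    (conjB : B → B)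
    (hconjB : ∀ f : B, ∀ᵐ x ∂m, (ι (conjB f) : X → ℂ) x = starRingEnd ℂ ((ι f : X → ℂ) x))
    (absB : B → B)
    (habsB : ∀ f : B, ∀ᵐ x ∂m,
        (ι (absB f) : X → ℂ) x = ((‖(ι f : X → ℂ) x‖ : ℝ) : ℂ))
    -- P(B) ⊂ B and P restricted to B is bounded : PB is the restriction to B of the
    -- Perron-Frobenius operator P f = d m_f / dm, m_f (A) = ∫_{T⁻¹A} f dm
    (PB : B →L[ℂ] B)
    (hPB : ∀ (f : B) (A : Set X), MeasurableSet A →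
        ∫ x in A, (ι (PB f) : X → ℂ) x ∂m = ∫ x in T ⁻¹' A, (ι f : X → ℂ) x ∂m)
    -- the spectral radius of P on B is 1
    (hrad : spectralRadius ℂ (PB : B →L[ℂ] B) = 1)
    -- spectral gap : 1 is a simple eigenvalue of P on B and the only eigenvalue of
    -- modulus 1, so P f = ⟨m,f⟩ v + Q f with v the invariant density and Q of
    -- spectral radius < 1, Q v = 0, ⟨m, Q f⟩ = 0
    (v : B) (hv0 : ∀ᵐ x ∂m, 0 ≤ ((ι v : X → ℂ) x).re ∧ ((ι v : X → ℂ) x).im = 0)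
    (hv1 : ∫ x, (ι v : X → ℂ) x ∂m = 1) (hvfix : PB v = v)
    (Q : B →L[ℂ] B) (hQrad : spectralRadius ℂ (Q : B →L[ℂ] B) < 1)
    (hQv : Q v = 0) (hQm : ∀ f : B, ∫ x, (ι (Q f) : X → ℂ) x ∂m = 0)
    (hdecomp : ∀ f : B, PB f = (∫ x, (ι f : X → ℂ) x ∂m) • v + Q f)
    -- μ = v · m is the unique T-invariant a.c.i.p. with density in B
    (μ : Measure X)
    (hμ : μ = m.withDensity fun x => ENNReal.ofReal ((ι v : X → ℂ) x).re)
    :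
    ∃ C₀ : ℝ, 0 ≤ C₀ ∧ ∃ l : ℝ, 0 ≤ l ∧ l < 1 ∧
      ∀ f : B, ∀ g : X → ℂ, MemLp g ⊤ μ → ∀ n : ℕ, 1 ≤ n →
        ‖(∫ x, (ι f : X → ℂ) x * g (T^[n] x) ∂μ) -
            (∫ x, (ι f : X → ℂ) x ∂μ) * ∫ x, g x ∂μ‖
          ≤ C₀ * l ^ n * ‖f‖ * (eLpNorm g ⊤ μ).toReal := by
  classical
  obtain ⟨C, hC0, l, hl0, hl1, hCl⟩ := spectral_geom Q hQrad
  refine ⟨C * ‖ι‖ * ‖mulB‖ * ‖v‖, by positivity, l, hl0, hl1, ?_⟩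
  intro f g hg n hn
  have hιint : ∀ b : B, Integrable (ι b : X → ℂ) m := fun b => L1.integrable_coeFn (ι b)
  set w : X → ℝ := fun x => ((ι v : X → ℂ) x).re with hw
  have hw0 : ∀ᵐ x ∂m, 0 ≤ w x := hv0.mono fun x hx => hx.1
  have hvw : (ι v : X → ℂ) =ᵐ[m] fun x => (w x : ℂ) := by
    filter_upwards [hv0] with x hx
    exact Complex.ext (by simp [hw]) (by simp [hx.2])
  have hwint : Integrable w m := (hιint v).re
  have hwae : AEMeasurable w m := hwint.aemeasurable
  set wNN : X → NNReal := fun x => Real.toNNReal (w x) with hwNN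
  have hwNNae : AEMeasurable wNN m := measurable_real_toNNReal.comp_aemeasurable hwae
  have hμ' : μ = m.withDensity fun x => (wNN x : ℝ≥0∞) := hμ
  -- integral over μ as weighted integral over m
  have hInt : ∀ F : X → ℂ, ∫ x, F x ∂μ = ∫ x, (w x : ℂ) * F x ∂m := by
    intro F
    rw [hμ', integral_withDensity_eq_integral_smul₀ hwNNae F]
    refine integral_congr_ae ?_
    filter_upwards [hw0] with x hx
    rw [NNReal.smul_def, Real.coe_toNNReal _ hx, Complex.real_smul]
  -- the essential bound for g
  set M : ℝ := (eLpNorm g ⊤ μ).toReal with hM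
  have hM0 : 0 ≤ M := ENNReal.toReal_nonneg
  have hMae : ∀ᵐ x ∂μ, ‖g x‖ ≤ M := by
    have h1 : ∀ᵐ x ∂μ, (‖g x‖₊ : ℝ≥0∞) ≤ eLpNormEssSup g μ := ae_le_eLpNormEssSup
    have h2 : eLpNormEssSup g μ ≠ ∞ := by
      rw [← eLpNorm_exponent_top]; exact hg.2.ne
    filter_upwards [h1] with x hx
    have := ENNReal.toReal_mono h2 hx
    simpa [hM, eLpNorm_exponent_top] using this
  -- a measurable everywhere-bounded modification of g
  set g0 : X → ℂ := hg.1.mk g with hg0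
  have hg0meas : StronglyMeasurable g0 := hg.1.stronglyMeasurable_mk
  have hgg0 : g =ᵐ[μ] g0 := hg.1.ae_eq_mk
  set g' : X → ℂ := Set.indicator {x | ‖g0 x‖ ≤ M} g0 with hg'
  have hg'meas : Measurable g' :=
    hg0meas.measurable.indicator (measurableSet_le hg0meas.measurable.norm measurable_const)
  have hg'bdd : ∀ x, ‖g' x‖ ≤ M := by
    intro x
    by_cases hx : x ∈ {x | ‖g0 x‖ ≤ M}
    · rw [hg', Set.indicator_of_mem hx]; exact hx
    · rw [hg', Set.indicator_of_notMem hx]; simpa using hM0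
  have hgg' : g =ᵐ[μ] g' := by
    filter_upwards [hgg0, hMae] with x h1 h2
    have hx : x ∈ {x | ‖g0 x‖ ≤ M} := by simp only [Set.mem_setOf_eq, ← h1]; exact h2
    rw [hg', Set.indicator_of_mem hx, ← h1]
  -- invariance of μ
  have hconv : ∀ S : Set X, MeasurableSet S → μ S = ENNReal.ofReal (∫ x in S, w x ∂m) := by
    intro S hS
    rw [hμ, withDensity_apply _ hS,
      ← ofReal_integral_eq_lintegral_ofReal hwint.restrict
        ((ae_restrict_of_ae hw0).mono fun x h => h)]
  have hsetw : ∀ S : Set X, ∫ x in S, (ι v : X → ℂ) x ∂m = ((∫ x in S, w x ∂m : ℝ) : ℂ) := by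
    intro S
    rw [integral_congr_ae (ae_restrict_of_ae hvw)]
    exact integral_ofReal
  have hkey : ∀ A : Set X, MeasurableSet A → μ A = μ (T ⁻¹' A) := by
    intro A hA
    have h1 := hPB v A hA
    rw [hvfix, hsetw A, hsetw (T ⁻¹' A)] at h1
    rw [hconv A hA, hconv _ (hT hA), Complex.ofReal_inj.mp h1]
  have hmapiter : ∀ (k : ℕ) (A : Set X), MeasurableSet A → μ (T^[k] ⁻¹' A) = μ A := by
    intro k
    induction k with
    | zero => intro A hA; simp
    | succ k ih =>
      intro A hA
      rw [Function.iterate_succ, Set.preimage_comp]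
      rw [← hkey _ ((hT.iterate k) hA)]
      exact ih A hA
  -- replace g by g' after composing with T^[n]
  have hgg'T : (fun x => g (T^[n] x)) =ᵐ[μ] fun x => g' (T^[n] x) := by
    set N : Set X := toMeasurable μ {x | g x ≠ g' x} with hN
    have hN0 : μ N = 0 := by
      rw [hN, measure_toMeasurable]
      exact ae_iff.mp hgg'
    have hpre : μ (T^[n] ⁻¹' N) = 0 := by
      rw [hmapiter n N (measurableSet_toMeasurable μ _)]; exact hN0
    refine ae_iff.mpr (measure_mono_null ?_ hpre)
    intro x hx
    exact Set.mem_preimage.mpr (subset_toMeasurable μ _ hx)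
  -- integrability helper
  have ibdd : ∀ (b : B) (u : X → ℂ), Measurable u → (∀ x, ‖u x‖ ≤ M) →
      Integrable (fun x => (ι b : X → ℂ) x * u x) m := fun b u hu hbd =>
    ((hιint b).bdd_mul hu.aestronglyMeasurable (Eventually.of_forall hbd)).congr
      (Eventually.of_forall fun x => mul_comm _ _)
  -- iterated duality
  have hdual : ∀ (k : ℕ) (b : B), ∫ x, (ι ((PB ^ k) b) : X → ℂ) x * g' x ∂m
      = ∫ x, (ι b : X → ℂ) x * g' (T^[k] x) ∂m := by
    intro k
    induction k with
    | zero => intro b; simp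
    | succ k ih =>
      intro b
      have h1 : (PB ^ (k + 1)) b = (PB ^ k) (PB b) := by
        rw [pow_succ]; rfl
      rw [h1, ih (PB b),
        dual_bdd m T hT (ι b : X → ℂ) (ι (PB b) : X → ℂ) (hιint b) (hιint (PB b)) (hPB b)
          (fun x => g' (T^[k] x)) (hg'meas.comp (hT.iterate k)) M (fun x => hg'bdd _)]
      simp only [← Function.iterate_succ_apply]
  -- iterated decomposition
  have hiter : ∀ (k : ℕ) (b : B),
      (PB ^ (k + 1)) b = (∫ x, (ι b : X → ℂ) x ∂m) • v + (Q ^ (k + 1)) b := by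
    intro k
    induction k with
    | zero => intro b; simpa using hdecomp b
    | succ k ih =>
      intro b
      have h1 : (PB ^ (k + 2)) b = PB ((PB ^ (k + 1)) b) := by
        rw [pow_succ']; rfl
      have hQ0 : ∫ x, (ι ((Q ^ (k + 1)) b) : X → ℂ) x ∂m = 0 := by
        have : (Q ^ (k + 1)) b = Q ((Q ^ k) b) := by rw [pow_succ']; rfl
        rw [this]; exact hQm _
      have h2 : Q ((Q ^ (k + 1)) b) = (Q ^ (k + 2)) b := by
        rw [show (Q ^ (k + 2)) = Q * Q ^ (k + 1) from pow_succ' Q (k + 1)]; rfl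
      rw [h1, ih b, map_add, PB.map_smul, hvfix, hdecomp ((Q ^ (k + 1)) b), hQ0, h2]
      simp
  -- main computation
  set hB : B := mulB f v with hhB
  set c : ℂ := ∫ x, (ι hB : X → ℂ) x ∂m with hc
  have hmv : (ι hB : X → ℂ) =ᵐ[m] fun x => (ι f : X → ℂ) x * (w x : ℂ) := by
    filter_upwards [hmulB f v, hvw] with x h1 h2
    rw [h1, h2]
  obtain ⟨k, rfl⟩ : ∃ k, n = k + 1 := ⟨n - 1, (Nat.succ_pred_eq_of_pos hn).symm⟩
  set u : B := (Q ^ (k + 1)) hB with hu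
  -- E1
  have E1 : ∫ x, (ι f : X → ℂ) x * g (T^[k+1] x) ∂μ
      = ∫ x, (ι hB : X → ℂ) x * g' (T^[k+1] x) ∂m := by
    have e0 : (fun x => (ι f : X → ℂ) x * g (T^[k+1] x))
        =ᵐ[μ] fun x => (ι f : X → ℂ) x * g' (T^[k+1] x) := by
      filter_upwards [hgg'T] with x hx
      rw [show g (T^[k+1] x) = g' (T^[k+1] x) from hx]
    rw [integral_congr_ae e0, hInt fun x => (ι f : X → ℂ) x * g' (T^[k+1] x)]
    refine integral_congr_ae ?_
    filter_upwards [hmv] with x h1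
    rw [h1]; ring
  -- E2
  have E2 : ∫ x, (ι f : X → ℂ) x ∂μ = c := by
    rw [hInt (ι f : X → ℂ), hc]
    refine integral_congr_ae ?_
    filter_upwards [hmv] with x h1
    rw [h1]; ring
  -- E3
  have E3 : ∫ x, g x ∂μ = ∫ x, (ι v : X → ℂ) x * g' x ∂m := by
    rw [integral_congr_ae hgg', hInt g']
    refine integral_congr_ae ?_
    filter_upwards [hvw] with x h1
    rw [h1]
  -- E4 and decomposition
  have E4 : ∫ x, (ι hB : X → ℂ) x * g' (T^[k+1] x) ∂m
      = ∫ x, (ι ((PB ^ (k+1)) hB) : X → ℂ) x * g' x ∂m := (hdual (k+1) hB).symm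
  have hsum : (ι ((PB ^ (k+1)) hB) : X → ℂ)
      =ᵐ[m] fun x => c * (ι v : X → ℂ) x + (ι u : X → ℂ) x := by
    rw [hiter k hB, ← hc, ← hu, map_add, ι.map_smul]
    filter_upwards [Lp.coeFn_add (c • ι v) (ι u), Lp.coeFn_smul c (ι v)] with x h1 h2
    rw [h1, Pi.add_apply, h2, Pi.smul_apply, smul_eq_mul]
  have i1 : Integrable (fun x => (ι v : X → ℂ) x * g' x) m := ibdd v g' hg'meas hg'bdd
  have i2 : Integrable (fun x => (ι u : X → ℂ) x * g' x) m := ibdd u g' hg'meas hg'bdd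
  have E5 : ∫ x, (ι ((PB ^ (k+1)) hB) : X → ℂ) x * g' x ∂m
      = c * (∫ x, (ι v : X → ℂ) x * g' x ∂m) + ∫ x, (ι u : X → ℂ) x * g' x ∂m := by
    have e1 : (fun x => (ι ((PB ^ (k+1)) hB) : X → ℂ) x * g' x)
        =ᵐ[m] fun x => (c * (ι v : X → ℂ) x + (ι u : X → ℂ) x) * g' x := by
      filter_upwards [hsum] with x hx
      rw [show (ι ((PB ^ (k+1)) hB) : X → ℂ) x = c * (ι v : X → ℂ) x + (ι u : X → ℂ) x from hx]
    rw [integral_congr_ae e1]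
    have : (fun x => (c * (ι v : X → ℂ) x + (ι u : X → ℂ) x) * g' x)
        = fun x => c * ((ι v : X → ℂ) x * g' x) + (ι u : X → ℂ) x * g' x := by
      funext x; ring
    rw [this, integral_add (i1.const_mul c) i2, integral_const_mul]
  -- the difference equals the error integral
  have hdiff : (∫ x, (ι f : X → ℂ) x * g (T^[k+1] x) ∂μ)
      - (∫ x, (ι f : X → ℂ) x ∂μ) * ∫ x, g x ∂μ
      = ∫ x, (ι u : X → ℂ) x * g' x ∂m := by
    rw [E1, E2, E3, E4, E5]; ring
  rw [hdiff]
  -- final bound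
  have b0 : ‖∫ x, (ι u : X → ℂ) x * g' x ∂m‖ ≤ ∫ x, ‖(ι u : X → ℂ) x‖ * M ∂m := by
    refine norm_integral_le_of_norm_le ((hιint u).norm.mul_const M)
      (Eventually.of_forall fun x => ?_)
    rw [norm_mul]
    exact mul_le_mul_of_nonneg_left (hg'bdd x) (norm_nonneg _)
  have b1 : ∫ x, ‖(ι u : X → ℂ) x‖ * M ∂m = ‖ι u‖ * M := by
    rw [integral_mul_const, L1.norm_eq_integral_norm]
  have b2 : ‖(Q ^ (k+1)) hB‖ ≤ C * l ^ (k+1) * (‖mulB‖ * ‖f‖ * ‖v‖) := by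
    refine le_trans ((Q ^ (k+1)).le_opNorm hB) ?_
    exact mul_le_mul (hCl (k+1)) (mulB.le_opNorm₂ f v) (norm_nonneg _) (by positivity)
  calc ‖∫ x, (ι u : X → ℂ) x * g' x ∂m‖ ≤ ‖ι u‖ * M := by rw [← b1]; exact b0
    _ ≤ (‖ι‖ * ‖u‖) * M := mul_le_mul_of_nonneg_right (ι.le_opNorm u) hM0
    _ ≤ (‖ι‖ * (C * l ^ (k+1) * (‖mulB‖ * ‖f‖ * ‖v‖))) * M :=
        mul_le_mul_of_nonneg_right
          (mul_le_mul_of_nonneg_left b2 (norm_nonneg _)) hM0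
    _ = C * ‖ι‖ * ‖mulB‖ * ‖v‖ * l ^ (k+1) * ‖f‖ * M := by ring
end

section
/- Under the spectral gap assumption on P, let φ ∈ B be a bounded real-valued observable with ∫ φ dμ = 0, and set S_n = Σ_{k=0}^{n-1} φ∘T^k. Then the limit σ² = lim_{n→∞} ∫ (S_n/√n)² dμ exists, and σ² = ∫ φ² dμ + 2 Σ_{n=1}^{∞} ∫ φ·(φ∘Tⁿ) dμ, the series being absolutely convergent. -/
open MeasureTheory Filter Topology
open scoped ENNReal NNReal

lemma dual_real {X : Type*} [MeasurableSpace X] {m : Measure X} [IsFiniteMeasure m]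
    {T : X → X} (hT : Measurable T)
    {u w : X → ℝ} (hum : Measurable u) (hwm : Measurable w)
    (hui : Integrable u m) (hwi : Integrable w m)
    (h : ∀ A : Set X, MeasurableSet A → ∫ x in A, u x ∂m = ∫ x in T ⁻¹' A, w x ∂m)
    {g : X → ℝ} (hg : Measurable g) {C : ℝ} (hgC : ∀ x, |g x| ≤ C) :
    ∫ x, g x * u x ∂m = ∫ x, g (T x) * w x ∂m := by
  set α := m.withDensity fun x => ((u x).toNNReal : ℝ≥0∞) with hα
  set β := m.withDensity fun x => (((-u x)).toNNReal : ℝ≥0∞) with hβ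
  set γ₀ := m.withDensity fun x => ((w x).toNNReal : ℝ≥0∞) with hγ₀
  set δ₀ := m.withDensity fun x => (((-w x)).toNNReal : ℝ≥0∞) with hδ₀
  have hfin : ∀ (f : X → ℝ), Integrable f m →
      IsFiniteMeasure (m.withDensity fun x => ((f x).toNNReal : ℝ≥0∞)) := by
    intro f hf
    refine isFiniteMeasure_withDensity (ne_top_of_le_ne_top hf.2.ne ?_)
    refine lintegral_mono fun x => ?_
    simp only [enorm_eq_nnnorm, ENNReal.coe_le_coe]
    calc (f x).toNNReal ≤ |f x|.toNNReal := Real.toNNReal_mono (le_abs_self _)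
      _ = ‖f x‖₊ := by rw [Real.toNNReal_eq_nnnorm_of_nonneg (abs_nonneg _)]; exact Real.nnnorm_abs (f x)
  have hαf : IsFiniteMeasure α := hfin u hui
  have hβf : IsFiniteMeasure β := hfin (-u) hui.neg
  have hγ₀f : IsFiniteMeasure γ₀ := hfin w hwi
  have hδ₀f : IsFiniteMeasure δ₀ := hfin (-w) hwi.neg
  set γ := Measure.map T γ₀ with hγ
  set δ := Measure.map T δ₀ with hδ
  have hkey : α + δ = β + γ := by
    ext A hA
    have h1 : ∫ x in A, u x ∂m = (α A).toReal - (β A).toReal := by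
      have := integral_eq_lintegral_pos_part_sub_lintegral_neg_part (hui.restrict (s := A))
      rw [this, hα, hβ, withDensity_apply _ hA, withDensity_apply _ hA]
      rfl
    have h2 : ∫ x in T ⁻¹' A, w x ∂m = (γ A).toReal - (δ A).toReal := by
      have := integral_eq_lintegral_pos_part_sub_lintegral_neg_part
        (hwi.restrict (s := T ⁻¹' A))
      rw [this, hγ, hδ, Measure.map_apply hT hA, Measure.map_apply hT hA,
        withDensity_apply _ (hT hA), withDensity_apply _ (hT hA)]
      rfl
    have hαt : α A ≠ ⊤ := measure_ne_top _ _
    have hβt : β A ≠ ⊤ := measure_ne_top _ _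
    have hγt : γ A ≠ ⊤ := by
      rw [hγ, Measure.map_apply hT hA]; exact measure_ne_top _ _
    have hδt : δ A ≠ ⊤ := by
      rw [hδ, Measure.map_apply hT hA]; exact measure_ne_top _ _
    have heq : (α A).toReal + (δ A).toReal = (β A).toReal + (γ A).toReal := by
      have := (h A hA).trans h2
      rw [h1] at this; linarith
    have : ((α + δ) A).toReal = ((β + γ) A).toReal := by
      simp only [Measure.add_apply, ENNReal.toReal_add hαt hδt, ENNReal.toReal_add hβt hγt, heq]
    exact (ENNReal.toReal_eq_toReal_iff' (by simp [Measure.add_apply, ENNReal.add_ne_top, hαt, hδt])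
      (by simp [Measure.add_apply, ENNReal.add_ne_top, hβt, hγt])).mp this
  -- integrability of g with respect to the various finite measures
  have hγf : IsFiniteMeasure γ := by
    rw [hγ]; exact ⟨by rw [Measure.map_apply hT MeasurableSet.univ]; exact measure_lt_top _ _⟩
  have hδf : IsFiniteMeasure δ := by
    rw [hδ]; exact ⟨by rw [Measure.map_apply hT MeasurableSet.univ]; exact measure_lt_top _ _⟩
  have hgb : ∀ x, ‖g x‖ ≤ C := fun x => by simpa [Real.norm_eq_abs] using hgC x
  have hgint : ∀ (ν : Measure X), IsFiniteMeasure ν → Integrable g ν := fun ν hν =>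
    (integrable_const C).mono' hg.aestronglyMeasurable (ae_of_all _ hgb)
  have hsum : ∫ x, g x ∂α + ∫ x, g x ∂δ = ∫ x, g x ∂β + ∫ x, g x ∂γ := by
    have h1 : ∫ x, g x ∂(α + δ) = ∫ x, g x ∂(β + γ) := by rw [hkey]
    rwa [integral_add_measure (hgint α hαf) (hgint δ hδf),
      integral_add_measure (hgint β hβf) (hgint γ hγf)] at h1
  have humN : Measurable fun x => (u x).toNNReal := hum.real_toNNReal
  have hwmN : Measurable fun x => (w x).toNNReal := hwm.real_toNNReal
  have E1 : ∫ x, g x ∂α = ∫ x, g x * max (u x) 0 ∂m := by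
    rw [hα, integral_withDensity_eq_integral_smul humN]
    exact integral_congr_ae (ae_of_all _ fun x => by
      simp [NNReal.smul_def, Real.coe_toNNReal']; ring)
  have E2 : ∫ x, g x ∂β = ∫ x, g x * max (-u x) 0 ∂m := by
    rw [hβ, integral_withDensity_eq_integral_smul
      (f := fun x => (-u x).toNNReal) hum.neg.real_toNNReal]
    exact integral_congr_ae (ae_of_all _ fun x => by
      simp [NNReal.smul_def, Real.coe_toNNReal']; ring)
  have E3 : ∫ x, g x ∂γ = ∫ x, g (T x) * max (w x) 0 ∂m := by
    rw [hγ, integral_map hT.aemeasurable hg.aestronglyMeasurable, hγ₀,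
      integral_withDensity_eq_integral_smul hwmN]
    exact integral_congr_ae (ae_of_all _ fun x => by
      simp [NNReal.smul_def, Real.coe_toNNReal']; ring)
  have E4 : ∫ x, g x ∂δ = ∫ x, g (T x) * max (-w x) 0 ∂m := by
    rw [hδ, integral_map hT.aemeasurable hg.aestronglyMeasurable, hδ₀,
      integral_withDensity_eq_integral_smul
        (f := fun x => (-w x).toNNReal) hwm.neg.real_toNNReal]
    exact integral_congr_ae (ae_of_all _ fun x => by
      simp [NNReal.smul_def, Real.coe_toNNReal']; ring)
  have hbdd : ∃ C, ∀ x, ‖g x‖ ≤ C := ⟨C, hgb⟩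
  have hbddT : ∃ C, ∀ x, ‖g (T x)‖ ≤ C := ⟨C, fun x => hgb (T x)⟩
  have hgTmeas : AEStronglyMeasurable (fun x => g (T x)) m :=
    (hg.comp hT).aestronglyMeasurable
  have I1 : Integrable (fun x => g x * max (u x) 0) m :=
    hui.pos_part.bdd_mul hg.aestronglyMeasurable (ae_of_all _ hgb)
  have I2 : Integrable (fun x => g x * max (-u x) 0) m :=
    hui.neg.pos_part.bdd_mul hg.aestronglyMeasurable (ae_of_all _ hgb)
  have I3 : Integrable (fun x => g (T x) * max (w x) 0) m :=
    hwi.pos_part.bdd_mul hgTmeas (ae_of_all _ fun x => hgb (T x))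
  have I4 : Integrable (fun x => g (T x) * max (-w x) 0) m :=
    hwi.neg.pos_part.bdd_mul hgTmeas (ae_of_all _ fun x => hgb (T x))
  have SL : ∫ x, g x * u x ∂m
      = ∫ x, g x * max (u x) 0 ∂m - ∫ x, g x * max (-u x) 0 ∂m := by
    rw [← integral_sub I1 I2]
    exact integral_congr_ae (ae_of_all _ fun x => by
      simp only [← mul_sub, max_zero_sub_max_neg_zero_eq_self])
  have SR : ∫ x, g (T x) * w x ∂m
      = ∫ x, g (T x) * max (w x) 0 ∂m - ∫ x, g (T x) * max (-w x) 0 ∂m := by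
    rw [← integral_sub I3 I4]
    exact integral_congr_ae (ae_of_all _ fun x => by
      simp only [← mul_sub, max_zero_sub_max_neg_zero_eq_self])
  rw [SL, SR]
  rw [E1, E2, E3, E4] at hsum
  linarith

lemma dual_complex {X : Type*} [MeasurableSpace X] {m : Measure X} [IsFiniteMeasure m]
    {T : X → X} (hT : Measurable T)
    {u w : X → ℂ} (hum : Measurable u) (hwm : Measurable w)
    (hui : Integrable u m) (hwi : Integrable w m)
    (h : ∀ A : Set X, MeasurableSet A → ∫ x in A, u x ∂m = ∫ x in T ⁻¹' A, w x ∂m)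
    {g : X → ℝ} (hg : Measurable g) {C : ℝ} (hgC : ∀ x, |g x| ≤ C) :
    ∫ x, (g x : ℂ) * u x ∂m = ∫ x, (g (T x) : ℂ) * w x ∂m := by
  have hre : ∀ A : Set X, MeasurableSet A →
      ∫ x in A, (u x).re ∂m = ∫ x in T ⁻¹' A, (w x).re ∂m := by
    intro A hA
    have h1 : ∫ x in A, (u x).re ∂m = (∫ x in A, u x ∂m).re := by
      simpa using integral_re (hui.restrict (s := A))
    have h2 : ∫ x in T ⁻¹' A, (w x).re ∂m = (∫ x in T ⁻¹' A, w x ∂m).re := by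
      simpa using integral_re (hwi.restrict (s := T ⁻¹' A))
    rw [h1, h2, h A hA]
  have him : ∀ A : Set X, MeasurableSet A →
      ∫ x in A, (u x).im ∂m = ∫ x in T ⁻¹' A, (w x).im ∂m := by
    intro A hA
    have h1 : ∫ x in A, (u x).im ∂m = (∫ x in A, u x ∂m).im := by
      simpa using integral_im (hui.restrict (s := A))
    have h2 : ∫ x in T ⁻¹' A, (w x).im ∂m = (∫ x in T ⁻¹' A, w x ∂m).im := by
      simpa using integral_im (hwi.restrict (s := T ⁻¹' A))
    rw [h1, h2, h A hA]
  have hure : Integrable (fun x => (u x).re) m := by simpa using hui.re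
  have huim : Integrable (fun x => (u x).im) m := by simpa using hui.im
  have hwre : Integrable (fun x => (w x).re) m := by simpa using hwi.re
  have hwim : Integrable (fun x => (w x).im) m := by simpa using hwi.im
  have R := dual_real hT (Complex.measurable_re.comp hum) (Complex.measurable_re.comp hwm)
    hure hwre hre hg hgC
  have I := dual_real hT (Complex.measurable_im.comp hum) (Complex.measurable_im.comp hwm)
    huim hwim him hg hgC
  have hgm : Measurable fun x => (g x : ℂ) := Complex.measurable_ofReal.comp hg
  have hbdd : ∃ C, ∀ x, ‖(g x : ℂ)‖ ≤ C :=
    ⟨C, fun x => by simpa [Complex.norm_real, Real.norm_eq_abs] using hgC x⟩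
  have hbddT : ∃ C, ∀ x, ‖(g (T x) : ℂ)‖ ≤ C :=
    ⟨C, fun x => by simpa [Complex.norm_real, Real.norm_eq_abs] using hgC (T x)⟩
  have hL : Integrable (fun x => (g x : ℂ) * u x) m :=
    hui.bdd_mul hgm.aestronglyMeasurable (ae_of_all _ hbdd.choose_spec)
  have hR : Integrable (fun x => (g (T x) : ℂ) * w x) m :=
    hwi.bdd_mul (hgm.comp hT).aestronglyMeasurable (ae_of_all _ hbddT.choose_spec)
  apply Complex.ext
  · have e1 := integral_re hL
    have e2 := integral_re hR
    simp only [RCLike.re_to_complex, Complex.mul_re, Complex.ofReal_re, Complex.ofReal_im,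
      zero_mul, sub_zero] at e1 e2
    rw [← e1, ← e2]
    simpa [Function.comp] using R
  · have e1 := integral_im hL
    have e2 := integral_im hR
    simp only [RCLike.im_to_complex, Complex.mul_im, Complex.ofReal_re, Complex.ofReal_im,
      zero_mul, add_zero] at e1 e2
    rw [← e1, ← e2]
    simpa [Function.comp] using I

lemma null_iter {X : Type*} [MeasurableSpace X] {m : Measure X}
    {T : X → X} (hT : Measurable T)
    (hns : ∀ A : Set X, MeasurableSet A → m A = 0 → m (T ⁻¹' A) = 0)
    {E : Set X} (hE : m E = 0) (k : ℕ) :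
    m ((T^[k]) ⁻¹' (toMeasurable m E)) = 0 := by
  induction k with
  | zero => simpa using (measure_toMeasurable E).trans hE
  | succ k ih =>
    rw [Function.iterate_succ, Set.preimage_comp]
    exact hns _ ((hT.iterate k) (measurableSet_toMeasurable m E)) ih

lemma sum_corr (c : ℕ → ℝ) (n : ℕ) :
    ∑ j ∈ Finset.range n, ∑ k ∈ Finset.range n, c (max j k - min j k)
      = n * c 0 + 2 * ∑ i ∈ Finset.range n, ((n - (i + 1) : ℕ) : ℝ) * c (i + 1) := by
  induction n with
  | zero => simp
  | succ n ih =>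
    have key : ∑ j ∈ Finset.range (n+1), ∑ k ∈ Finset.range (n+1), c (max j k - min j k)
        = ((∑ j ∈ Finset.range n, ∑ k ∈ Finset.range n, c (max j k - min j k))
          + ∑ j ∈ Finset.range n, c (n - j)) + ((∑ k ∈ Finset.range n, c (n - k)) + c 0) := by
      rw [Finset.sum_range_succ]
      congr 1
      · rw [← Finset.sum_add_distrib]
        refine Finset.sum_congr rfl fun j hj => ?_
        rw [Finset.sum_range_succ]
        have hj' := Finset.mem_range.mp hj
        rw [max_eq_right hj'.le, min_eq_left hj'.le]
      · rw [Finset.sum_range_succ]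
        congr 1
        · refine Finset.sum_congr rfl fun k hk => ?_
          have hk' := Finset.mem_range.mp hk
          rw [max_eq_left hk'.le, min_eq_right hk'.le]
        · simp
    have refl1 : ∑ j ∈ Finset.range n, c (n - j) = ∑ i ∈ Finset.range n, c (i + 1) := by
      rw [← Finset.sum_range_reflect (fun i => c (i + 1)) n]
      refine Finset.sum_congr rfl fun j hj => ?_
      have hj' := Finset.mem_range.mp hj
      congr 1
      omega
    have last : ∑ i ∈ Finset.range (n+1), ((n + 1 - (i + 1) : ℕ) : ℝ) * c (i + 1)
        = ∑ i ∈ Finset.range n, ((((n - (i + 1) : ℕ) : ℝ) + 1) * c (i + 1)) := by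
      rw [Finset.sum_range_succ]
      have h0 : ((n + 1 - (n + 1) : ℕ) : ℝ) * c (n + 1) = 0 := by simp
      rw [h0, add_zero]
      refine Finset.sum_congr rfl fun i hi => ?_
      have hi' := Finset.mem_range.mp hi
      have he : (n + 1) - (i + 1) = (n - (i + 1)) + 1 := by omega
      rw [he]
      push_cast
      ring
    rw [key, refl1, ih, last]
    simp only [add_mul, one_mul, Finset.sum_add_distrib]
    push_cast
    ring

lemma geom_summable {B : Type*} [NormedAddCommGroup B] [NormedSpace ℂ B] [CompleteSpace B]
    (Q : B →L[ℂ] B) (hQ : spectralRadius ℂ Q < 1) :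
    Summable fun n : ℕ => ‖(Q^n : B →L[ℂ] B)‖ := by
  obtain ⟨r', hr1, hr2⟩ := exists_between hQ
  have hr'top : r' ≠ ⊤ := (hr2.trans_le le_top).ne
  set r : NNReal := r'.toNNReal with hrdef
  have hrr' : (r : ℝ≥0∞) = r' := ENNReal.coe_toNNReal hr'top
  have hrlt1 : (r : ℝ) < 1 := by
    have : (r : ℝ≥0∞) < 1 := hrr' ▸ hr2
    exact_mod_cast this
  have hev : ∀ᶠ n : ℕ in atTop, (‖Q^n‖₊ : ℝ≥0∞) ^ (1/(n:ℝ)) < r' :=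
    (spectrum.pow_nnnorm_pow_one_div_tendsto_nhds_spectralRadius Q).eventually_lt_const hr1
  obtain ⟨N, hN⟩ := eventually_atTop.mp (hev.and (eventually_ge_atTop 1))
  have hbound : ∀ n ≥ N, ‖(Q^n : B →L[ℂ] B)‖ ≤ (r:ℝ)^n := by
    intro n hn
    obtain ⟨h1, h2⟩ := hN n hn
    have hn0 : (n : ℝ) ≠ 0 := Nat.cast_ne_zero.mpr (by omega)
    have hLrw : (((‖Q^n‖₊ : ℝ≥0∞)) ^ (1/(n:ℝ))) ^ (n:ℝ) = (‖Q^n‖₊ : ℝ≥0∞) := by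
      rw [← ENNReal.rpow_mul, one_div, inv_mul_cancel₀ hn0, ENNReal.rpow_one]
    have hle : (‖Q^n‖₊ : ℝ≥0∞) ≤ r' ^ (n:ℝ) :=
      hLrw ▸ ENNReal.rpow_le_rpow h1.le (Nat.cast_nonneg n)
    rw [← hrr', ← ENNReal.coe_rpow_of_nonneg _ (Nat.cast_nonneg n)] at hle
    have h3 : ‖Q^n‖₊ ≤ r ^ (n:ℝ) := ENNReal.coe_le_coe.mp hle
    calc ‖(Q^n : B →L[ℂ] B)‖ = ((‖Q^n‖₊ : ℝ≥0) : ℝ) := rfl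
      _ ≤ ((r ^ (n:ℝ) : ℝ≥0) : ℝ) := NNReal.coe_le_coe.mpr h3
      _ = (r:ℝ)^n := by rw [NNReal.coe_rpow, Real.rpow_natCast]
  have hg : Summable fun n : ℕ => (r:ℝ)^n := summable_geometric_of_lt_one r.coe_nonneg hrlt1
  have h4 : Summable fun n : ℕ => ‖(Q^(n+N) : B →L[ℂ] B)‖ := by
    refine Summable.of_nonneg_of_le (fun n => norm_nonneg _) (fun n => ?_)
      ((summable_nat_add_iff N).mpr hg)
    exact hbound (n+N) (by omega)
  exact (summable_nat_add_iff N).mp h4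

/-- Existence of the asymptotic variance : `σ² = lim ∫ (S_n/√n)² dμ` exists,
equals `∫ φ² dμ + 2 Σ_{n≥1} ∫ φ (φ∘Tⁿ) dμ`, the series being absolutely convergent. -/
theorem stmt_5
    {X : Type*} [MeasurableSpace X] (m : Measure X) [IsProbabilityMeasure m]
    (T : X → X) (hT : Measurable T)
    (hns : ∀ A : Set X, MeasurableSet A → m A = 0 → m (T ⁻¹' A) = 0)
    -- B is a complex Banach space continuously embedded in L¹(m)
    {B : Type*} [NormedAddCommGroup B] [NormedSpace ℂ B] [CompleteSpace B]
    (ι : B →L[ℂ] Lp ℂ 1 m) (hι : Function.Injective ι)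
    -- constant functions lie in B
    (oneB : B) (honeB : ∀ᵐ x ∂m, (ι oneB : X → ℂ) x = 1)
    -- B is a Banach algebra : mulB is the pointwise multiplication, a continuous
    -- bilinear map (hence ∃ C > 0, ‖f*g‖_B ≤ C ‖f‖_B ‖g‖_B with C = ‖mulB‖)
    (mulB : B →L[ℂ] B →L[ℂ] B)
    (hmulB : ∀ f g : B, ∀ᵐ x ∂m,
        (ι (mulB f g) : X → ℂ) x = (ι f : X → ℂ) x * (ι g : X → ℂ) x)
    -- B is a complex Banach lattice : stable under conjugation and modulus
    (conjB : B → B)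
    (hconjB : ∀ f : B, ∀ᵐ x ∂m, (ι (conjB f) : X → ℂ) x = starRingEnd ℂ ((ι f : X → ℂ) x))
    (absB : B → B)
    (habsB : ∀ f : B, ∀ᵐ x ∂m,
        (ι (absB f) : X → ℂ) x = (‖(ι f : X → ℂ) x‖ : ℂ))
    -- P(B) ⊂ B and P restricted to B is bounded : PB is the restriction to B of the
    -- Perron-Frobenius operator P f = d m_f / dm, m_f (A) = ∫_{T⁻¹A} f dm
    (PB : B →L[ℂ] B)
    (hPB : ∀ (f : B) (A : Set X), MeasurableSet A →
        ∫ x in A, (ι (PB f) : X → ℂ) x ∂m = ∫ x in T ⁻¹' A, (ι f : X → ℂ) x ∂m)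
    -- the spectral radius of P on B is 1
    (hrad : spectralRadius ℂ (PB : B →L[ℂ] B) = 1)
    -- spectral gap : 1 is a simple eigenvalue of P on B and the only eigenvalue of
    -- modulus 1, so P f = ⟨m,f⟩ v + Q f with v the invariant density and Q of
    -- spectral radius < 1, Q v = 0, ⟨m, Q f⟩ = 0
    (v : B) (hv0 : ∀ᵐ x ∂m, 0 ≤ ((ι v : X → ℂ) x).re ∧ ((ι v : X → ℂ) x).im = 0)
    (hv1 : ∫ x, (ι v : X → ℂ) x ∂m = 1) (hvfix : PB v = v)
    (Q : B →L[ℂ] B) (hQrad : spectralRadius ℂ (Q : B →L[ℂ] B) < 1)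
    (hQv : Q v = 0) (hQm : ∀ f : B, ∫ x, (ι (Q f) : X → ℂ) x ∂m = 0)
    (hdecomp : ∀ f : B, PB f = (∫ x, (ι f : X → ℂ) x ∂m) • v + Q f)
    -- μ = v · m is the unique T-invariant a.c.i.p. with density in B
    (μ : Measure X)
    (hμ : μ = m.withDensity fun x => ENNReal.ofReal ((ι v : X → ℂ) x).re)
    -- φ ∈ B is a bounded real-valued observable with ∫ φ dμ = 0
    (φ : B) (hφreal : ∀ᵐ x ∂m, ((ι φ : X → ℂ) x).im = 0)
    (hφbdd : ∃ K : ℝ, ∀ᵐ x ∂m, ‖(ι φ : X → ℂ) x‖ ≤ K)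
    (hφmean : ∫ x, ((ι φ : X → ℂ) x).re ∂μ = 0)
    -- S n = Σ_{k<n} φ ∘ T^k are the Birkhoff sums of φ
    (S : ℕ → X → ℝ)
    (hS : ∀ (n : ℕ) (x : X), S n x = ∑ k ∈ Finset.range n, ((ι φ : X → ℂ) (T^[k] x)).re)
    :
    ∃ σ2 : ℝ,
      Tendsto (fun n : ℕ => ∫ x, (S n x / Real.sqrt n) ^ 2 ∂μ) atTop (𝓝 σ2) ∧
      Summable (fun n : ℕ =>
        |∫ x, ((ι φ : X → ℂ) x).re * ((ι φ : X → ℂ) (T^[n + 1] x)).re ∂μ|) ∧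
      σ2 = (∫ x, (((ι φ : X → ℂ) x).re) ^ 2 ∂μ) +
        2 * ∑' n : ℕ, ∫ x, ((ι φ : X → ℂ) x).re * ((ι φ : X → ℂ) (T^[n + 1] x)).re ∂μ := by
  classical
  obtain ⟨K, hK⟩ := hφbdd
  have hφmeas : Measurable (ι φ : X → ℂ) := (Lp.stronglyMeasurable (ι φ)).measurable
  have hvmeas : Measurable (ι v : X → ℂ) := (Lp.stronglyMeasurable (ι v)).measurable
  set φr : X → ℝ := fun x => ((ι φ : X → ℂ) x).re with hφrdef
  set vr : X → ℝ := fun x => ((ι v : X → ℂ) x).re with hvrdef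
  have hφrm : Measurable φr := Complex.measurable_re.comp hφmeas
  have hvrm : Measurable vr := Complex.measurable_re.comp hvmeas
  have hK0 : 0 ≤ K := by
    obtain ⟨x, hx⟩ := hK.exists
    exact (norm_nonneg _).trans hx
  set gt : X → ℝ := fun x => max (-K) (min (φr x) K) with hgtdef
  have hgtm : Measurable gt := measurable_const.max (hφrm.min measurable_const)
  have hgtb : ∀ x, |gt x| ≤ K := fun x => abs_le.mpr
    ⟨le_max_left _ _, max_le (by linarith) (min_le_right _ _)⟩
  have hgtae : gt =ᵐ[m] φr := by
    filter_upwards [hK] with x hx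
    have h1 : |φr x| ≤ K := (Complex.abs_re_le_norm _).trans hx
    have h2 := abs_le.mp h1
    rw [hgtdef]
    simp only [min_eq_left h2.2, max_eq_right h2.1]
  have hgtk : ∀ k : ℕ, (fun x => gt (T^[k] x)) =ᵐ[m] fun x => φr (T^[k] x) := by
    intro k
    have hE : m {x | gt x ≠ φr x} = 0 := by
      simpa [Filter.EventuallyEq, ae_iff] using hgtae
    have h0 := null_iter hT hns hE k
    rw [Filter.EventuallyEq, ae_iff]
    refine measure_mono_null (fun x hx => ?_) h0
    exact subset_toMeasurable m _ hx
  -- basic facts on μ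
  have hμac : μ ≪ m := hμ ▸ withDensity_absolutelyContinuous m _
  have hvint : Integrable (ι v : X → ℂ) m := L1.integrable_coeFn (ι v)
  have hvrint : Integrable vr m := by simpa using hvint.re
  have hvr0 : 0 ≤ᵐ[m] vr := hv0.mono fun x hx => hx.1
  have hvr1 : ∫ x, vr x ∂m = 1 := by
    have h := integral_re hvint
    simp only [RCLike.re_to_complex] at h
    rw [hvrdef]
    rw [h, hv1, Complex.one_re]
  have hμprob : IsProbabilityMeasure μ := by
    constructor
    rw [hμ, withDensity_apply _ MeasurableSet.univ, Measure.restrict_univ]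
    have h1 : ∫⁻ x, ENNReal.ofReal (vr x) ∂m = ENNReal.ofReal (∫ x, vr x ∂m) :=
      (ofReal_integral_eq_lintegral_ofReal hvrint hvr0).symm
    rw [show (fun x => ENNReal.ofReal ((ι v : X → ℂ) x).re) = fun x => ENNReal.ofReal (vr x)
      from rfl, h1, hvr1]
    simp
  haveI := hμprob
  have hμint : ∀ G : X → ℝ, Measurable G → ∫ x, G x ∂μ = ∫ x, G x * vr x ∂m := by
    intro G hG
    rw [hμ]
    rw [show (fun x => ENNReal.ofReal ((ι v : X → ℂ) x).re)
      = fun x => ((vr x).toNNReal : ℝ≥0∞) from rfl]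
    rw [integral_withDensity_eq_integral_smul hvrm.real_toNNReal G]
    refine integral_congr_ae (hvr0.mono fun x hx => ?_)
    simp only [NNReal.smul_def, Real.coe_toNNReal _ hx, smul_eq_mul]
    ring
  have hbddint : ∀ (G : X → ℝ) (D : ℝ), Measurable G → (∀ x, |G x| ≤ D) → Integrable G μ :=
    fun G D hG hD => (integrable_const D).mono' hG.aestronglyMeasurable
      (ae_of_all _ fun x => by simpa [Real.norm_eq_abs] using hD x)
  have hLpint : ∀ b : B, Integrable (ι b : X → ℂ) m := fun b => L1.integrable_coeFn (ι b)
  have hLpmeas : ∀ b : B, Measurable (ι b : X → ℂ) :=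
    fun b => (Lp.stronglyMeasurable (ι b)).measurable
  -- iterated duality
  have dualn : ∀ (n : ℕ) (b : B) (g : X → ℝ) (C : ℝ), Measurable g → (∀ x, |g x| ≤ C) →
      ∫ x, (g (T^[n] x) : ℂ) * (ι b : X → ℂ) x ∂m
        = ∫ x, (g x : ℂ) * (ι ((PB^n) b) : X → ℂ) x ∂m := by
    intro n
    induction n with
    | zero =>
      intro b g C hg hgC
      simp [Function.iterate_zero]
    | succ n ih =>
      intro b g C hg hgC
      have step := dual_complex hT (hLpmeas (PB b)) (hLpmeas b) (hLpint (PB b)) (hLpint b)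
        (hPB b) (hg.comp (hT.iterate n)) (C := C) (fun x => hgC _)
      calc ∫ x, (g (T^[n+1] x) : ℂ) * (ι b : X → ℂ) x ∂m
          = ∫ x, (g (T^[n] (T x)) : ℂ) * (ι b : X → ℂ) x ∂m := by
            refine integral_congr_ae (ae_of_all _ fun x => ?_)
            simp only [Function.iterate_succ, Function.comp_apply]
        _ = ∫ x, (g (T^[n] x) : ℂ) * (ι (PB b) : X → ℂ) x ∂m := step.symm
        _ = ∫ x, (g x : ℂ) * (ι ((PB^n) (PB b)) : X → ℂ) x ∂m := ih (PB b) g C hg hgC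
        _ = ∫ x, (g x : ℂ) * (ι ((PB^(n+1)) b) : X → ℂ) x ∂m := by
            rw [pow_succ]; rfl
  -- invariance of μ
  have hinv : ∀ (G : X → ℝ) (D : ℝ), Measurable G → (∀ x, |G x| ≤ D) →
      ∫ x, G (T x) ∂μ = ∫ x, G x ∂μ := by
    intro G D hG hD
    rw [hμint (fun x => G (T x)) (hG.comp hT), hμint G hG]
    have hre : ∀ A : Set X, MeasurableSet A →
        ∫ x in A, vr x ∂m = ∫ x in T ⁻¹' A, vr x ∂m := by
      intro A hA
      have h0 := hPB v A hA
      rw [hvfix] at h0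
      have h1 : ∫ x in A, vr x ∂m = (∫ x in A, (ι v : X → ℂ) x ∂m).re := by
        have := integral_re (hvint.restrict (s := A))
        simpa [RCLike.re_to_complex] using this
      have h2 : ∫ x in T ⁻¹' A, vr x ∂m = (∫ x in T ⁻¹' A, (ι v : X → ℂ) x ∂m).re := by
        have := integral_re (hvint.restrict (s := T ⁻¹' A))
        simpa [RCLike.re_to_complex] using this
      rw [h1, h2, h0]
    exact (dual_real hT hvrm hvrm hvrint hvrint hre hG hD).symm
  -- correlations
  set cc : ℕ → ℝ := fun d => ∫ x, gt x * gt (T^[d] x) ∂μ with hccdef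
  have hIprod : ∀ j k : ℕ, Integrable (fun x => gt (T^[j] x) * gt (T^[k] x)) μ := by
    intro j k
    refine hbddint _ (K * K) ((hgtm.comp (hT.iterate j)).mul (hgtm.comp (hT.iterate k)))
      fun x => ?_
    rw [abs_mul]
    exact mul_le_mul (hgtb _) (hgtb _) (abs_nonneg _) hK0
  have hcorstep : ∀ j k : ℕ,
      ∫ x, gt (T^[j+1] x) * gt (T^[k+1] x) ∂μ = ∫ x, gt (T^[j] x) * gt (T^[k] x) ∂μ := by
    intro j k
    have h := hinv (fun x => gt (T^[j] x) * gt (T^[k] x)) (K * K)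
      ((hgtm.comp (hT.iterate j)).mul (hgtm.comp (hT.iterate k)))
      (fun x => by rw [abs_mul]; exact mul_le_mul (hgtb _) (hgtb _) (abs_nonneg _) hK0)
    calc ∫ x, gt (T^[j+1] x) * gt (T^[k+1] x) ∂μ
        = ∫ x, gt (T^[j] (T x)) * gt (T^[k] (T x)) ∂μ := by
          refine integral_congr_ae (ae_of_all _ fun x => ?_)
          simp only [Function.iterate_succ, Function.comp_apply]
      _ = ∫ x, gt (T^[j] x) * gt (T^[k] x) ∂μ := h
  have hcor : ∀ j d : ℕ, ∫ x, gt (T^[j] x) * gt (T^[j+d] x) ∂μ = cc d := by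
    intro j d
    induction j with
    | zero => simp [hccdef]
    | succ j ih =>
      have h := hcorstep j (j + d)
      have he : (j+1)+d = (j+d)+1 := by omega
      rw [he]
      exact h.trans ih
  have hcormm : ∀ j k : ℕ, ∫ x, gt (T^[j] x) * gt (T^[k] x) ∂μ = cc (max j k - min j k) := by
    intro j k
    rcases le_total j k with h | h
    · have : k = j + (k - j) := by omega
      rw [this] at *
      rw [hcor j (k - j)]
      congr 1
      omega
    · have hkj : j = k + (j - k) := by omega
      have hcomm : ∫ x, gt (T^[j] x) * gt (T^[k] x) ∂μ
          = ∫ x, gt (T^[k] x) * gt (T^[j] x) ∂μ := by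
        refine integral_congr_ae (ae_of_all _ fun x => ?_); ring
      rw [hcomm, hkj, hcor k (j - k)]
      congr 1
      omega
  -- variance expansion
  have hvar : ∀ n : ℕ, ∫ x, (∑ k ∈ Finset.range n, gt (T^[k] x))^2 ∂μ
      = n * cc 0 + 2 * ∑ i ∈ Finset.range n, ((n - (i+1) : ℕ) : ℝ) * cc (i+1) := by
    intro n
    rw [← sum_corr]
    have hsq : ∀ x : X, (∑ k ∈ Finset.range n, gt (T^[k] x))^2
        = ∑ j ∈ Finset.range n, ∑ k ∈ Finset.range n, gt (T^[j] x) * gt (T^[k] x) := by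
      intro x
      rw [sq, Finset.sum_mul_sum]
    calc ∫ x, (∑ k ∈ Finset.range n, gt (T^[k] x))^2 ∂μ
        = ∫ x, ∑ j ∈ Finset.range n, ∑ k ∈ Finset.range n, gt (T^[j] x) * gt (T^[k] x) ∂μ := by
          exact integral_congr_ae (ae_of_all _ hsq)
      _ = ∑ j ∈ Finset.range n, ∑ k ∈ Finset.range n, ∫ x, gt (T^[j] x) * gt (T^[k] x) ∂μ := by
          rw [integral_finset_sum _ (fun j _ => integrable_finset_sum _ (fun k _ => hIprod j k))]
          exact Finset.sum_congr rfl fun j _ =>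
            integral_finset_sum _ (fun k _ => hIprod j k)
      _ = ∑ j ∈ Finset.range n, ∑ k ∈ Finset.range n, cc (max j k - min j k) :=
          Finset.sum_congr rfl fun j _ => Finset.sum_congr rfl fun k _ => hcormm j k
  -- ψ = φ·v and its zero mean
  set ψ : B := mulB φ v with hψdef
  have hψre : (fun x => ((ι ψ : X → ℂ) x).re) =ᵐ[m] fun x => gt x * vr x := by
    filter_upwards [hmulB φ v, hφreal, hv0, hgtae] with x h1 h2 h3 h4
    rw [h1, Complex.mul_re, h2, h3.2, h4]
    ring
  have hψim : (fun x => ((ι ψ : X → ℂ) x).im) =ᵐ[m] fun _ => (0:ℝ) := by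
    filter_upwards [hmulB φ v, hφreal, hv0] with x h1 h2 h3
    rw [h1, Complex.mul_im, h2, h3.2]
    ring
  have hψ0 : ∫ x, (ι ψ : X → ℂ) x ∂m = 0 := by
    have hre0 : ∫ x, ((ι ψ : X → ℂ) x).re ∂m = 0 := by
      rw [integral_congr_ae hψre]
      have e1 : ∫ x, gt x * vr x ∂m = ∫ x, gt x ∂μ := (hμint gt hgtm).symm
      have e2 : ∫ x, gt x ∂μ = ∫ x, φr x ∂μ := integral_congr_ae (hμac.ae_eq hgtae)
      rw [e1, e2, hφmean]
    have him0 : ∫ x, ((ι ψ : X → ℂ) x).im ∂m = 0 := by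
      rw [integral_congr_ae hψim]
      simp
    have hr := integral_re (hLpint ψ)
    have hi := integral_im (hLpint ψ)
    simp only [RCLike.re_to_complex, RCLike.im_to_complex] at hr hi
    apply Complex.ext
    · rw [← hr, hre0, Complex.zero_re]
    · rw [← hi, him0, Complex.zero_im]
  -- PB^n ψ = Q^n ψ
  have hPQ : ∀ n : ℕ, (PB^(n+1)) ψ = (Q^(n+1)) ψ := by
    intro n
    induction n with
    | zero =>
      rw [zero_add, pow_one, pow_one, hdecomp ψ, hψ0, zero_smul, zero_add]
    | succ n ih =>
      have e1 : (PB^(n+2)) ψ = PB ((PB^(n+1)) ψ) := by rw [pow_succ']; rfl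
      have e2 : (Q^(n+2)) ψ = Q ((Q^(n+1)) ψ) := by rw [pow_succ']; rfl
      rw [e1, ih, hdecomp]
      have hint0 : ∫ x, (ι ((Q^(n+1)) ψ) : X → ℂ) x ∂m = 0 := by
        have e3 : (Q^(n+1)) ψ = Q ((Q^n) ψ) := by rw [pow_succ']; rfl
        rw [e3]
        exact hQm _
      rw [hint0, zero_smul, zero_add, ← e2]
  -- correlation formula via duality
  have hccJ : ∀ k : ℕ, cc k = (∫ x, (gt x : ℂ) * (ι ((PB^k) ψ) : X → ℂ) x ∂m).re := by
    intro k
    have hdual := dualn k ψ gt K hgtm hgtb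
    have hint : Integrable (fun x => (gt (T^[k] x) : ℂ) * (ι ψ : X → ℂ) x) m :=
      (hLpint ψ).bdd_mul
        (Complex.measurable_ofReal.comp (hgtm.comp (hT.iterate k))).aestronglyMeasurable
        (ae_of_all _ fun x => by simpa [Complex.norm_real, Real.norm_eq_abs] using hgtb (T^[k] x))
    have hre := integral_re hint
    simp only [RCLike.re_to_complex] at hre
    have e : (fun x => ((gt (T^[k] x) : ℂ) * (ι ψ : X → ℂ) x).re)
        =ᵐ[m] fun x => (gt x * gt (T^[k] x)) * vr x := by
      filter_upwards [hψre] with x hx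
      rw [Complex.mul_re]
      simp only [Complex.ofReal_re, Complex.ofReal_im, zero_mul, sub_zero]
      rw [hx]
      ring
    calc cc k = ∫ x, gt x * gt (T^[k] x) ∂μ := rfl
      _ = ∫ x, (gt x * gt (T^[k] x)) * vr x ∂m :=
          hμint _ (hgtm.mul (hgtm.comp (hT.iterate k)))
      _ = ∫ x, ((gt (T^[k] x) : ℂ) * (ι ψ : X → ℂ) x).re ∂m := (integral_congr_ae e).symm
      _ = (∫ x, (gt (T^[k] x) : ℂ) * (ι ψ : X → ℂ) x ∂m).re := hre
      _ = (∫ x, (gt x : ℂ) * (ι ((PB^k) ψ) : X → ℂ) x ∂m).re := by rw [hdual]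
  -- geometric bound on correlations
  set M : ℝ := K * (‖ι‖ * ‖ψ‖) with hMdef
  have hccbd : ∀ n : ℕ, |cc (n+1)| ≤ M * ‖(Q^(n+1) : B →L[ℂ] B)‖ := by
    intro n
    rw [hccJ (n+1), hPQ n]
    set b : B := (Q^(n+1)) ψ with hbdef
    have hint : Integrable (fun x => (gt x : ℂ) * (ι b : X → ℂ) x) m :=
      (hLpint b).bdd_mul (Complex.measurable_ofReal.comp hgtm).aestronglyMeasurable
        (ae_of_all _ fun x => by simpa [Complex.norm_real, Real.norm_eq_abs] using hgtb x)
    have hQn : ‖b‖ ≤ ‖(Q^(n+1) : B →L[ℂ] B)‖ * ‖ψ‖ := (Q^(n+1) : B →L[ℂ] B).le_opNorm ψ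
    calc |(∫ x, (gt x : ℂ) * (ι b : X → ℂ) x ∂m).re|
        ≤ ‖∫ x, (gt x : ℂ) * (ι b : X → ℂ) x ∂m‖ := Complex.abs_re_le_norm _
      _ = ‖∫ x, (gt x : ℂ) * (ι b : X → ℂ) x ∂m‖ := rfl
      _ ≤ ∫ x, ‖(gt x : ℂ) * (ι b : X → ℂ) x‖ ∂m := norm_integral_le_integral_norm _
      _ ≤ ∫ x, K * ‖(ι b : X → ℂ) x‖ ∂m := by
          refine integral_mono hint.norm ((hLpint b).norm.const_mul K) fun x => ?_
          rw [norm_mul]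
          exact mul_le_mul_of_nonneg_right
            (by simpa [Complex.norm_real, Real.norm_eq_abs] using hgtb x) (norm_nonneg _)
      _ = K * ∫ x, ‖(ι b : X → ℂ) x‖ ∂m := integral_const_mul K _
      _ = K * ‖ι b‖ := by rw [L1.norm_eq_integral_norm (ι b)]
      _ ≤ K * (‖ι‖ * ‖b‖) := mul_le_mul_of_nonneg_left (ι.le_opNorm b) hK0
      _ ≤ M * ‖(Q^(n+1) : B →L[ℂ] B)‖ := by
          rw [hMdef]
          nlinarith [norm_nonneg ι, norm_nonneg b, norm_nonneg ψ,
            norm_nonneg (Q^(n+1) : B →L[ℂ] B), mul_le_mul_of_nonneg_left hQn (norm_nonneg ι)]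
  have hsummc : Summable (fun n : ℕ => |cc (n+1)|) := by
    have h0 : Summable (fun n : ℕ => ‖(Q^n : B →L[ℂ] B)‖) := geom_summable Q hQrad
    have h1 : Summable (fun n : ℕ => ‖(Q^(n+1) : B →L[ℂ] B)‖) :=
      (summable_nat_add_iff (f := fun n : ℕ => ‖(Q^n : B →L[ℂ] B)‖) 1).mpr h0
    exact Summable.of_nonneg_of_le (fun n => abs_nonneg _) hccbd (h1.mul_left M)
  -- identify correlations with the statement's integrals
  have hc2cc : ∀ n : ℕ, ∫ x, φr x * φr (T^[n+1] x) ∂μ = cc (n+1) := by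
    intro n
    refine integral_congr_ae ?_
    filter_upwards [hμac.ae_eq hgtae, hμac.ae_eq (hgtk (n+1))] with x hx1 hx2
    rw [← hx1]
    have : gt (T^[n+1] x) = φr (T^[n+1] x) := hx2
    rw [← this]
  have hcc0 : cc 0 = ∫ x, (φr x)^2 ∂μ := by
    refine integral_congr_ae ?_
    filter_upwards [hμac.ae_eq hgtae] with x hx
    rw [Function.iterate_zero_apply, hx]
    ring
  -- dominated convergence for the Cesàro-type sums
  set F : ℕ → ℕ → ℝ := fun n i =>
    if i < n then (((n - (i+1) : ℕ) : ℝ)/(n:ℝ)) * cc (i+1) else 0 with hFdef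
  have hFsum : ∀ n : ℕ, ∑' i, F n i
      = ∑ i ∈ Finset.range n, (((n - (i+1) : ℕ) : ℝ)/(n:ℝ)) * cc (i+1) := by
    intro n
    rw [tsum_eq_sum (s := Finset.range n)
      (fun i hi => if_neg (fun h => hi (Finset.mem_range.mpr h)))]
    exact Finset.sum_congr rfl fun i hi => if_pos (Finset.mem_range.mp hi)
  have hFtend : ∀ i : ℕ, Tendsto (fun n => F n i) atTop (𝓝 (cc (i+1))) := by
    intro i
    have h2 : Tendsto (fun n : ℕ => ((i:ℝ)+1)/n) atTop (𝓝 0) :=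
      tendsto_const_div_atTop_nhds_zero_nat _
    have h1 : Tendsto (fun n : ℕ => (1 - ((i:ℝ)+1)/n) * cc (i+1)) atTop (𝓝 (cc (i+1))) := by
      have := ((tendsto_const_nhds (x := (1:ℝ))).sub h2).mul_const (cc (i+1))
      simpa using this
    refine h1.congr' ?_
    filter_upwards [eventually_gt_atTop i] with n hn
    have hlt : i < n := hn
    have hn0 : (n:ℝ) ≠ 0 := Nat.cast_ne_zero.mpr (by omega)
    have hFval : F n i = (((n - (i+1) : ℕ) : ℝ)/(n:ℝ)) * cc (i+1) := if_pos hlt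
    rw [hFval, Nat.cast_sub (by omega : i+1 ≤ n)]
    push_cast
    rw [sub_div, div_self hn0]
  have hFbd : ∀ n i, ‖F n i‖ ≤ |cc (i+1)| := by
    intro n i
    by_cases h : i < n
    · have hFval : F n i = (((n - (i+1) : ℕ) : ℝ)/(n:ℝ)) * cc (i+1) := if_pos h
      rw [hFval, Real.norm_eq_abs, abs_mul]
      have h1 : (0:ℝ) ≤ ((n - (i+1) : ℕ) : ℝ)/(n:ℝ) := by positivity
      have h2 : ((n - (i+1) : ℕ) : ℝ)/(n:ℝ) ≤ 1 := by
        rw [div_le_one (by exact_mod_cast Nat.pos_of_ne_zero (by omega))]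
        exact_mod_cast Nat.sub_le n (i+1)
      calc |((n - (i+1) : ℕ) : ℝ)/(n:ℝ)| * |cc (i+1)|
          ≤ 1 * |cc (i+1)| :=
            mul_le_mul_of_nonneg_right (by rwa [abs_of_nonneg h1]) (abs_nonneg _)
        _ = |cc (i+1)| := one_mul _
    · have hFval : F n i = 0 := if_neg h
      rw [hFval]
      simp [abs_nonneg]
  have htendF : Tendsto (fun n => ∑' i, F n i) atTop (𝓝 (∑' i, cc (i+1))) :=
    tendsto_tsum_of_dominated_convergence hsummc hFtend (Filter.Eventually.of_forall hFbd)
  -- identification of the prelimit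
  have hkey : ∀ n : ℕ, 1 ≤ n →
      ∫ x, (S n x / Real.sqrt n)^2 ∂μ = cc 0 + 2 * ∑' i, F n i := by
    intro n hn
    have hn0 : (n:ℝ) ≠ 0 := Nat.cast_ne_zero.mpr (by omega)
    have hSsum : (fun x => (S n x)^2)
        =ᵐ[μ] fun x => (∑ k ∈ Finset.range n, gt (T^[k] x))^2 := by
      have hall : ∀ᵐ x ∂μ, ∀ k ∈ Finset.range n, gt (T^[k] x) = φr (T^[k] x) := by
        rw [Filter.eventually_all_finset]
        intro k _
        exact hμac.ae_eq (hgtk k)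
      filter_upwards [hall] with x hx
      rw [hS n x]
      congr 1
      exact (Finset.sum_congr rfl fun k hk => (hx k hk)).symm
    have e1 : ∫ x, (S n x / Real.sqrt n)^2 ∂μ = (∫ x, (S n x)^2 ∂μ) / n := by
      rw [← integral_div]
      refine integral_congr_ae (ae_of_all _ fun x => ?_)
      show (S n x / Real.sqrt n)^2 = (S n x)^2 / (n:ℝ)
      rw [div_pow, Real.sq_sqrt (Nat.cast_nonneg n)]
    have e2 : ∑ i ∈ Finset.range n, (((n - (i+1) : ℕ) : ℝ)/(n:ℝ)) * cc (i+1)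
        = (∑ i ∈ Finset.range n, ((n - (i+1) : ℕ) : ℝ) * cc (i+1))/(n:ℝ) := by
      rw [Finset.sum_div]
      exact Finset.sum_congr rfl fun i _ => by ring
    rw [e1, integral_congr_ae hSsum, hvar n, hFsum n, e2]
    field_simp
  refine ⟨cc 0 + 2 * ∑' i, cc (i+1), ?_, ?_, ?_⟩
  · have h := (tendsto_const_nhds (x := cc 0)).add (htendF.const_mul 2)
    refine Tendsto.congr' ?_ h
    filter_upwards [eventually_ge_atTop 1] with n hn
    exact (hkey n hn).symm
  · have he : (fun n : ℕ => |∫ x, φr x * φr (T^[n+1] x) ∂μ|)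
        = fun n : ℕ => |cc (n+1)| := by
      funext n
      rw [hc2cc n]
    exact he ▸ hsummc
  · rw [hcc0]
    congr 1
    congr 1
    exact tsum_congr fun n => (hc2cc n).symm
end

section
/- (Proposition 2.) In the setting of Proposition 1, there exists 0 < θ₁ < θ₀ such that for every real θ with |θ| < θ₁, the leading eigenvalue satisfies λ(θ) > 0. Moreover, one may replace v(z) and φ(z) by ṽ(z) = ⟨φ(z), 𝟙⟩ v(z) and φ̃(z) = ⟨φ(z), 𝟙⟩⁻¹ φ(z) (for z in a possibly smaller disc, where ⟨φ(z), 𝟙⟩ ≠ 0), which are again holomorphic in z and satisfy all conclusions of Proposition 1, and which in addition satisfy, for every real θ with |θ| < θ₁: ṽ(θ) ≥ 0 m-a.e., and φ̃(θ) is a positive linear functional (⟨φ̃(θ), f⟩ ≥ 0 whenever f ∈ B with f ≥ 0 m-a.e.). -/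
open MeasureTheory Filter Topology

set_option linter.unusedSectionVars false
set_option maxHeartbeats 1000000
set_option synthInstance.maxHeartbeats 400000

namespace Stmt8Aux

variable {X : Type*} [MeasurableSpace X] {m : Measure X} [IsProbabilityMeasure m]
variable {B : Type*} [NormedAddCommGroup B] [NormedSpace ℂ B]

/-- a.e. nonneg real predicate. -/
def Pos (ι : B →L[ℂ] Lp ℂ 1 m) (g : B) : Prop :=
  ∀ᵐ x ∂m, 0 ≤ ((ι g : X → ℂ) x).re ∧ ((ι g : X → ℂ) x).im = 0

lemma norm_setIntegral_le (ι : B →L[ℂ] Lp ℂ 1 m) (g : B) (A : Set X) :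
    ‖∫ x in A, (ι g : X → ℂ) x ∂m‖ ≤ ‖ι‖ * ‖g‖ := by
  calc ‖∫ x in A, (ι g : X → ℂ) x ∂m‖ ≤ ∫ x in A, ‖(ι g : X → ℂ) x‖ ∂m :=
        norm_integral_le_integral_norm _
    _ ≤ ∫ x, ‖(ι g : X → ℂ) x‖ ∂m :=
        setIntegral_le_integral (L1.integrable_coeFn (ι g)).norm
          (Filter.Eventually.of_forall fun x => norm_nonneg _)
    _ = ‖ι g‖ := (L1.norm_eq_integral_norm _).symm
    _ ≤ ‖ι‖ * ‖g‖ := ι.le_opNorm g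

lemma norm_integral_le' (ι : B →L[ℂ] Lp ℂ 1 m) (g : B) :
    ‖∫ x, (ι g : X → ℂ) x ∂m‖ ≤ ‖ι‖ * ‖g‖ := by
  have := norm_setIntegral_le ι g Set.univ
  simpa [Measure.restrict_univ] using this

lemma setIntegral_sub' (ι : B →L[ℂ] Lp ℂ 1 m) (w g : B) (A : Set X) :
    ∫ x in A, (ι w : X → ℂ) x ∂m - ∫ x in A, (ι g : X → ℂ) x ∂m
      = ∫ x in A, (ι (w - g) : X → ℂ) x ∂m := by
  have h1 : (ι (w - g) : X → ℂ) =ᵐ[m] fun x => (ι w : X → ℂ) x - (ι g : X → ℂ) x := by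
    rw [map_sub]
    filter_upwards [Lp.coeFn_sub (ι w) (ι g)] with x hx using hx
  rw [integral_congr_ae (ae_restrict_of_ae h1),
    integral_sub ((L1.integrable_coeFn (ι w)).restrict) ((L1.integrable_coeFn (ι g)).restrict)]

lemma pos_of_setIntegral (ι : B →L[ℂ] Lp ℂ 1 m) (g : B)
    (h : ∀ A : Set X, MeasurableSet A →
      0 ≤ (∫ x in A, (ι g : X → ℂ) x ∂m).re ∧ (∫ x in A, (ι g : X → ℂ) x ∂m).im = 0) :
    Pos ι g := by
  have hint : Integrable (ι g : X → ℂ) m := L1.integrable_coeFn _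
  have hre : 0 ≤ᵐ[m] fun x => RCLike.re ((ι g : X → ℂ) x) := by
    apply ae_nonneg_of_forall_setIntegral_nonneg hint.re
    intro s hs _
    rw [integral_re (hint.restrict (s := s))]
    simpa using (h s hs).1
  have him1 : 0 ≤ᵐ[m] fun x => RCLike.im ((ι g : X → ℂ) x) := by
    apply ae_nonneg_of_forall_setIntegral_nonneg hint.im
    intro s hs _
    rw [integral_im (hint.restrict (s := s))]
    simp [(h s hs).2]
  have him2 : 0 ≤ᵐ[m] fun x => -RCLike.im ((ι g : X → ℂ) x) := by
    apply ae_nonneg_of_forall_setIntegral_nonneg hint.im.neg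
    intro s hs _
    simp only [Pi.neg_apply]
    rw [integral_neg, integral_im (hint.restrict (s := s))]
    simp [(h s hs).2]
  filter_upwards [hre, him1, him2] with x h1 h2 h3
  simp only [Pi.zero_apply, RCLike.re_to_complex, RCLike.im_to_complex] at h1 h2 h3
  exact ⟨h1, le_antisymm (by linarith) h2⟩

lemma setIntegral_of_pos (ι : B →L[ℂ] Lp ℂ 1 m) {g : B} (hg : Pos ι g) (A : Set X) :
    0 ≤ (∫ x in A, (ι g : X → ℂ) x ∂m).re ∧ (∫ x in A, (ι g : X → ℂ) x ∂m).im = 0 := by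
  have hint : Integrable (ι g : X → ℂ) (m.restrict A) := (L1.integrable_coeFn _).restrict
  constructor
  · rw [← RCLike.re_to_complex, ← integral_re hint]
    exact integral_nonneg_of_ae (ae_restrict_of_ae (hg.mono fun x hx => by
      simpa using hx.1))
  · rw [← RCLike.im_to_complex, ← integral_im hint]
    rw [integral_congr_ae (g := fun _ => (0:ℝ)) (ae_restrict_of_ae (hg.mono fun x hx => by
      simpa using hx.2))]
    simp

lemma integral_of_pos (ι : B →L[ℂ] Lp ℂ 1 m) {g : B} (hg : Pos ι g) :
    0 ≤ (∫ x, (ι g : X → ℂ) x ∂m).re ∧ (∫ x, (ι g : X → ℂ) x ∂m).im = 0 := by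
  have := setIntegral_of_pos ι hg Set.univ
  simpa [Measure.restrict_univ] using this

/-- limit of a.e.-nonneg elements of B is a.e. nonneg. -/
lemma pos_of_approx (ι : B →L[ℂ] Lp ℂ 1 m) (w : B) (g : ℕ → B) (err : ℕ → ℝ)
    (hg : ∀ n, Pos ι (g n)) (hb : ∀ n, ‖w - g n‖ ≤ err n)
    (herr : Tendsto err atTop (𝓝 0)) : Pos ι w := by
  apply pos_of_setIntegral
  intro A hA
  set I := ∫ x in A, (ι w : X → ℂ) x ∂m with hI
  have key : ∀ n, ‖I - ∫ x in A, (ι (g n) : X → ℂ) x ∂m‖ ≤ ‖ι‖ * err n := by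
    intro n
    rw [hI, setIntegral_sub']
    calc ‖∫ x in A, (ι (w - g n) : X → ℂ) x ∂m‖ ≤ ‖ι‖ * ‖w - g n‖ := norm_setIntegral_le ι _ A
      _ ≤ ‖ι‖ * err n := mul_le_mul_of_nonneg_left (hb n) (norm_nonneg _)
  have herr' : Tendsto (fun n => ‖ι‖ * err n) atTop (𝓝 0) := by
    simpa using herr.const_mul ‖ι‖
  constructor
  · have h1 : ∀ n, -I.re ≤ ‖ι‖ * err n := by
      intro n
      have h2 := (setIntegral_of_pos ι (hg n) A).1
      have h3 : |(I - ∫ x in A, (ι (g n) : X → ℂ) x ∂m).re| ≤ ‖ι‖ * err n :=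
        (Complex.abs_re_le_norm _).trans (key n)
      rw [Complex.sub_re, abs_le] at h3
      linarith [h3.1]
    linarith [ge_of_tendsto' herr' h1]
  · have h1 : ∀ n, |I.im| ≤ ‖ι‖ * err n := by
      intro n
      have h2 := (setIntegral_of_pos ι (hg n) A).2
      have h3 : |(I - ∫ x in A, (ι (g n) : X → ℂ) x ∂m).im| ≤ ‖ι‖ * err n :=
        (Complex.abs_im_le_norm _).trans (key n)
      rwa [Complex.sub_im, h2, sub_zero] at h3
    have := ge_of_tendsto' herr' h1
    have h0 := abs_nonneg I.im
    have : |I.im| = 0 := le_antisymm this h0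
    exact abs_eq_zero.mp this



lemma pos_smul (ι : B →L[ℂ] Lp ℂ 1 m) {g : B} (hg : Pos ι g) {c : ℝ} (hc : 0 ≤ c) :
    Pos ι ((c : ℂ) • g) := by
  have h1 : (ι ((c:ℂ) • g) : X → ℂ) =ᵐ[m] fun x => (c:ℂ) * (ι g : X → ℂ) x := by
    rw [_root_.map_smul]
    filter_upwards [Lp.coeFn_smul (c:ℂ) (ι g)] with x hx
    simpa [smul_eq_mul] using hx
  filter_upwards [h1, hg] with x hx hgx
  rw [hx]
  constructor
  · simp only [Complex.mul_re, Complex.ofReal_re, Complex.ofReal_im, hgx.2]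
    simpa using mul_nonneg hc hgx.1
  · simp [Complex.mul_im, hgx.2]

lemma pos_mul (ι : B →L[ℂ] Lp ℂ 1 m) (mulB : B →L[ℂ] B →L[ℂ] B)
    (hmulB : ∀ f g : B, ∀ᵐ x ∂m,
        (ι (mulB f g) : X → ℂ) x = (ι f : X → ℂ) x * (ι g : X → ℂ) x)
    {e g : B} (he : Pos ι e) (hg : Pos ι g) : Pos ι (mulB e g) := by
  filter_upwards [hmulB e g, he, hg] with x hx hex hgx
  rw [hx]
  constructor
  · simp only [Complex.mul_re, hex.2]
    simpa using mul_nonneg hex.1 hgx.1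
  · simp [Complex.mul_im, hex.2, hgx.2]

lemma pos_PB (T : X → X) (ι : B →L[ℂ] Lp ℂ 1 m) (PB : B →L[ℂ] B)
    (hPB : ∀ (f : B) (A : Set X), MeasurableSet A →
        ∫ x in A, (ι (PB f) : X → ℂ) x ∂m = ∫ x in T ⁻¹' A, (ι f : X → ℂ) x ∂m)
    {g : B} (hg : Pos ι g) : Pos ι (PB g) := by
  apply pos_of_setIntegral
  intro A hA
  rw [hPB g A hA]
  exact setIntegral_of_pos ι hg _

lemma integral_iota_add (ι : B →L[ℂ] Lp ℂ 1 m) (g h : B) :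
    ∫ x, (ι (g + h) : X → ℂ) x ∂m
      = (∫ x, (ι g : X → ℂ) x ∂m) + ∫ x, (ι h : X → ℂ) x ∂m := by
  have h1 : (ι (g + h) : X → ℂ) =ᵐ[m] fun x => (ι g : X → ℂ) x + (ι h : X → ℂ) x := by
    rw [map_add]
    filter_upwards [Lp.coeFn_add (ι g) (ι h)] with x hx using hx
  rw [integral_congr_ae h1,
    integral_add (L1.integrable_coeFn (ι g)) (L1.integrable_coeFn (ι h))]

lemma integral_iota_smul (ι : B →L[ℂ] Lp ℂ 1 m) (c : ℂ) (g : B) :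
    ∫ x, (ι (c • g) : X → ℂ) x ∂m = c * ∫ x, (ι g : X → ℂ) x ∂m := by
  have h1 : (ι (c • g) : X → ℂ) =ᵐ[m] fun x => c * (ι g : X → ℂ) x := by
    rw [_root_.map_smul]
    filter_upwards [Lp.coeFn_smul c (ι g)] with x hx
    simpa [smul_eq_mul] using hx
  rw [integral_congr_ae h1, integral_const_mul]

lemma div_nonneg_complex {t u : ℂ} (ht : 0 ≤ t.re) (htim : t.im = 0)
    (hure : 0 < u.re) (huim : u.im = 0) : 0 ≤ (t / u).re ∧ (t / u).im = 0 := by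
  have h1 : t = (t.re : ℂ) := Complex.ext rfl (by simp [htim])
  have h2 : u = (u.re : ℂ) := Complex.ext rfl (by simp [huim])
  rw [h1, h2, ← Complex.ofReal_div]
  exact ⟨by simpa using div_nonneg ht hure.le, by simp⟩


lemma pos_one (ι : B →L[ℂ] Lp ℂ 1 m) (oneB : B)
    (honeB : ∀ᵐ x ∂m, (ι oneB : X → ℂ) x = 1) : Pos ι oneB := by
  filter_upwards [honeB] with x hx
  rw [hx]; norm_num

lemma eq_zero_of_pos_integral_zero (ι : B →L[ℂ] Lp ℂ 1 m) (hι : Function.Injective ι)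
    {g : B} (hg : Pos ι g) (h0 : ∫ x, (ι g : X → ℂ) x ∂m = 0) : g = 0 := by
  have hint : Integrable (ι g : X → ℂ) m := L1.integrable_coeFn _
  have hre0 : ∫ x, RCLike.re ((ι g : X → ℂ) x) ∂m = 0 := by
    rw [integral_re hint, h0]; simp
  have hre : (fun x => RCLike.re ((ι g : X → ℂ) x)) =ᵐ[m] 0 := by
    rw [← integral_eq_zero_iff_of_nonneg_ae ?_ hint.re]
    · exact hre0
    · exact hg.mono fun x hx => by simpa using hx.1
  have hae : (ι g : X → ℂ) =ᵐ[m] 0 := by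
    filter_upwards [hre, hg] with x h1 h2
    simp only [RCLike.re_to_complex, Pi.zero_apply] at h1 ⊢
    exact Complex.ext (by simpa using h1) (by simpa using h2.2)
  have : ι g = 0 := Lp.eq_zero_iff_ae_eq_zero.mpr hae
  apply hι
  rw [this, map_zero]

lemma dist_integral_le (h1 h2 : Lp ℂ 1 m) :
    dist (∫ x, (h1 : X → ℂ) x ∂m) (∫ x, (h2 : X → ℂ) x ∂m) ≤ dist h1 h2 := by
  rw [dist_eq_norm, dist_eq_norm]
  have hs : ∫ x, (h1 : X → ℂ) x ∂m - ∫ x, (h2 : X → ℂ) x ∂m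
      = ∫ x, ((h1 - h2 : Lp ℂ 1 m) : X → ℂ) x ∂m := by
    have he : ((h1 - h2 : Lp ℂ 1 m) : X → ℂ) =ᵐ[m] fun x => (h1 : X → ℂ) x - (h2 : X → ℂ) x :=
      Lp.coeFn_sub h1 h2
    rw [integral_congr_ae he,
      integral_sub (L1.integrable_coeFn h1) (L1.integrable_coeFn h2)]
  rw [hs]
  calc ‖∫ x, ((h1 - h2 : Lp ℂ 1 m) : X → ℂ) x ∂m‖
      ≤ ∫ x, ‖((h1 - h2 : Lp ℂ 1 m) : X → ℂ) x‖ ∂m := norm_integral_le_integral_norm _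
    _ = ‖h1 - h2‖ := (L1.norm_eq_integral_norm _).symm

lemma integral_continuous : Continuous (fun h : Lp ℂ 1 m => ∫ x, (h : X → ℂ) x ∂m) := by
  have : LipschitzWith 1 (fun h : Lp ℂ 1 m => ∫ x, (h : X → ℂ) x ∂m) :=
    LipschitzWith.of_dist_le_mul fun h1 h2 => by
      simpa using dist_integral_le h1 h2
  exact this.continuous

end Stmt8Aux

/-- **Proposition 2.** For real `θ` small, `λ(θ) > 0`; moreover the
eigenvector and eigenform can be renormalized as `ṽ(z) = ⟨φ(z),𝟙⟩ v(z)`,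
`φ̃(z) = ⟨φ(z),𝟙⟩⁻¹ φ(z)`, staying holomorphic and satisfying the conclusions of
Proposition 1, with `ṽ(θ) ≥ 0` and `φ̃(θ)` a positive linear functional for real `θ`. -/
theorem stmt_8
    {X : Type*} [MeasurableSpace X] (m : Measure X) [IsProbabilityMeasure m]
    (T : X → X) (hT : Measurable T)
    (hns : ∀ A : Set X, MeasurableSet A → m A = 0 → m (T ⁻¹' A) = 0)
    -- B is a complex Banach space continuously embedded in L¹(m)
    {B : Type*} [NormedAddCommGroup B] [NormedSpace ℂ B] [CompleteSpace B]
    (ι : B →L[ℂ] Lp ℂ 1 m) (hι : Function.Injective ι)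
    -- constant functions lie in B
    (oneB : B) (honeB : ∀ᵐ x ∂m, (ι oneB : X → ℂ) x = 1)
    -- B is a Banach algebra : mulB is the pointwise multiplication, a continuous
    -- bilinear map (hence ∃ C > 0, ‖f*g‖_B ≤ C ‖f‖_B ‖g‖_B with C = ‖mulB‖)
    (mulB : B →L[ℂ] B →L[ℂ] B)
    (hmulB : ∀ f g : B, ∀ᵐ x ∂m,
        (ι (mulB f g) : X → ℂ) x = (ι f : X → ℂ) x * (ι g : X → ℂ) x)
    -- B is a complex Banach lattice : stable under conjugation and modulus
    (conjB : B → B)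
    (hconjB : ∀ f : B, ∀ᵐ x ∂m, (ι (conjB f) : X → ℂ) x = starRingEnd ℂ ((ι f : X → ℂ) x))
    (absB : B → B)
    (habsB : ∀ f : B, ∀ᵐ x ∂m,
        (ι (absB f) : X → ℂ) x = ((‖(ι f : X → ℂ) x‖ : ℝ) : ℂ))
    -- P(B) ⊂ B and P restricted to B is bounded : PB is the restriction to B of the
    -- Perron-Frobenius operator P f = d m_f / dm, m_f (A) = ∫_{T⁻¹A} f dm
    (PB : B →L[ℂ] B)
    (hPB : ∀ (f : B) (A : Set X), MeasurableSet A →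
        ∫ x in A, (ι (PB f) : X → ℂ) x ∂m = ∫ x in T ⁻¹' A, (ι f : X → ℂ) x ∂m)
    -- the spectral radius of P on B is 1
    (hrad : spectralRadius ℂ (PB : B →L[ℂ] B) = 1)
    -- spectral gap : 1 is a simple eigenvalue of P on B and the only eigenvalue of
    -- modulus 1, so P f = ⟨m,f⟩ v + Q f with v the invariant density and Q of
    -- spectral radius < 1, Q v = 0, ⟨m, Q f⟩ = 0
    (v : B) (hv0 : ∀ᵐ x ∂m, 0 ≤ ((ι v : X → ℂ) x).re ∧ ((ι v : X → ℂ) x).im = 0)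
    (hv1 : ∫ x, (ι v : X → ℂ) x ∂m = 1) (hvfix : PB v = v)
    (Q : B →L[ℂ] B) (hQrad : spectralRadius ℂ (Q : B →L[ℂ] B) < 1)
    (hQv : Q v = 0) (hQm : ∀ f : B, ∫ x, (ι (Q f) : X → ℂ) x ∂m = 0)
    (hdecomp : ∀ f : B, PB f = (∫ x, (ι f : X → ℂ) x ∂m) • v + Q f)
    -- μ = v · m is the unique T-invariant a.c.i.p. with density in B
    (μ : Measure X)
    (hμ : μ = m.withDensity fun x => ENNReal.ofReal ((ι v : X → ℂ) x).re)
    -- φ ∈ B is a bounded real-valued observable with ∫ φ dμ = 0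
    (φ : B) (hφreal : ∀ᵐ x ∂m, ((ι φ : X → ℂ) x).im = 0)
    (hφbdd : ∃ K : ℝ, ∀ᵐ x ∂m, ‖(ι φ : X → ℂ) x‖ ≤ K)
    (hφmean : ∫ x, ((ι φ : X → ℂ) x).re ∂μ = 0)
    -- E z is the element of B representing e^{zφ} (cf. Statement 6)
    (E : ℂ → B)
    (hE : ∀ z : ℂ, ∀ᵐ x ∂m, (ι (E z) : X → ℂ) x = Complex.exp (z * (ι φ : X → ℂ) x))
    -- data given by Proposition 1 : perturbed spectral decomposition of P_z f = P(e^{zφ} f)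
    (θ₀ : ℝ) (hθ₀ : 0 < θ₀) (C : ℝ) (hC : 0 < C) (η₁ η₂ : ℝ) (hη₁ : 0 < η₁) (hη₂ : 0 < η₂)
    (lam : ℂ → ℂ) (vf : ℂ → B) (pf : ℂ → (B →L[ℂ] ℂ)) (Qf : ℂ → (B →L[ℂ] B))
    (hlamhol : DifferentiableOn ℂ lam (Metric.ball 0 θ₀))
    (hvfhol : DifferentiableOn ℂ vf (Metric.ball 0 θ₀))
    (hpfhol : DifferentiableOn ℂ pf (Metric.ball 0 θ₀))
    (hQfhol : DifferentiableOn ℂ Qf (Metric.ball 0 θ₀))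
    (hlam0 : lam 0 = 1) (hvf0 : vf 0 = v)
    (hpf0 : ∀ f : B, pf 0 f = ∫ x, (ι f : X → ℂ) x ∂m) (hQf0 : Qf 0 = Q)
    (hPz : ∀ z ∈ Metric.ball (0 : ℂ) θ₀, ∀ f : B,
        PB (mulB (E z) f) = (lam z * pf z f) • vf z + Qf z f)
    (hnorml : ∀ z ∈ Metric.ball (0 : ℂ) θ₀, pf z (vf z) = 1)
    (hQfv : ∀ z ∈ Metric.ball (0 : ℂ) θ₀, Qf z (vf z) = 0)
    (hpfQf : ∀ z ∈ Metric.ball (0 : ℂ) θ₀, (pf z).comp (Qf z) = 0)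
    (hlamlb : ∀ z ∈ Metric.ball (0 : ℂ) θ₀, 1 - η₁ < ‖lam z‖)
    (hQfn : ∀ z ∈ Metric.ball (0 : ℂ) θ₀, ∀ n : ℕ, ‖(Qf z) ^ n‖ ≤ C * (1 - η₁ - η₂) ^ n)
    :
    ∃ θ₁ : ℝ, 0 < θ₁ ∧ θ₁ < θ₀ ∧
      -- λ(θ) > 0 for real θ, |θ| < θ₁
      (∀ θ : ℝ, |θ| < θ₁ → 0 < (lam (θ : ℂ)).re ∧ (lam (θ : ℂ)).im = 0) ∧
      -- ⟨φ(z), 𝟙⟩ ≠ 0 on the smaller disc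
      (∀ z ∈ Metric.ball (0 : ℂ) θ₁, pf z oneB ≠ 0) ∧
      -- ṽ and φ̃ are holomorphic
      DifferentiableOn ℂ (fun z => pf z oneB • vf z) (Metric.ball 0 θ₁) ∧
      DifferentiableOn ℂ (fun z => (pf z oneB)⁻¹ • pf z) (Metric.ball 0 θ₁) ∧
      -- ṽ and φ̃ satisfy the conclusions of Proposition 1
      (∀ z ∈ Metric.ball (0 : ℂ) θ₁,
        (∀ f : B, PB (mulB (E z) f) =
            (lam z * ((pf z oneB)⁻¹ • pf z) f) • (pf z oneB • vf z) + Qf z f) ∧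
        ((pf z oneB)⁻¹ • pf z) (pf z oneB • vf z) = 1 ∧
        Qf z (pf z oneB • vf z) = 0 ∧
        ((pf z oneB)⁻¹ • pf z).comp (Qf z) = 0) ∧
      -- positivity for real θ, |θ| < θ₁ : ṽ(θ) ≥ 0 m-a.e. ...
      (∀ θ : ℝ, |θ| < θ₁ →
        (∀ᵐ x ∂m, 0 ≤ ((ι (pf (θ : ℂ) oneB • vf (θ : ℂ)) : X → ℂ) x).re ∧
            ((ι (pf (θ : ℂ) oneB • vf (θ : ℂ)) : X → ℂ) x).im = 0) ∧
        -- ... and φ̃(θ) is a positive linear functional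
        (∀ f : B, (∀ᵐ x ∂m, 0 ≤ ((ι f : X → ℂ) x).re ∧ ((ι f : X → ℂ) x).im = 0) →
            0 ≤ (((pf (θ : ℂ) oneB)⁻¹ • pf (θ : ℂ)) f).re ∧
              (((pf (θ : ℂ) oneB)⁻¹ • pf (θ : ℂ)) f).im = 0)) := by
  classical
  -- membership helper
  have hmem : ∀ (t : ℝ) (R : ℝ), |t| < R → (t : ℂ) ∈ Metric.ball (0:ℂ) R := by
    intro t R h
    simpa [Metric.mem_ball, Complex.dist_eq, Complex.norm_real] using h
  have hball0 : (0:ℂ) ∈ Metric.ball (0:ℂ) θ₀ := by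
    simpa [Metric.mem_ball] using hθ₀
  set r : ℝ := 1 - η₁ - η₂ with hrdef
  have hr0 : (0:ℝ) ≤ r := by
    have h1 := hQfn 0 hball0 1
    have h2 : (0:ℝ) ≤ ‖(Qf 0) ^ 1‖ := norm_nonneg _
    nlinarith
  have hρr : r < 1 - η₁ := by rw [hrdef]; linarith
  have hρ0 : (0:ℝ) < 1 - η₁ := lt_of_le_of_lt hr0 hρr
  -- decomposition of iterates
  have hD : ∀ z ∈ Metric.ball (0:ℂ) θ₀, ∀ (n : ℕ) (f : B),
      ((PB.comp (mulB (E z))) ^ (n+1)) f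
        = ((lam z) ^ (n+1) * pf z f) • vf z + ((Qf z) ^ (n+1)) f := by
    intro z hz n
    induction n with
    | zero =>
      intro f
      simpa [pow_one] using hPz z hz f
    | succ n ih =>
      intro f
      have hstep : ((PB.comp (mulB (E z))) ^ (n+1+1)) f
          = (PB.comp (mulB (E z))) (((PB.comp (mulB (E z))) ^ (n+1)) f) := by
        rw [pow_succ']
        simp [ContinuousLinearMap.mul_apply]
      have hQ0 : pf z (((Qf z) ^ (n+1)) f) = 0 := by
        have h1 : ((Qf z) ^ (n+1)) f = Qf z (((Qf z) ^ n) f) := by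
          rw [pow_succ']
          simp [ContinuousLinearMap.mul_apply]
        rw [h1]
        have h2 := DFunLike.congr_fun (hpfQf z hz) (((Qf z) ^ n) f)
        simpa using h2
      have h3 : PB (mulB (E z) (vf z)) = lam z • vf z := by
        have h := hPz z hz (vf z)
        rw [hnorml z hz, hQfv z hz] at h
        simpa using h
      have h4 : PB (mulB (E z) (((Qf z) ^ (n+1)) f)) = ((Qf z) ^ (n+1+1)) f := by
        have h := hPz z hz (((Qf z) ^ (n+1)) f)
        rw [hQ0] at h
        simp only [mul_zero, zero_smul, zero_add] at h
        rw [h, pow_succ' (Qf z) (n+1)]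
        simp [ContinuousLinearMap.mul_apply]
      rw [hstep, ContinuousLinearMap.comp_apply, ih f, map_add, _root_.map_smul, map_add,
        _root_.map_smul, h3, h4, smul_smul]
      congr 1
      ring

  -- positivity of iterates for real parameter
  have hPosIter : ∀ θ : ℝ, (θ:ℂ) ∈ Metric.ball (0:ℂ) θ₀ → ∀ f : B, Stmt8Aux.Pos ι f →
      ∀ n : ℕ, Stmt8Aux.Pos ι (((PB.comp (mulB (E (θ:ℂ)))) ^ n) f) := by
    intro θ hθ f hf n
    induction n with
    | zero => simpa using hf
    | succ n ih =>
      have hstep : ((PB.comp (mulB (E (θ:ℂ)))) ^ (n+1)) f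
          = PB (mulB (E (θ:ℂ)) (((PB.comp (mulB (E (θ:ℂ)))) ^ n) f)) := by
        rw [pow_succ']
        simp [ContinuousLinearMap.mul_apply]
      rw [hstep]
      apply Stmt8Aux.pos_PB T ι PB hPB
      refine Stmt8Aux.pos_mul ι mulB hmulB ?_ ih
      filter_upwards [hE (θ:ℂ), hφreal] with x h1 h2
      rw [h1]
      have h3 : (θ:ℂ) * (ι φ : X → ℂ) x = ((θ * ((ι φ : X → ℂ) x).re : ℝ) : ℂ) := by
        apply Complex.ext <;> simp [Complex.mul_re, Complex.mul_im, h2]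
      rw [h3, ← Complex.ofReal_exp]
      constructor
      · rw [Complex.ofReal_re]
        exact (Real.exp_pos _).le
      · rw [Complex.ofReal_im]

  -- choice of θ₁
  obtain ⟨θ₁, hθ₁0, hθ₁θ₀, hGsmall, hasmall⟩ :
      ∃ θ₁ : ℝ, 0 < θ₁ ∧ θ₁ < θ₀ ∧
        (∀ z ∈ Metric.ball (0:ℂ) θ₁, ‖pf z oneB - 1‖ < 1/2) ∧
        (∀ z ∈ Metric.ball (0:ℂ) θ₁,
          ‖pf z oneB * (∫ x, (ι (vf z) : X → ℂ) x ∂m) - 1‖ < 1/2) := by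
    have hJcont := Stmt8Aux.integral_continuous (m := m)
    have hballmem : Metric.ball (0:ℂ) θ₀ ∈ 𝓝 (0:ℂ) := Metric.isOpen_ball.mem_nhds hball0
    have hpfc : ContinuousAt (fun z => pf z oneB) 0 :=
      (hpfhol.clm_apply (differentiableOn_const _)).continuousOn.continuousAt hballmem
    have hvfc : ContinuousAt vf 0 := hvfhol.continuousOn.continuousAt hballmem
    have hIc : ContinuousAt (fun z => ∫ x, (ι (vf z) : X → ℂ) x ∂m) 0 :=
      ((hJcont.comp ι.continuous).continuousAt).comp hvfc
    have hac : ContinuousAt (fun z => pf z oneB * ∫ x, (ι (vf z) : X → ℂ) x ∂m) 0 :=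
      hpfc.mul hIc
    have hpf0one : pf 0 oneB = 1 := by
      rw [hpf0 oneB, integral_congr_ae honeB]
      simp
    have hI0 : (∫ x, (ι (vf 0) : X → ℂ) x ∂m) = 1 := by rw [hvf0]; exact hv1
    have hev : ∀ᶠ z in 𝓝 (0:ℂ), ‖pf z oneB - 1‖ < 1/2 ∧
        ‖pf z oneB * (∫ x, (ι (vf z) : X → ℂ) x ∂m) - 1‖ < 1/2 := by
      have h1 : Tendsto (fun z => pf z oneB) (𝓝 0) (𝓝 1) := by
        simpa [hpf0one] using hpfc.tendsto
      have h2 : Tendsto (fun z => pf z oneB * ∫ x, (ι (vf z) : X → ℂ) x ∂m) (𝓝 0) (𝓝 1) := by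
        simpa [hpf0one, hI0] using hac.tendsto
      have e1 := (Metric.tendsto_nhds.mp h1) (1/2) (by norm_num)
      have e2 := (Metric.tendsto_nhds.mp h2) (1/2) (by norm_num)
      filter_upwards [e1, e2] with z z1 z2
      rw [Complex.dist_eq] at z1 z2
      exact ⟨z1, z2⟩
    rw [Metric.eventually_nhds_iff] at hev
    obtain ⟨ε, hε0, hev⟩ := hev
    refine ⟨min ε θ₀ / 2, by positivity, ?_, ?_, ?_⟩
    · have : min ε θ₀ ≤ θ₀ := min_le_right _ _
      linarith
    · intro z hz
      have hd : dist z (0:ℂ) < ε := by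
        have h1 := Metric.mem_ball.mp hz
        have h2 : min ε θ₀ ≤ ε := min_le_left _ _
        linarith
      exact (hev hd).1
    · intro z hz
      have hd : dist z (0:ℂ) < ε := by
        have h1 := Metric.mem_ball.mp hz
        have h2 : min ε θ₀ ≤ ε := min_le_left _ _
        linarith
      exact (hev hd).2

  have hsub : Metric.ball (0:ℂ) θ₁ ⊆ Metric.ball (0:ℂ) θ₀ :=
    Metric.ball_subset_ball hθ₁θ₀.le
  have hpfne : ∀ z ∈ Metric.ball (0:ℂ) θ₁, pf z oneB ≠ 0 := by
    intro z hz h0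
    have := hGsmall z hz
    rw [h0] at this
    norm_num at this
  -- positivity of lam for real θ
  have hlamPos : ∀ θ : ℝ, |θ| < θ₁ → 0 < (lam (θ:ℂ)).re ∧ (lam (θ:ℂ)).im = 0 := by
    intro θ hθ
    have hz1 : (θ:ℂ) ∈ Metric.ball (0:ℂ) θ₁ := hmem θ θ₁ hθ
    have hz0 : (θ:ℂ) ∈ Metric.ball (0:ℂ) θ₀ := hsub hz1
    set L : ℂ := lam (θ:ℂ) with hLdef
    set P : ℝ := ‖L‖ with hPdef
    have hPρ : 1 - η₁ < P := by
      have h := hlamlb _ hz0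
      exact h
    have hP0 : (0:ℝ) < P := lt_trans hρ0 hPρ
    have hrP : r < P := lt_trans hρr hPρ
    set a : ℂ := pf (θ:ℂ) oneB * (∫ x, (ι (vf (θ:ℂ)) : X → ℂ) x ∂m) with hadef
    set A : ℝ := ‖a‖ with hAdef
    have haclose : ‖a - 1‖ < 1/2 := by
      have h := hasmall _ hz1
      rw [← hadef] at h
      exact h
    have hA12 : 1/2 < A ∧ A < 2 := by
      have h := abs_norm_sub_norm_le a (1:ℂ)
      rw [norm_one, ← hAdef, abs_le] at h
      constructor <;> linarith [h.1, h.2]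
    obtain ⟨hA1, hA2⟩ := hA12
    have hA0 : (0:ℝ) < A := by linarith
    set K : ℝ := ‖ι‖ * (C * ‖oneB‖) + 1 with hKdef
    have hK0 : (0:ℝ) < K := by positivity
    have honePos := Stmt8Aux.pos_one ι oneB honeB
    have key : ∀ n : ℕ, ∃ un en : ℂ, (0 ≤ un.re ∧ un.im = 0) ∧ ‖en‖ ≤ K * r^(n+1) ∧
        un = L^(n+1) * a + en := by
      intro n
      refine ⟨∫ x, (ι (((PB.comp (mulB (E (θ:ℂ)))) ^ (n+1)) oneB) : X → ℂ) x ∂m,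
        ∫ x, (ι (((Qf (θ:ℂ)) ^ (n+1)) oneB) : X → ℂ) x ∂m, ?_, ?_, ?_⟩
      · exact Stmt8Aux.integral_of_pos ι (hPosIter θ hz0 oneB honePos (n+1))
      · have h1 := Stmt8Aux.norm_integral_le' ι (((Qf (θ:ℂ)) ^ (n+1)) oneB)
        have h2 : ‖((Qf (θ:ℂ)) ^ (n+1)) oneB‖ ≤ (C * r^(n+1)) * ‖oneB‖ := by
          calc ‖((Qf (θ:ℂ)) ^ (n+1)) oneB‖ ≤ ‖(Qf (θ:ℂ)) ^ (n+1)‖ * ‖oneB‖ :=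
                ContinuousLinearMap.le_opNorm _ _
            _ ≤ (C * r^(n+1)) * ‖oneB‖ :=
                mul_le_mul_of_nonneg_right (hQfn (θ:ℂ) hz0 (n+1)) (norm_nonneg _)
        have h3 : (0:ℝ) ≤ r^(n+1) := pow_nonneg hr0 _
        have h4 : (0:ℝ) ≤ ‖ι‖ := norm_nonneg _
        have h5 : (0:ℝ) ≤ ‖oneB‖ := norm_nonneg _
        refine le_trans h1 (le_trans (mul_le_mul_of_nonneg_left h2 h4) ?_)
        rw [hKdef]
        nlinarith
      · have h1 := hD (θ:ℂ) hz0 n oneB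
        rw [h1, Stmt8Aux.integral_iota_add, Stmt8Aux.integral_iota_smul, hLdef, hadef]
        ring
    choose u e hu he hue using key
    have habs_z : ∀ k : ℕ, ‖L^(k+1) * a‖ = P^(k+1) * A := by
      intro k
      rw [norm_mul, norm_pow, hPdef, hAdef]
    have hub : ∀ k : ℕ, ‖u k‖ ≤ P^(k+1) * A + K * r^(k+1) := by
      intro k
      rw [hue k]
      calc ‖L^(k+1) * a + e k‖ ≤ ‖L^(k+1) * a‖ + ‖e k‖ := norm_add_le _ _
        _ ≤ P^(k+1) * A + K * r^(k+1) := by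
            rw [habs_z k]
            linarith [he k]
    have hIm : ∀ n : ℕ, |L.im| ≤ (3*K*(A+K)*r/(A^2)) * (r/P)^n := by
      intro n
      have hzrec : L^(n+1+1) * a = L * (L^(n+1) * a) := by ring
      have hkey : L.im * Complex.normSq (L^(n+1) * a)
          = ((L^(n+1+1) * a) * (starRingEnd ℂ) (L^(n+1) * a)).im := by
        rw [hzrec, mul_assoc, Complex.mul_conj, Complex.mul_im, Complex.ofReal_re,
          Complex.ofReal_im]
        ring
      have hz1e : L^(n+1) * a = u n - e n := by rw [hue n]; ring
      have hz2e : L^(n+1+1) * a = u (n+1) - e (n+1) := by rw [hue (n+1)]; ring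
      have hreal : (u (n+1) * (starRingEnd ℂ) (u n)).im = 0 := by
        rw [Complex.mul_im]
        simp [Complex.conj_im, Complex.conj_re, (hu n).2, (hu (n+1)).2]
      have hdiff : (L^(n+1+1) * a) * (starRingEnd ℂ) (L^(n+1) * a) - u (n+1) * (starRingEnd ℂ) (u n)
          = -(u (n+1) * (starRingEnd ℂ) (e n)) - e (n+1) * (starRingEnd ℂ) (u n)
            + e (n+1) * (starRingEnd ℂ) (e n) := by
        rw [hz1e, hz2e, map_sub]
        ring
      have htri : ‖(L^(n+1+1) * a) * (starRingEnd ℂ) (L^(n+1) * a) - u (n+1) * (starRingEnd ℂ) (u n)‖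
          ≤ ‖u (n+1)‖ * ‖e n‖ + ‖e (n+1)‖ * ‖u n‖ + ‖e (n+1)‖ * ‖e n‖ := by
        rw [hdiff]
        calc ‖-(u (n+1) * (starRingEnd ℂ) (e n)) - e (n+1) * (starRingEnd ℂ) (u n)
              + e (n+1) * (starRingEnd ℂ) (e n)‖
            ≤ ‖-(u (n+1) * (starRingEnd ℂ) (e n)) - e (n+1) * (starRingEnd ℂ) (u n)‖
              + ‖e (n+1) * (starRingEnd ℂ) (e n)‖ := norm_add_le _ _
          _ ≤ (‖-(u (n+1) * (starRingEnd ℂ) (e n))‖ + ‖e (n+1) * (starRingEnd ℂ) (u n)‖)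
              + ‖e (n+1) * (starRingEnd ℂ) (e n)‖ := by
              have h := norm_sub_le (-(u (n+1) * (starRingEnd ℂ) (e n)))
                (e (n+1) * (starRingEnd ℂ) (u n))
              linarith
          _ = ‖u (n+1)‖ * ‖e n‖ + ‖e (n+1)‖ * ‖u n‖ + ‖e (n+1)‖ * ‖e n‖ := by
              simp [norm_mul, RCLike.norm_conj]
      have hstep1 : |L.im| * (P^(n+1) * A)^2
          ≤ ‖u (n+1)‖ * ‖e n‖ + ‖e (n+1)‖ * ‖u n‖ + ‖e (n+1)‖ * ‖e n‖ := by
        have h1 : L.im * Complex.normSq (L^(n+1) * a)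
            = ((L^(n+1+1) * a) * (starRingEnd ℂ) (L^(n+1) * a)
                - u (n+1) * (starRingEnd ℂ) (u n)).im := by
          rw [Complex.sub_im, hreal, sub_zero, hkey]
        have h2 : Complex.normSq (L^(n+1) * a) = (P^(n+1) * A)^2 := by
          rw [Complex.normSq_eq_norm_sq, habs_z n]
        have h3 : |L.im| * (P^(n+1) * A)^2 = |L.im * Complex.normSq (L^(n+1) * a)| := by
          rw [abs_mul, h2, abs_of_nonneg (by positivity : (0:ℝ) ≤ (P^(n+1) * A)^2)]
        rw [h3, h1]
        calc |((L^(n+1+1) * a) * (starRingEnd ℂ) (L^(n+1) * a)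
                - u (n+1) * (starRingEnd ℂ) (u n)).im|
            ≤ ‖(L^(n+1+1) * a) * (starRingEnd ℂ) (L^(n+1) * a)
                - u (n+1) * (starRingEnd ℂ) (u n)‖ := Complex.abs_im_le_norm _
          _ = ‖(L^(n+1+1) * a) * (starRingEnd ℂ) (L^(n+1) * a)
                - u (n+1) * (starRingEnd ℂ) (u n)‖ := rfl
          _ ≤ _ := htri
      have hq1 : r^(n+1) ≤ P^(n+1) := pow_le_pow_left₀ hr0 hrP.le _
      have hrq : r * r^(n+1) ≤ P * P^(n+1) :=
        mul_le_mul hrP.le hq1 (pow_nonneg hr0 _) hP0.le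
      have hp1 : (0:ℝ) ≤ P^(n+1) := by positivity
      have hq0 : (0:ℝ) ≤ r^(n+1) := pow_nonneg hr0 _
      have hpow2 : P^(n+1+1) = P * P^(n+1) := by ring
      have hrow2 : r^(n+1+1) = r * r^(n+1) := by ring
      have hb1 := hub n
      have hb2 : ‖u (n+1)‖ ≤ P * P^(n+1) * A + K * (r * r^(n+1)) := by
        have h := hub (n+1)
        rw [hpow2, hrow2] at h
        linarith
      have hc1 := he n
      have hc2 : ‖e (n+1)‖ ≤ K * (r * r^(n+1)) := by
        have h := he (n+1)
        rw [hrow2] at h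
        linarith
      have hnn1 : (0:ℝ) ≤ ‖e n‖ := norm_nonneg _
      have hnn2 : (0:ℝ) ≤ ‖e (n+1)‖ := norm_nonneg _
      have hnn3 : (0:ℝ) ≤ ‖u n‖ := norm_nonneg _
      have hnn4 : (0:ℝ) ≤ ‖u (n+1)‖ := norm_nonneg _
      have hintKK : K*K*(r*r^(n+1)*r^(n+1)) ≤ K*K*(P*P^(n+1)*r^(n+1)) := by
        have hX : (r*r^(n+1))*r^(n+1) ≤ (P*P^(n+1))*r^(n+1) :=
          mul_le_mul_of_nonneg_right hrq hq0
        have := mul_le_mul_of_nonneg_left hX (by positivity : (0:ℝ) ≤ K*K)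
        linarith [this]
      have ht1 : ‖u (n+1)‖ * ‖e n‖ ≤ K*(A+K) * (P * P^(n+1)) * r^(n+1) := by
        have h := mul_le_mul hb2 hc1 hnn1 (by positivity)
        linarith [h, hintKK]
      have ht2 : ‖e (n+1)‖ * ‖u n‖ ≤ K*(A+K) * (P * P^(n+1)) * r^(n+1) := by
        have h := mul_le_mul hc2 hb1 hnn3 (by positivity)
        have hint2 : K*r^(n+1)*P^(n+1)*A*r ≤ K*r^(n+1)*P^(n+1)*A*P :=
          mul_le_mul_of_nonneg_left hrP.le (by positivity)
        linarith [h, hintKK, hint2]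
      have ht3 : ‖e (n+1)‖ * ‖e n‖ ≤ K*(A+K) * (P * P^(n+1)) * r^(n+1) := by
        have h := mul_le_mul hc2 hc1 hnn1 (by positivity)
        have hint3 : (0:ℝ) ≤ K*A*(P*P^(n+1))*r^(n+1) := by positivity
        linarith [h, hintKK, hint3]
      have hstep3 : (3*K*(A+K)*r/(A^2)) * (r/P)^n * (P^(n+1) * A)^2
          = 3 * (K*(A+K) * (P * P^(n+1)) * r^(n+1)) := by
        rw [div_pow]
        field_simp
        ring
      have hS0 : (0:ℝ) < (P^(n+1) * A)^2 := by positivity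
      have h9 : |L.im| * (P^(n+1) * A)^2
          ≤ (3*K*(A+K)*r/(A^2)) * (r/P)^n * (P^(n+1) * A)^2 := by
        rw [hstep3]
        linarith [hstep1, ht1, ht2, ht3]
      exact le_of_mul_le_mul_right h9 hS0
    have himzero : L.im = 0 := by
      have ht0 : (0:ℝ) ≤ r/P := div_nonneg hr0 hP0.le
      have ht1 : r/P < 1 := (div_lt_one hP0).2 hrP
      have htend : Tendsto (fun n : ℕ => (3*K*(A+K)*r/(A^2)) * (r/P)^n) atTop (𝓝 0) := by
        simpa using (tendsto_pow_atTop_nhds_zero_of_lt_one ht0 ht1).const_mul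
          (3*K*(A+K)*r/(A^2))
      exact abs_eq_zero.mp (le_antisymm (ge_of_tendsto' htend hIm) (abs_nonneg _))
    rcases lt_trichotomy L.re 0 with hneg | hzero | hpos
    · exfalso
      have hPL : P = -L.re := by
        have h1 : Complex.normSq L = L.re * L.re := by
          rw [Complex.normSq_apply, himzero]
          ring
        have h2 : ‖L‖ = |L.re| := by
          rw [Complex.norm_def, h1, Real.sqrt_mul_self_eq_abs]
        rw [hPdef, h2, abs_of_neg hneg]
      have hlow : ∀ k : ℕ, -(K * r^(k+1)) ≤ (L^(k+1) * a).re := by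
        intro k
        have h0 : L^(k+1) * a = u k - e k := by rw [hue k]; ring
        have h1 : (L^(k+1) * a).re = (u k).re - (e k).re := by rw [h0, Complex.sub_re]
        have h2 : |(e k).re| ≤ K * r^(k+1) := by
          calc |(e k).re| ≤ ‖e k‖ := Complex.abs_re_le_norm _
            _ = ‖e k‖ := rfl
            _ ≤ K * r^(k+1) := he k
        rw [abs_le] at h2
        have h3 := (hu k).1
        rw [h1]
        linarith [h2.2]
      have hupper : ∀ k : ℕ, (L^(k+1) * a).re ≤ K * r^(k+1) := by
        intro k
        have hrec : (L^(k+1+1) * a).re = L.re * (L^(k+1) * a).re := by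
          have h0 : L^(k+1+1) * a = L * (L^(k+1) * a) := by ring
          rw [h0, Complex.mul_re, himzero]
          ring
        have h1 := hlow (k+1)
        rw [hrec] at h1
        have h2 : r^(k+1+1) = r * r^(k+1) := by ring
        rw [h2] at h1
        have h3 : (0:ℝ) ≤ r^(k+1) := pow_nonneg hr0 _
        have h4 : L.re = -P := by linarith
        rw [h4] at h1
        have h5 : (K*r^(k+1))*r ≤ (K*r^(k+1))*P :=
          mul_le_mul_of_nonneg_left hrP.le (mul_nonneg hK0.le h3)
        have h6 : P * (L^(k+1) * a).re ≤ P * (K * r^(k+1)) := by linarith [h1, h5]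
        exact (mul_le_mul_iff_right₀ hP0).mp h6
      have himz : ∀ k : ℕ, |(L^(k+1) * a).im| ≤ K * r^(k+1) := by
        intro k
        have h0 : L^(k+1) * a = u k - e k := by rw [hue k]; ring
        have h1 : (L^(k+1) * a).im = -(e k).im := by
          rw [h0, Complex.sub_im, (hu k).2]
          ring
        rw [h1, abs_neg]
        calc |(e k).im| ≤ ‖e k‖ := Complex.abs_im_le_norm _
          _ = ‖e k‖ := rfl
          _ ≤ K * r^(k+1) := he k
      have hcontr : ∀ k : ℕ, P^(k+1) * A ≤ 2*(K * r^(k+1)) := by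
        intro k
        have h0 := habs_z k
        have h1 : ‖L^(k+1) * a‖ ≤ |(L^(k+1) * a).re| + |(L^(k+1) * a).im| :=
          Complex.norm_le_abs_re_add_abs_im _
        rw [h0] at h1
        have h2 : |(L^(k+1) * a).re| ≤ K * r^(k+1) := abs_le.2 ⟨by linarith [hlow k], hupper k⟩
        linarith [himz k]
      have ht0 : (0:ℝ) ≤ r/P := div_nonneg hr0 hP0.le
      have ht1 : r/P < 1 := (div_lt_one hP0).2 hrP
      have htend : Tendsto (fun n : ℕ => (r/P)^n) atTop (𝓝 0) :=
        tendsto_pow_atTop_nhds_zero_of_lt_one ht0 ht1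
      have hev2 : ∀ᶠ n in atTop, (r/P)^n < A/(4*K) :=
        htend.eventually (gt_mem_nhds (by positivity))
      obtain ⟨n, hn⟩ := hev2.exists
      have h1 := hcontr n
      have h2 : r^(n+1) = (r/P)^(n+1) * P^(n+1) := by
        rw [div_pow]
        field_simp
      have h3 : (r/P)^(n+1) ≤ (r/P)^n := pow_le_pow_of_le_one ht0 ht1.le (by omega)
      have hp1 : (0:ℝ) < P^(n+1) := pow_pos hP0 _
      have h4 : P^(n+1) * A ≤ 2*K*((r/P)^n * P^(n+1)) := by
        rw [h2] at h1
        have hint : (r/P)^(n+1)*P^(n+1) ≤ (r/P)^n*P^(n+1) :=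
          mul_le_mul_of_nonneg_right h3 hp1.le
        have hint2 : (2*K)*((r/P)^(n+1)*P^(n+1)) ≤ (2*K)*((r/P)^n*P^(n+1)) :=
          mul_le_mul_of_nonneg_left hint (by positivity)
        linarith [h1, hint2]
      have h5 : 2*K*((r/P)^n * P^(n+1)) < 2*K*((A/(4*K)) * P^(n+1)) := by
        refine mul_lt_mul_of_pos_left ?_ (by positivity)
        exact mul_lt_mul_of_pos_right hn hp1
      have h6 : 2*K*((A/(4*K)) * P^(n+1)) = A*P^(n+1)/2 := by
        field_simp
        ring
      linarith [h4, h5, h6, mul_pos hA0 hp1]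
    · exfalso
      have hL0 : L = 0 := Complex.ext (by simpa using hzero) (by simpa using himzero)
      have hP00 : P = 0 := by rw [hPdef, hL0, norm_zero]
      linarith
    · exact ⟨hpos, himzero⟩

  -- main positivity
  have hPosMain : ∀ θ : ℝ, |θ| < θ₁ → ∀ f : B, Stmt8Aux.Pos ι f →
      Stmt8Aux.Pos ι ((pf (θ:ℂ) f) • vf (θ:ℂ)) := by
    intro θ hθ f hf
    have hz1 : (θ:ℂ) ∈ Metric.ball (0:ℂ) θ₁ := hmem θ θ₁ hθ
    have hz0 : (θ:ℂ) ∈ Metric.ball (0:ℂ) θ₀ := hsub hz1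
    obtain ⟨hLre, hLim⟩ := hlamPos θ hθ
    set lr : ℝ := (lam (θ:ℂ)).re with hlrdef
    have hLeq : lam (θ:ℂ) = ((lr : ℝ) : ℂ) := Complex.ext rfl (by simpa using hLim)
    have hrlr : r < lr := by
      have h1 := hlamlb (θ:ℂ) hz0
      have h2 : ‖lam (θ:ℂ)‖ = lr := by
        rw [hLeq, Complex.norm_real, Real.norm_eq_abs, abs_of_pos hLre]
      rw [h2] at h1
      linarith
    have hlr0 : (0:ℝ) < lr := hLre
    set q : ℝ := r / lr with hqdef
    have hq0 : (0:ℝ) ≤ q := div_nonneg hr0 hlr0.le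
    have hq1 : q < 1 := (div_lt_one hlr0).2 hrlr
    refine Stmt8Aux.pos_of_approx ι ((pf (θ:ℂ) f) • vf (θ:ℂ))
      (fun n => (((lr ^ (n+1))⁻¹ : ℝ) : ℂ) • (((PB.comp (mulB (E (θ:ℂ)))) ^ (n+1)) f))
      (fun n => (C * ‖f‖) * q ^ (n+1)) ?_ ?_ ?_
    · intro n
      exact Stmt8Aux.pos_smul ι (hPosIter θ hz0 f hf (n+1)) (by positivity)
    · intro n
      beta_reduce
      have hDn := hD (θ:ℂ) hz0 n f
      have hLpow : (lam (θ:ℂ)) ^ (n+1) = ((lr ^ (n+1) : ℝ) : ℂ) := by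
        rw [hLeq]
        push_cast
        ring
      have hginv : (((lr ^ (n+1))⁻¹ : ℝ) : ℂ) * (lam (θ:ℂ)) ^ (n+1) = 1 := by
        rw [hLpow, ← Complex.ofReal_mul, inv_mul_cancel₀ (pow_pos hlr0 (n+1)).ne']
        simp
      have hgn : (((lr ^ (n+1))⁻¹ : ℝ) : ℂ) • (((PB.comp (mulB (E (θ:ℂ)))) ^ (n+1)) f)
          = (pf (θ:ℂ) f) • vf (θ:ℂ)
            + (((lr ^ (n+1))⁻¹ : ℝ) : ℂ) • (((Qf (θ:ℂ)) ^ (n+1)) f) := by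
        rw [hDn, smul_add, smul_smul, ← mul_assoc, hginv, one_mul]
      have hdiffeq : (pf (θ:ℂ) f) • vf (θ:ℂ)
          - ((pf (θ:ℂ) f) • vf (θ:ℂ) + (((lr ^ (n+1))⁻¹ : ℝ) : ℂ) • (((Qf (θ:ℂ)) ^ (n+1)) f))
          = -((((lr ^ (n+1))⁻¹ : ℝ) : ℂ) • (((Qf (θ:ℂ)) ^ (n+1)) f)) := by
        abel
      rw [hgn, hdiffeq, norm_neg, norm_smul]
      have h2 : ‖(((lr ^ (n+1))⁻¹ : ℝ) : ℂ)‖ = (lr ^ (n+1))⁻¹ := by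
        rw [Complex.norm_real]
        exact abs_of_nonneg (by positivity)
      rw [h2]
      have h3 : ‖((Qf (θ:ℂ)) ^ (n+1)) f‖ ≤ (C * r ^ (n+1)) * ‖f‖ := by
        calc ‖((Qf (θ:ℂ)) ^ (n+1)) f‖ ≤ ‖(Qf (θ:ℂ)) ^ (n+1)‖ * ‖f‖ :=
              ContinuousLinearMap.le_opNorm _ _
          _ ≤ (C * r ^ (n+1)) * ‖f‖ :=
              mul_le_mul_of_nonneg_right (hQfn (θ:ℂ) hz0 (n+1)) (norm_nonneg f)
      calc (lr ^ (n+1))⁻¹ * ‖((Qf (θ:ℂ)) ^ (n+1)) f‖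
          ≤ (lr ^ (n+1))⁻¹ * ((C * r ^ (n+1)) * ‖f‖) := by
            exact mul_le_mul_of_nonneg_left h3 (by positivity)
        _ = (C * ‖f‖) * q ^ (n+1) := by
            rw [hqdef, div_pow]
            field_simp
    · have h1 : Tendsto (fun n : ℕ => q ^ (n+1)) atTop (𝓝 0) :=
        (tendsto_pow_atTop_nhds_zero_of_lt_one hq0 hq1).comp (tendsto_add_atTop_nat 1)
      simpa using h1.const_mul (C * ‖f‖)

  -- assembly
  refine ⟨θ₁, hθ₁0, hθ₁θ₀, fun θ hθ => hlamPos θ hθ, hpfne, ?_, ?_, ?_, ?_⟩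
  · exact ((hpfhol.mono hsub).clm_apply (differentiableOn_const _)).smul (hvfhol.mono hsub)
  · exact (((hpfhol.mono hsub).clm_apply (differentiableOn_const _)).inv hpfne).smul
      (hpfhol.mono hsub)
  · intro z hz
    have hz0 : z ∈ Metric.ball (0:ℂ) θ₀ := hsub hz
    have hc : pf z oneB ≠ 0 := hpfne z hz
    refine ⟨?_, ?_, ?_, ?_⟩
    · intro f
      rw [hPz z hz0 f]
      congr 1
      rw [ContinuousLinearMap.smul_apply, smul_smul, smul_eq_mul]
      congr 1
      field_simp
    · rw [ContinuousLinearMap.smul_apply, _root_.map_smul, hnorml z hz0, smul_eq_mul,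
        smul_eq_mul]
      field_simp
    · rw [_root_.map_smul, hQfv z hz0, smul_zero]
    · rw [ContinuousLinearMap.smul_comp, hpfQf z hz0]
      ext g
      simp
  · intro θ hθ
    have hz1 : (θ:ℂ) ∈ Metric.ball (0:ℂ) θ₁ := hmem θ θ₁ hθ
    have hz0 : (θ:ℂ) ∈ Metric.ball (0:ℂ) θ₀ := hsub hz1
    have hc : pf (θ:ℂ) oneB ≠ 0 := hpfne _ hz1
    have honePos : Stmt8Aux.Pos ι oneB := Stmt8Aux.pos_one ι oneB honeB
    have hPosOne : Stmt8Aux.Pos ι ((pf (θ:ℂ) oneB) • vf (θ:ℂ)) := hPosMain θ hθ oneB honePos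
    refine ⟨hPosOne, ?_⟩
    intro f hf
    have hPosF : Stmt8Aux.Pos ι ((pf (θ:ℂ) f) • vf (θ:ℂ)) := hPosMain θ hθ f hf
    set I := ∫ x, (ι (vf (θ:ℂ)) : X → ℂ) x ∂m with hIdef
    have ht : 0 ≤ (pf (θ:ℂ) f * I).re ∧ (pf (θ:ℂ) f * I).im = 0 := by
      have := Stmt8Aux.integral_of_pos ι hPosF
      rwa [Stmt8Aux.integral_iota_smul] at this
    have hu : 0 ≤ (pf (θ:ℂ) oneB * I).re ∧ (pf (θ:ℂ) oneB * I).im = 0 := by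
      have := Stmt8Aux.integral_of_pos ι hPosOne
      rwa [Stmt8Aux.integral_iota_smul] at this
    have hIne : I ≠ 0 := by
      intro h0
      have h1 : ∫ x, (ι ((pf (θ:ℂ) oneB) • vf (θ:ℂ)) : X → ℂ) x ∂m = 0 := by
        rw [Stmt8Aux.integral_iota_smul, ← hIdef, h0, mul_zero]
      have h2 : (pf (θ:ℂ) oneB) • vf (θ:ℂ) = 0 :=
        Stmt8Aux.eq_zero_of_pos_integral_zero ι hι hPosOne h1
      rcases smul_eq_zero.mp h2 with h3 | h3
      · exact hc h3
      · have h4 := hnorml (θ:ℂ) hz0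
        rw [h3, map_zero] at h4
        exact one_ne_zero h4.symm
    have hune : pf (θ:ℂ) oneB * I ≠ 0 := mul_ne_zero hc hIne
    have hure : 0 < (pf (θ:ℂ) oneB * I).re := by
      rcases lt_or_eq_of_le hu.1 with h | h
      · exact h
      · exfalso
        exact hune (Complex.ext h.symm hu.2)
    have hval : ((pf (θ:ℂ) oneB)⁻¹ • pf (θ:ℂ)) f = (pf (θ:ℂ) f * I) / (pf (θ:ℂ) oneB * I) := by
      rw [ContinuousLinearMap.smul_apply, smul_eq_mul]
      field_simp
    rw [hval]
    exact Stmt8Aux.div_nonneg_complex ht.1 ht.2 hure hu.2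
end

section
/- (Proposition 3.) In the setting of Propositions 1 and 2, define Λ(θ) = log λ(θ) for real θ. There exists 0 < θ₂ < θ₁ such that for every real θ with |θ| < θ₂ and every f ∈ B with f ≥ 0 m-a.e. and ∫ f dm = 1, one has lim_{n→∞} (1/n) log ∫ e^{θ S_n} f dm = Λ(θ), where S_n = Σ_{k=0}^{n-1} φ∘T^k. -/
open MeasureTheory Filter Topology
open scoped ENNReal

private lemma ns_preimage {X : Type*} [MeasurableSpace X] (m : Measure X)
    (T : X → X)
    (hns : ∀ A : Set X, MeasurableSet A → m A = 0 → m (T ⁻¹' A) = 0)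
    {A : Set X} (hA : m A = 0) : m (T ⁻¹' A) = 0 := by
  have h1 : m (toMeasurable m A) = 0 := by rwa [measure_toMeasurable]
  exact measure_mono_null (Set.preimage_mono (subset_toMeasurable m A))
    (hns _ (measurableSet_toMeasurable m A) h1)

private lemma ns_ae_iterate {X : Type*} [MeasurableSpace X] (m : Measure X)
    (T : X → X)
    (hns : ∀ A : Set X, MeasurableSet A → m A = 0 → m (T ⁻¹' A) = 0)
    {P : X → Prop} (hP : ∀ᵐ x ∂m, P x) (k : ℕ) : ∀ᵐ x ∂m, P (T^[k] x) := by
  induction k with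
  | zero => simpa using hP
  | succ k ih =>
    have : {x | ¬ P (T^[k+1] x)} = T ⁻¹' {x | ¬ P (T^[k] x)} := by
      ext x; simp [Function.iterate_succ_apply]
    rw [ae_iff] at ih ⊢
    rw [this]
    exact ns_preimage m T hns ih

private lemma duality {X : Type*} [MeasurableSpace X] (m : Measure X)
    (T : X → X) (hT : Measurable T)
    {u w : X → ℂ} (hu : Integrable u m) (hw : Integrable w m)
    (hset : ∀ A : Set X, MeasurableSet A → ∫ x in A, w x ∂m = ∫ x in T ⁻¹' A, u x ∂m)
    {h : X → ℂ} (hh : Measurable h) {M : ℝ}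
    (hb : ∀ᵐ x ∂m, ‖h x‖ ≤ M) (hbT : ∀ᵐ x ∂m, ‖h (T x)‖ ≤ M) :
    ∫ x, h x * w x ∂m = ∫ x, h (T x) * u x ∂m := by
  -- step 1 : the identity for simple functions
  have key : ∀ s : SimpleFunc X ℂ, ∫ x, s x * w x ∂m = ∫ x, s (T x) * u x ∂m := by
    intro s
    induction s using SimpleFunc.induction with
    | @const c A hA =>
      have h1 : (fun x => (SimpleFunc.piecewise A hA (SimpleFunc.const X c)
          (SimpleFunc.const X 0)) x * w x) = fun x => A.indicator (fun y => c * w y) x := by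
        funext x
        by_cases hx : x ∈ A <;>
          simp [SimpleFunc.piecewise_apply, Set.indicator_apply, hx]
      have h2 : (fun x => (SimpleFunc.piecewise A hA (SimpleFunc.const X c)
          (SimpleFunc.const X 0)) (T x) * u x)
          = fun x => (T ⁻¹' A).indicator (fun y => c * u y) x := by
        funext x
        by_cases hx : T x ∈ A <;>
          simp [SimpleFunc.piecewise_apply, Set.indicator_apply, Set.mem_preimage, hx]
      rw [h1, h2, integral_indicator hA, integral_indicator (hT hA)]
      rw [integral_const_mul c, integral_const_mul c, hset A hA]
    | @add f g _ ihf ihg =>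
      have hif : Integrable (fun x => f x * w x) m :=
        by obtain ⟨C0, hC0⟩ := f.exists_forall_norm_le
           exact hw.bdd_mul (c := C0) f.stronglyMeasurable.aestronglyMeasurable (Eventually.of_forall hC0)
      have hig : Integrable (fun x => g x * w x) m :=
        by obtain ⟨C0, hC0⟩ := g.exists_forall_norm_le
           exact hw.bdd_mul (c := C0) g.stronglyMeasurable.aestronglyMeasurable (Eventually.of_forall hC0)
      have hif' : Integrable (fun x => f (T x) * u x) m :=
        by obtain ⟨C0, hC0⟩ := f.exists_forall_norm_le
           exact hu.bdd_mul (c := C0) ((f.stronglyMeasurable.measurable.comp hT).stronglyMeasurable).aestronglyMeasurable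
            (Eventually.of_forall fun x => hC0 (T x))
      have hig' : Integrable (fun x => g (T x) * u x) m :=
        by obtain ⟨C0, hC0⟩ := g.exists_forall_norm_le
           exact hu.bdd_mul (c := C0) ((g.stronglyMeasurable.measurable.comp hT).stronglyMeasurable).aestronglyMeasurable
            (Eventually.of_forall fun x => hC0 (T x))
      have e1 : (fun x => (f + g) x * w x) = fun x => f x * w x + g x * w x := by
        funext x; simp [add_mul]
      have e2 : (fun x => (f + g) (T x) * u x) = fun x => f (T x) * u x + g (T x) * u x := by
        funext x; simp [add_mul]
      rw [e1, e2, integral_add hif hig, integral_add hif' hig', ihf, ihg]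
  -- step 2 : approximate h by simple functions and pass to the limit
  set s : ℕ → SimpleFunc X ℂ :=
    fun n => SimpleFunc.approxOn h hh Set.univ 0 (Set.mem_univ 0) n with hs
  have hsbd : ∀ n x, ‖s n x‖ ≤ ‖h x‖ + ‖h x‖ := fun n x =>
    SimpleFunc.norm_approxOn_zero_le hh (Set.mem_univ 0) x n
  have hstend : ∀ x, Tendsto (fun n => s n x) atTop (𝓝 (h x)) := fun x =>
    SimpleFunc.tendsto_approxOn hh (Set.mem_univ 0) (by simp)
  have hL : Tendsto (fun n => ∫ x, s n x * w x ∂m) atTop (𝓝 (∫ x, h x * w x ∂m)) := by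
    refine tendsto_integral_of_dominated_convergence (fun x => (M + M) * ‖w x‖)
      (fun n => (((s n).stronglyMeasurable.aestronglyMeasurable).mul hw.1)) (hw.norm.const_mul _)
      (fun n => ?_) ?_
    · filter_upwards [hb] with x hx
      calc ‖s n x * w x‖ = ‖s n x‖ * ‖w x‖ := norm_mul _ _
        _ ≤ (M + M) * ‖w x‖ := by
            have := hsbd n x
            have : ‖s n x‖ ≤ M + M := this.trans (by linarith)
            exact mul_le_mul_of_nonneg_right this (norm_nonneg _)
    · exact Filter.Eventually.of_forall fun x => Tendsto.mul (hstend x) tendsto_const_nhds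
  have hR : Tendsto (fun n => ∫ x, s n (T x) * u x ∂m) atTop (𝓝 (∫ x, h (T x) * u x ∂m)) := by
    refine tendsto_integral_of_dominated_convergence (fun x => (M + M) * ‖u x‖)
      (fun n => ((((s n).stronglyMeasurable.measurable.comp hT).stronglyMeasurable).aestronglyMeasurable).mul hu.1)
      (hu.norm.const_mul _) (fun n => ?_) ?_
    · filter_upwards [hbT] with x hx
      calc ‖s n (T x) * u x‖ = ‖s n (T x)‖ * ‖u x‖ := norm_mul _ _
        _ ≤ (M + M) * ‖u x‖ := by
            have := hsbd n (T x)
            have : ‖s n (T x)‖ ≤ M + M := this.trans (by linarith)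
            exact mul_le_mul_of_nonneg_right this (norm_nonneg _)
    · exact Filter.Eventually.of_forall fun x => Tendsto.mul (hstend (T x)) tendsto_const_nhds
  have : (fun n => ∫ x, s n x * w x ∂m) = fun n => ∫ x, s n (T x) * u x ∂m := by
    funext n; exact key (s n)
  rw [this] at hL
  exact tendsto_nhds_unique hL hR
set_option maxHeartbeats 2000000 in
/-- **Proposition 3.** For `Λ(θ) = log λ(θ)` : there is `0 < θ₂ < θ₁` such
that for real `|θ| < θ₂` and every density `f ∈ B` (`f ≥ 0`, `∫ f dm = 1`),
`(1/n) log ∫ e^{θ S_n} f dm → Λ(θ)`. -/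
theorem stmt_9
    {X : Type*} [MeasurableSpace X] (m : Measure X) [IsProbabilityMeasure m]
    (T : X → X) (hT : Measurable T)
    (hns : ∀ A : Set X, MeasurableSet A → m A = 0 → m (T ⁻¹' A) = 0)
    -- B is a complex Banach space continuously embedded in L¹(m)
    {B : Type*} [NormedAddCommGroup B] [NormedSpace ℂ B] [CompleteSpace B]
    (ι : B →L[ℂ] Lp ℂ 1 m) (hι : Function.Injective ι)
    -- constant functions lie in B
    (oneB : B) (honeB : ∀ᵐ x ∂m, (ι oneB : X → ℂ) x = 1)
    -- B is a Banach algebra : mulB is the pointwise multiplication, a continuous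
    -- bilinear map (hence ∃ C > 0, ‖f*g‖_B ≤ C ‖f‖_B ‖g‖_B with C = ‖mulB‖)
    (mulB : B →L[ℂ] B →L[ℂ] B)
    (hmulB : ∀ f g : B, ∀ᵐ x ∂m,
        (ι (mulB f g) : X → ℂ) x = (ι f : X → ℂ) x * (ι g : X → ℂ) x)
    -- B is a complex Banach lattice : stable under conjugation and modulus
    (conjB : B → B)
    (hconjB : ∀ f : B, ∀ᵐ x ∂m, (ι (conjB f) : X → ℂ) x = starRingEnd ℂ ((ι f : X → ℂ) x))
    (absB : B → B)
    (habsB : ∀ f : B, ∀ᵐ x ∂m,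
        (ι (absB f) : X → ℂ) x = ((‖(ι f : X → ℂ) x‖ : ℝ) : ℂ))
    -- P(B) ⊂ B and P restricted to B is bounded : PB is the restriction to B of the
    -- Perron-Frobenius operator P f = d m_f / dm, m_f (A) = ∫_{T⁻¹A} f dm
    (PB : B →L[ℂ] B)
    (hPB : ∀ (f : B) (A : Set X), MeasurableSet A →
        ∫ x in A, (ι (PB f) : X → ℂ) x ∂m = ∫ x in T ⁻¹' A, (ι f : X → ℂ) x ∂m)
    -- the spectral radius of P on B is 1
    (hrad : spectralRadius ℂ (PB : B →L[ℂ] B) = 1)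
    -- spectral gap : 1 is a simple eigenvalue of P on B and the only eigenvalue of
    -- modulus 1, so P f = ⟨m,f⟩ v + Q f with v the invariant density and Q of
    -- spectral radius < 1, Q v = 0, ⟨m, Q f⟩ = 0
    (v : B) (hv0 : ∀ᵐ x ∂m, 0 ≤ ((ι v : X → ℂ) x).re ∧ ((ι v : X → ℂ) x).im = 0)
    (hv1 : ∫ x, (ι v : X → ℂ) x ∂m = 1) (hvfix : PB v = v)
    (Q : B →L[ℂ] B) (hQrad : spectralRadius ℂ (Q : B →L[ℂ] B) < 1)
    (hQv : Q v = 0) (hQm : ∀ f : B, ∫ x, (ι (Q f) : X → ℂ) x ∂m = 0)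
    (hdecomp : ∀ f : B, PB f = (∫ x, (ι f : X → ℂ) x ∂m) • v + Q f)
    -- μ = v · m is the unique T-invariant a.c.i.p. with density in B
    (μ : Measure X)
    (hμ : μ = m.withDensity fun x => ENNReal.ofReal ((ι v : X → ℂ) x).re)
    -- φ ∈ B is a bounded real-valued observable with ∫ φ dμ = 0
    (φ : B) (hφreal : ∀ᵐ x ∂m, ((ι φ : X → ℂ) x).im = 0)
    (hφbdd : ∃ K : ℝ, ∀ᵐ x ∂m, ‖(ι φ : X → ℂ) x‖ ≤ K)
    (hφmean : ∫ x, ((ι φ : X → ℂ) x).re ∂μ = 0)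
    -- S n = Σ_{k<n} φ ∘ T^k are the Birkhoff sums of φ
    (S : ℕ → X → ℝ)
    (hS : ∀ (n : ℕ) (x : X), S n x = ∑ k ∈ Finset.range n, ((ι φ : X → ℂ) (T^[k] x)).re)
    -- E z is the element of B representing e^{zφ} (cf. Statement 6)
    (E : ℂ → B)
    (hE : ∀ z : ℂ, ∀ᵐ x ∂m, (ι (E z) : X → ℂ) x = Complex.exp (z * (ι φ : X → ℂ) x))
    -- data given by Proposition 1 : perturbed spectral decomposition of P_z f = P(e^{zφ} f)
    (θ₀ : ℝ) (hθ₀ : 0 < θ₀) (C : ℝ) (hC : 0 < C) (η₁ η₂ : ℝ) (hη₁ : 0 < η₁) (hη₂ : 0 < η₂)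
    (lam : ℂ → ℂ) (vf : ℂ → B) (pf : ℂ → (B →L[ℂ] ℂ)) (Qf : ℂ → (B →L[ℂ] B))
    (hlamhol : DifferentiableOn ℂ lam (Metric.ball 0 θ₀))
    (hvfhol : DifferentiableOn ℂ vf (Metric.ball 0 θ₀))
    (hpfhol : DifferentiableOn ℂ pf (Metric.ball 0 θ₀))
    (hQfhol : DifferentiableOn ℂ Qf (Metric.ball 0 θ₀))
    (hlam0 : lam 0 = 1) (hvf0 : vf 0 = v)
    (hpf0 : ∀ f : B, pf 0 f = ∫ x, (ι f : X → ℂ) x ∂m) (hQf0 : Qf 0 = Q)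
    (hPz : ∀ z ∈ Metric.ball (0 : ℂ) θ₀, ∀ f : B,
        PB (mulB (E z) f) = (lam z * pf z f) • vf z + Qf z f)
    (hnorml : ∀ z ∈ Metric.ball (0 : ℂ) θ₀, pf z (vf z) = 1)
    (hQfv : ∀ z ∈ Metric.ball (0 : ℂ) θ₀, Qf z (vf z) = 0)
    (hpfQf : ∀ z ∈ Metric.ball (0 : ℂ) θ₀, (pf z).comp (Qf z) = 0)
    (hlamlb : ∀ z ∈ Metric.ball (0 : ℂ) θ₀, 1 - η₁ < ‖lam z‖)
    (hQfn : ∀ z ∈ Metric.ball (0 : ℂ) θ₀, ∀ n : ℕ, ‖(Qf z) ^ n‖ ≤ C * (1 - η₁ - η₂) ^ n)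
    -- data given by Proposition 2 : θ₁ and positivity of the eigenvalue, eigenfunction
    -- and eigenform for real θ, |θ| < θ₁
    (θ₁ : ℝ) (hθ₁pos : 0 < θ₁) (hθ₁lt : θ₁ < θ₀)
    (hlampos : ∀ θ : ℝ, |θ| < θ₁ → 0 < (lam (θ : ℂ)).re ∧ (lam (θ : ℂ)).im = 0)
    (hone : ∀ z ∈ Metric.ball (0 : ℂ) θ₁, pf z oneB ≠ 0)
    (hvpos : ∀ θ : ℝ, |θ| < θ₁ →
        ∀ᵐ x ∂m, 0 ≤ ((ι (pf (θ : ℂ) oneB • vf (θ : ℂ)) : X → ℂ) x).re ∧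
          ((ι (pf (θ : ℂ) oneB • vf (θ : ℂ)) : X → ℂ) x).im = 0)
    (hppos : ∀ θ : ℝ, |θ| < θ₁ → ∀ f : B,
        (∀ᵐ x ∂m, 0 ≤ ((ι f : X → ℂ) x).re ∧ ((ι f : X → ℂ) x).im = 0) →
        0 ≤ (((pf (θ : ℂ) oneB)⁻¹ • pf (θ : ℂ)) f).re ∧
          (((pf (θ : ℂ) oneB)⁻¹ • pf (θ : ℂ)) f).im = 0)
    -- the spectral radius of Q(θ) is strictly smaller than λ(θ)
    (hQlam : ∀ θ : ℝ, |θ| < θ₁ →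
        spectralRadius ℂ (Qf (θ : ℂ) : B →L[ℂ] B) < ENNReal.ofReal (lam (θ : ℂ)).re)
    :
    ∃ θ₂ : ℝ, 0 < θ₂ ∧ θ₂ < θ₁ ∧
      ∀ θ : ℝ, |θ| < θ₂ →
        ∀ f : B, (∀ᵐ x ∂m, 0 ≤ ((ι f : X → ℂ) x).re ∧ ((ι f : X → ℂ) x).im = 0) →
          (∫ x, (ι f : X → ℂ) x ∂m = 1) →
          Tendsto (fun n : ℕ => (n : ℝ)⁻¹ *
              Real.log (∫ x, Real.exp (θ * S n x) * ((ι f : X → ℂ) x).re ∂m))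
            atTop (𝓝 (Real.log (lam (θ : ℂ)).re)) := by
  classical
  obtain ⟨K₀, hK₀⟩ := hφbdd
  set K : ℝ := max K₀ 1 with hKdef
  have hK1 : (1:ℝ) ≤ K := le_max_right _ _
  have hKpos : (0:ℝ) < K := lt_of_lt_of_le one_pos hK1
  have hφK : ∀ᵐ x ∂m, ‖(ι φ : X → ℂ) x‖ ≤ K ∧ ((ι φ : X → ℂ) x).im = 0 := by
    filter_upwards [hK₀, hφreal] with x h1 h2
    exact ⟨h1.trans (le_max_left _ _), h2⟩
  have h0ball : (0 : ℂ) ∈ Metric.ball (0:ℂ) θ₀ := Metric.mem_ball_self hθ₀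
  have hr0 : (0:ℝ) ≤ 1 - η₁ - η₂ := by
    have h1 := hQfn 0 h0ball 1
    have h0 : (0:ℝ) ≤ C * (1 - η₁ - η₂) ^ 1 := le_trans (norm_nonneg _) h1
    nlinarith
  set r : ℝ := 1 - η₁ - η₂ with hrdef
  have hr1 : r < 1 := by rw [hrdef]; linarith
  have hrlt : r < 1 - η₁ := by rw [hrdef]; linarith
  set r' : ℝ := max r (Real.exp (-1)) with hr'def
  have hr'pos : 0 < r' := lt_of_lt_of_le (Real.exp_pos _) (le_max_right _ _)
  have hr'lt1 : r' < 1 := by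
    apply max_lt hr1
    calc Real.exp (-1) < Real.exp 0 := Real.exp_lt_exp.2 (by norm_num)
      _ = 1 := Real.exp_zero
  have hlogneg : Real.log r' < 0 := Real.log_neg hr'pos hr'lt1
  refine ⟨min (θ₁/2) (-Real.log r' / (2*K)),
    lt_min (by linarith) (div_pos (by linarith) (by linarith)),
    lt_of_le_of_lt (min_le_left _ _) (by linarith), ?_⟩
  intro θ hθ f hfpos hf1
  set z : ℂ := (θ : ℂ) with hzdef
  have hθθ₁ : |θ| < θ₁ := hθ.trans_le ((min_le_left _ _).trans (by linarith))
  have hθθ₀ : |θ| < θ₀ := hθθ₁.trans hθ₁lt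
  have hznorm : ‖z‖ = |θ| := by rw [hzdef, Complex.norm_real, Real.norm_eq_abs]
  have hzball₁ : z ∈ Metric.ball (0:ℂ) θ₁ := by
    rw [Metric.mem_ball, dist_zero_right, hznorm]; exact hθθ₁
  have hzball₀ : z ∈ Metric.ball (0:ℂ) θ₀ := by
    rw [Metric.mem_ball, dist_zero_right, hznorm]; exact hθθ₀
  have hθK : |θ| * K < -Real.log r' := by
    have h2 : |θ| < -Real.log r' / (2*K) := hθ.trans_le (min_le_right _ _)
    have h3 : |θ| * (2*K) < -Real.log r' := by
      rw [← lt_div_iff₀ (by positivity)]; exact h2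
    nlinarith [abs_nonneg θ, hKpos]
  -- measurability of the Birkhoff sums
  have hφmeas : StronglyMeasurable (ι φ : X → ℂ) := Lp.stronglyMeasurable _
  have hSmeas : ∀ n, Measurable (S n) := by
    intro n
    have h1 : S n = fun x => ∑ k ∈ Finset.range n, ((ι φ : X → ℂ) (T^[k] x)).re :=
      funext (hS n)
    rw [h1]
    exact Finset.measurable_sum _ fun k _ =>
      Complex.measurable_re.comp (hφmeas.measurable.comp (hT.iterate k))
  -- a.e. bounds on the Birkhoff sums
  have hGae : ∀ᵐ x ∂m, ∀ k : ℕ,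
      ‖(ι φ : X → ℂ) (T^[k] x)‖ ≤ K ∧ ((ι φ : X → ℂ) (T^[k] x)).im = 0 := by
    rw [ae_all_iff]
    exact fun k => ns_ae_iterate m T hns hφK k
  have hSbd : ∀ᵐ x ∂m, ∀ n : ℕ, |S n x| ≤ n * K ∧ |S n (T x)| ≤ n * K := by
    filter_upwards [hGae] with x hx
    intro n
    constructor
    · rw [hS]
      calc |∑ k ∈ Finset.range n, ((ι φ : X → ℂ) (T^[k] x)).re|
          ≤ ∑ k ∈ Finset.range n, |((ι φ : X → ℂ) (T^[k] x)).re| :=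
            Finset.abs_sum_le_sum_abs _ _
        _ ≤ ∑ _k ∈ Finset.range n, K := Finset.sum_le_sum fun k _ =>
            (Complex.abs_re_le_norm _).trans (hx k).1
        _ = n * K := by simp [Finset.sum_const, nsmul_eq_mul]
    · rw [hS]
      calc |∑ k ∈ Finset.range n, ((ι φ : X → ℂ) (T^[k] (T x))).re|
          ≤ ∑ k ∈ Finset.range n, |((ι φ : X → ℂ) (T^[k] (T x))).re| :=
            Finset.abs_sum_le_sum_abs _ _
        _ ≤ ∑ _k ∈ Finset.range n, K := Finset.sum_le_sum fun k _ => by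
            have := (hx (k+1)).1
            rw [Function.iterate_succ_apply] at this
            exact (Complex.abs_re_le_norm _).trans this
        _ = n * K := by simp [Finset.sum_const, nsmul_eq_mul]
  -- integrability of e^{θ Sₙ}·g for g ∈ B
  have hexpmeas : ∀ n : ℕ, Measurable (fun x => (Real.exp (θ * S n x) : ℂ)) := fun n =>
    Complex.measurable_ofReal.comp (Real.measurable_exp.comp ((hSmeas n).const_mul θ))
  have hexpbd : ∀ n : ℕ, ∀ᵐ x ∂m, ‖(Real.exp (θ * S n x) : ℂ)‖ ≤ Real.exp (|θ| * (n * K)) := by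
    intro n
    filter_upwards [hSbd] with x hx
    rw [Complex.norm_real, Real.norm_eq_abs, abs_of_pos (Real.exp_pos _)]
    apply Real.exp_le_exp.2
    calc θ * S n x ≤ |θ * S n x| := le_abs_self _
      _ = |θ| * |S n x| := abs_mul _ _
      _ ≤ |θ| * (n * K) := mul_le_mul_of_nonneg_left (hx n).1 (abs_nonneg θ)
  have hexpbdT : ∀ n : ℕ, ∀ᵐ x ∂m,
      ‖(Real.exp (θ * S n (T x)) : ℂ)‖ ≤ Real.exp (|θ| * (n * K)) := by
    intro n
    filter_upwards [hSbd] with x hx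
    rw [Complex.norm_real, Real.norm_eq_abs, abs_of_pos (Real.exp_pos _)]
    apply Real.exp_le_exp.2
    calc θ * S n (T x) ≤ |θ * S n (T x)| := le_abs_self _
      _ = |θ| * |S n (T x)| := abs_mul _ _
      _ ≤ |θ| * (n * K) := mul_le_mul_of_nonneg_left (hx n).2 (abs_nonneg θ)
  have hint : ∀ (n : ℕ) (g : B),
      Integrable (fun x => (Real.exp (θ * S n x) : ℂ) * (ι g : X → ℂ) x) m := by
    intro n g
    exact Integrable.bdd_mul (L1.integrable_coeFn _)
      (hexpmeas n).stronglyMeasurable.aestronglyMeasurable (hexpbd n)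
  -- helpers for real and imaginary parts of integrals
  have hre_int : ∀ {w : X → ℂ}, Integrable w m →
      (∫ x, (w x).re ∂m) = (∫ x, w x ∂m).re := by
    intro w hw
    have h1 := integral_re hw
    rwa [RCLike.re_eq_complex_re] at h1
  have him_int : ∀ {w : X → ℂ}, Integrable w m →
      (∫ x, (w x).im ∂m) = (∫ x, w x ∂m).im := by
    intro w hw
    have h1 := integral_im hw
    rwa [RCLike.im_eq_complex_im] at h1
  have hint_re : ∀ {w : X → ℂ}, Integrable w m → Integrable (fun x => (w x).re) m := by
    intro w hw
    have h1 := hw.re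
    rwa [RCLike.re_eq_complex_re] at h1
  -- the operator L = P_θ and its iterates
  set Lop : B → B := fun g => PB (mulB (E z) g) with hLop
  have hpfQ : ∀ y : B, pf z (Qf z y) = 0 := by
    intro y
    have h1 := hpfQf z hzball₀
    have h2 := DFunLike.congr_fun h1 y
    simpa using h2
  have hiter : ∀ (n : ℕ) (g : B), Lop^[n+1] g
      = ((lam z ^ (n+1)) * pf z g) • vf z + ((Qf z ^ (n+1)) g) := by
    intro n
    induction n with
    | zero =>
      intro g
      show PB (mulB (E z) g) = _
      rw [hPz z hzball₀ g]
      simp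
    | succ n ih =>
      intro g
      rw [Function.iterate_succ_apply', ih g]
      show PB (mulB (E z) _) = _
      have e1 : pf z ((lam z ^ (n+1) * pf z g) • vf z + (Qf z ^ (n+1)) g)
          = lam z ^ (n+1) * pf z g := by
        rw [_root_.map_add, _root_.map_smul, hnorml z hzball₀, smul_eq_mul, mul_one,
          show (Qf z ^ (n+1)) g = Qf z ((Qf z ^ n) g) by rw [pow_succ']; rfl,
          hpfQ, add_zero]
      have e2 : Qf z ((lam z ^ (n+1) * pf z g) • vf z + (Qf z ^ (n+1)) g)
          = (Qf z ^ (n+1+1)) g := by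
        rw [_root_.map_add, _root_.map_smul, hQfv z hzball₀, smul_zero, zero_add,
          show (Qf z ^ (n+1+1)) g = Qf z ((Qf z ^ (n+1)) g) by rw [pow_succ']; rfl]
      rw [hPz z hzball₀ _, e1, e2, ← mul_assoc, ← pow_succ']
  -- the fundamental duality identity
  have hJ : ∀ (n : ℕ) (g : B),
      ∫ x, (Real.exp (θ * S n x) : ℂ) * (ι g : X → ℂ) x ∂m
        = ∫ x, (ι (Lop^[n] g) : X → ℂ) x ∂m := by
    intro n
    induction n with
    | zero =>
      intro g
      rw [Function.iterate_zero_apply]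
      apply integral_congr_ae
      filter_upwards with x
      rw [hS 0 x]
      simp
    | succ n ih =>
      intro g
      have hcongr : ∀ᵐ x ∂m,
          (Real.exp (θ * S (n+1) x) : ℂ) * (ι g : X → ℂ) x
            = (Real.exp (θ * S n (T x)) : ℂ) * (ι (mulB (E z) g) : X → ℂ) x := by
        filter_upwards [hmulB (E z) g, hE z, hφreal] with x h1 h2 h3
        have hsplit : S (n+1) x = S n (T x) + ((ι φ : X → ℂ) x).re := by
          rw [hS, hS, Finset.sum_range_succ']
          simp only [Function.iterate_succ_apply, Function.iterate_zero_apply]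
        have hφx : ((ι φ : X → ℂ) x) = ((((ι φ : X → ℂ) x).re : ℝ) : ℂ) := by
          apply Complex.ext
          · simp
          · simp [h3]
        rw [h1, h2, hφx]
        rw [hsplit]
        have : θ * (S n (T x) + ((ι φ : X → ℂ) x).re)
            = θ * S n (T x) + θ * ((ι φ : X → ℂ) x).re := by ring
        rw [this, Real.exp_add, Complex.ofReal_mul]
        rw [show z * ((((ι φ : X → ℂ) x).re : ℝ) : ℂ)
            = (((θ * ((ι φ : X → ℂ) x).re : ℝ)) : ℂ) by rw [hzdef]; push_cast; ring]
        rw [← Complex.ofReal_exp]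
        ring
      rw [integral_congr_ae hcongr]
      have hdual := duality m T hT (L1.integrable_coeFn (ι (mulB (E z) g)))
        (L1.integrable_coeFn (ι (PB (mulB (E z) g))))
        (fun A hA => hPB (mulB (E z) g) A hA)
        (hexpmeas n) (hexpbd n) (hexpbdT n)
      rw [← hdual]
      have : (fun x => (Real.exp (θ * S n x) : ℂ) * (ι (PB (mulB (E z) g)) : X → ℂ) x)
          = fun x => (Real.exp (θ * S n x) : ℂ) * (ι (Lop g) : X → ℂ) x := rfl
      rw [this, ih (Lop g), ← Function.iterate_succ_apply]
  -- value of the integral for n ≥ 1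
  set cc : ℂ := ∫ x, (ι (vf z) : X → ℂ) x ∂m with hccdef
  have hLval : ∀ n : ℕ, (∫ x, (ι (Lop^[n+1] f) : X → ℂ) x ∂m)
      = lam z ^ (n+1) * pf z f * cc + ∫ x, (ι ((Qf z ^ (n+1)) f) : X → ℂ) x ∂m := by
    intro n
    rw [hiter n f]
    have hcoe : (ι (((lam z ^ (n+1)) * pf z f) • vf z + (Qf z ^ (n+1)) f) : X → ℂ)
        =ᵐ[m] fun x => (lam z ^ (n+1) * pf z f) * (ι (vf z) : X → ℂ) x
          + (ι ((Qf z ^ (n+1)) f) : X → ℂ) x := by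
      rw [_root_.map_add, _root_.map_smul]
      filter_upwards [Lp.coeFn_add (((lam z ^ (n+1)) * pf z f) • ι (vf z))
        (ι ((Qf z ^ (n+1)) f)),
        Lp.coeFn_smul ((lam z ^ (n+1)) * pf z f) (ι (vf z))] with x hx1 hx2
      rw [hx1, Pi.add_apply, hx2, Pi.smul_apply, smul_eq_mul]
    rw [integral_congr_ae hcoe,
      integral_add ((L1.integrable_coeFn _).const_mul _) (L1.integrable_coeFn _),
      integral_const_mul]
  -- real parts
  set Rn : ℕ → ℝ := fun n => ∫ x, Real.exp (θ * S n x) * ((ι f : X → ℂ) x).re ∂m with hRndef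
  have hReJ : ∀ n, Rn n = (∫ x, (Real.exp (θ * S n x) : ℂ) * (ι f : X → ℂ) x ∂m).re := by
    intro n
    rw [← hre_int (hint n f)]
    show (∫ x, Real.exp (θ * S n x) * ((ι f : X → ℂ) x).re ∂m) = _
    apply integral_congr_ae
    filter_upwards with x
    rw [Complex.mul_re, Complex.ofReal_re, Complex.ofReal_im]
    ring
  obtain ⟨hLpos, hLim⟩ := hlampos θ hθθ₁
  set Lr : ℝ := (lam z).re with hLrdef
  have hlamz : lam z = ((Lr : ℝ) : ℂ) := by
    apply Complex.ext
    · simp [hLrdef]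
    · exact hLim
  have hLlb : 1 - η₁ < Lr := by
    have h1 := hlamlb z hzball₀
    rwa [hlamz, Complex.norm_real, Real.norm_eq_abs, abs_of_pos hLpos] at h1
  have hrL : r < Lr := lt_trans hrlt hLlb
  have hLrpos : 0 < Lr := hLpos
  -- the error terms
  set en : ℕ → ℝ := fun n => (∫ x, (ι ((Qf z ^ n) f) : X → ℂ) x ∂m).re with hendef
  set D : ℝ := ‖ι‖ * (C * ‖f‖) with hDdef
  have hDnn : 0 ≤ D := by positivity
  have hen : ∀ n, |en n| ≤ D * r ^ n := by
    intro n
    calc |en n| ≤ ‖∫ x, (ι ((Qf z ^ n) f) : X → ℂ) x ∂m‖ :=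
          Complex.abs_re_le_norm _
      _ = ‖∫ x, (ι ((Qf z ^ n) f) : X → ℂ) x ∂m‖ := rfl
      _ ≤ ∫ x, ‖(ι ((Qf z ^ n) f) : X → ℂ) x‖ ∂m := norm_integral_le_integral_norm _
      _ = ‖ι ((Qf z ^ n) f)‖ := (L1.norm_eq_integral_norm _).symm
      _ ≤ ‖ι‖ * ‖(Qf z ^ n) f‖ := ι.le_opNorm _
      _ ≤ ‖ι‖ * (‖Qf z ^ n‖ * ‖f‖) := by
          gcongr
          exact ContinuousLinearMap.le_opNorm _ _
      _ ≤ ‖ι‖ * ((C * r ^ n) * ‖f‖) := by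
          gcongr
          exact hQfn z hzball₀ n
      _ = D * r ^ n := by rw [hDdef]; ring
  -- key value identity
  set aa : ℝ := (pf z f * cc).re with haadef
  have hval : ∀ n : ℕ, Rn (n+1) = Lr ^ (n+1) * aa + en (n+1) := by
    intro n
    rw [hReJ (n+1), hJ (n+1) f, hLval n, Complex.add_re, mul_assoc, hlamz,
      ← Complex.ofReal_pow, Complex.re_ofReal_mul]
  -- lower bound for Rn
  have hfre_int : Integrable (fun x => ((ι f : X → ℂ) x).re) m :=
    hint_re (L1.integrable_coeFn (ι f))
  have hfre1 : ∫ x, ((ι f : X → ℂ) x).re ∂m = 1 := by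
    rw [hre_int (L1.integrable_coeFn (ι f)), hf1, Complex.one_re]
  have hRnint : ∀ n, Integrable (fun x => Real.exp (θ * S n x) * ((ι f : X → ℂ) x).re) m := by
    intro n
    refine (hint_re (hint n f)).congr ?_
    filter_upwards with x
    rw [Complex.mul_re, Complex.ofReal_re, Complex.ofReal_im]
    ring
  have hRnlb : ∀ n : ℕ, Real.exp (-(|θ| * (n * K))) ≤ Rn n := by
    intro n
    have hle : ∀ᵐ x ∂m, Real.exp (-(|θ| * (n * K))) * ((ι f : X → ℂ) x).re
        ≤ Real.exp (θ * S n x) * ((ι f : X → ℂ) x).re := by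
      filter_upwards [hSbd, hfpos] with x hx hfx
      refine mul_le_mul_of_nonneg_right ?_ hfx.1
      apply Real.exp_le_exp.2
      calc -(|θ| * (n * K)) ≤ -|θ * S n x| := by
            rw [neg_le_neg_iff, abs_mul]
            exact mul_le_mul_of_nonneg_left (hx n).1 (abs_nonneg θ)
        _ ≤ θ * S n x := neg_abs_le _
    have h2 := integral_mono_ae (hfre_int.const_mul _) (hRnint n) hle
    rw [integral_const_mul, hfre1, mul_one] at h2
    exact h2
  have hRnpos : ∀ n, 0 < Rn n := fun n => lt_of_lt_of_le (Real.exp_pos _) (hRnlb n)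
  -- nonnegativity of aa
  have hβ0 : pf z oneB ≠ 0 := hone z hzball₁
  have hp := hppos θ hθθ₁ f hfpos
  have hpval : ((pf (θ:ℂ) oneB)⁻¹ • pf (θ:ℂ)) f = (pf z oneB)⁻¹ * pf z f := by
    rw [ContinuousLinearMap.smul_apply, smul_eq_mul]
  rw [hpval] at hp
  have hq : 0 ≤ (pf z oneB * cc).re ∧ (pf z oneB * cc).im = 0 := by
    have hv2 := hvpos θ hθθ₁
    have hicoe : (ι (pf (θ:ℂ) oneB • vf (θ:ℂ)) : X → ℂ)
        =ᵐ[m] fun x => pf z oneB * (ι (vf z) : X → ℂ) x := by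
      rw [_root_.map_smul]
      filter_upwards [Lp.coeFn_smul (pf z oneB) (ι (vf z))] with x hx
      rw [hx, Pi.smul_apply, smul_eq_mul]
    have hintv : ∫ x, (ι (pf (θ:ℂ) oneB • vf (θ:ℂ)) : X → ℂ) x ∂m = pf z oneB * cc := by
      rw [integral_congr_ae hicoe, integral_const_mul]
    constructor
    · rw [← hintv, ← hre_int (L1.integrable_coeFn (ι (pf (θ:ℂ) oneB • vf (θ:ℂ))))]
      apply integral_nonneg_of_ae
      filter_upwards [hv2] with x hx
      exact hx.1
    · rw [← hintv, ← him_int (L1.integrable_coeFn (ι (pf (θ:ℂ) oneB • vf (θ:ℂ))))]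
      rw [show (0:ℝ) = ∫ _x, (0:ℝ) ∂m by simp]
      apply integral_congr_ae
      filter_upwards [hv2] with x hx
      exact hx.2
  have hsplitpq : pf z f * cc = ((pf z oneB)⁻¹ * pf z f) * (pf z oneB * cc) := by
    field_simp
  have haare : aa = ((pf z oneB)⁻¹ * pf z f).re * (pf z oneB * cc).re := by
    rw [haadef, hsplitpq, Complex.mul_re, hp.2, hq.2]
    ring
  have haann : 0 ≤ aa := by
    rw [haare]; exact mul_nonneg hp.1 hq.1
  -- strict positivity of aa
  set ρ : ℝ := r * Real.exp (|θ| * K) with hρdef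
  have hρnn : 0 ≤ ρ := mul_nonneg hr0 (Real.exp_pos _).le
  have hρlt1 : ρ < 1 := by
    have h1 : Real.exp (|θ| * K) < (r')⁻¹ := by
      rw [show (r')⁻¹ = Real.exp (-(Real.log r')) by rw [Real.exp_neg, Real.exp_log hr'pos]]
      exact Real.exp_lt_exp.2 (by linarith)
    calc ρ ≤ r' * Real.exp (|θ| * K) :=
          mul_le_mul_of_nonneg_right (le_max_left _ _) (Real.exp_pos _).le
      _ < r' * (r')⁻¹ := by exact mul_lt_mul_of_pos_left h1 hr'pos
      _ = 1 := mul_inv_cancel₀ (ne_of_gt hr'pos)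
  have hrρ : r = ρ * Real.exp (-(|θ| * K)) := by
    rw [hρdef, Real.exp_neg, mul_assoc, mul_inv_cancel₀ (ne_of_gt (Real.exp_pos _)), mul_one]
  have haapos : 0 < aa := by
    rcases haann.lt_or_eq with h | h
    · exact h
    exfalso
    have hzero : ∀ n : ℕ, Rn (n+1) = en (n+1) := by
      intro n; rw [hval n, ← h, mul_zero, zero_add]
    have htend : Tendsto (fun n : ℕ => D * ρ ^ n) atTop (𝓝 0) := by
      have h1 := (tendsto_pow_atTop_nhds_zero_of_lt_one hρnn hρlt1).const_mul D
      rwa [mul_zero] at h1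
    obtain ⟨n, hn⟩ := (htend.eventually_lt_const one_pos).exists
    -- derive the contradiction at index n+... use exponent n+1? need D * ρ^(n+1) < 1 too:
    have hn' : D * ρ ^ (n+1) < 1 := by
      calc D * ρ ^ (n+1) = (D * ρ ^ n) * ρ := by ring
        _ ≤ (D * ρ ^ n) * 1 := by
            apply mul_le_mul_of_nonneg_left (le_of_lt hρlt1)
            exact mul_nonneg hDnn (pow_nonneg hρnn n)
        _ = D * ρ ^ n := mul_one _
        _ < 1 := hn
    have hA : (0:ℝ) < Real.exp (-(|θ| * K)) ^ (n+1) := pow_pos (Real.exp_pos _) _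
    have h1 : Real.exp (-(|θ| * (((n+1):ℕ) * K))) = Real.exp (-(|θ| * K)) ^ (n+1) := by
      rw [← Real.exp_nat_mul]
      congr 1
      push_cast
      ring
    have h2 : Rn (n+1) ≤ D * r ^ (n+1) := by
      rw [hzero n]
      exact (le_abs_self _).trans (hen (n+1))
    have h3 : r ^ (n+1) = ρ ^ (n+1) * Real.exp (-(|θ| * K)) ^ (n+1) := by
      rw [← mul_pow, ← hrρ]
    have h4 := hRnlb (n+1)
    rw [h1] at h4
    have h5 : Rn (n+1) ≤ (D * ρ ^ (n+1)) * Real.exp (-(|θ| * K)) ^ (n+1) := by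
      calc Rn (n+1) ≤ D * r ^ (n+1) := h2
        _ = (D * ρ ^ (n+1)) * Real.exp (-(|θ| * K)) ^ (n+1) := by rw [h3]; ring
    have h6 : (D * ρ ^ (n+1)) * Real.exp (-(|θ| * K)) ^ (n+1)
        < 1 * Real.exp (-(|θ| * K)) ^ (n+1) := mul_lt_mul_of_pos_right hn' hA
    rw [one_mul] at h6
    linarith
  -- conclusion
  set gg : ℕ → ℝ := fun n => Rn n / Lr ^ n with hggdef
  have hggpos : ∀ n, 0 < gg n := fun n => div_pos (hRnpos n) (pow_pos hLrpos n)
  have hggtend : Tendsto gg atTop (𝓝 aa) := by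
    have hbound : ∀ᶠ n in atTop, ‖gg n - aa‖ ≤ D * (r / Lr) ^ n := by
      filter_upwards [eventually_ge_atTop 1] with n hn
      obtain ⟨k, rfl⟩ : ∃ k, n = k + 1 := ⟨n - 1, by omega⟩
      have hL0 : (Lr:ℝ) ^ (k+1) ≠ 0 := ne_of_gt (pow_pos hLrpos _)
      have hgga : gg (k+1) - aa = en (k+1) / Lr ^ (k+1) := by
        show Rn (k+1) / Lr ^ (k+1) - aa = en (k+1) / Lr ^ (k+1)
        rw [hval k]
        field_simp
        ring
      rw [hgga, Real.norm_eq_abs, abs_div, abs_of_pos (pow_pos hLrpos _), div_pow,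
        ← mul_div_assoc]
      exact (div_le_div_iff_of_pos_right (pow_pos hLrpos _)).2 (hen (k+1))
    have hgeom : Tendsto (fun n : ℕ => D * (r/Lr) ^ n) atTop (𝓝 0) := by
      have h01 : r / Lr < 1 := (div_lt_one hLrpos).2 hrL
      have h00 : 0 ≤ r / Lr := div_nonneg hr0 hLrpos.le
      have h1 := (tendsto_pow_atTop_nhds_zero_of_lt_one h00 h01).const_mul D
      rwa [mul_zero] at h1
    have h2 : Tendsto (fun n => gg n - aa) atTop (𝓝 0) := squeeze_zero_norm' hbound hgeom
    have h3 := h2.add (tendsto_const_nhds (x := aa) (f := atTop))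
    simpa using h3
  have hloggg : Tendsto (fun n => Real.log (gg n)) atTop (𝓝 (Real.log aa)) :=
    (Real.continuousAt_log (ne_of_gt haapos)).tendsto.comp hggtend
  have hmain : Tendsto (fun n : ℕ => Real.log Lr + (n:ℝ)⁻¹ * Real.log (gg n)) atTop
      (𝓝 (Real.log Lr)) := by
    have h2 : Tendsto (fun n : ℕ => (n:ℝ)⁻¹ * Real.log (gg n)) atTop (𝓝 0) := by
      have h1 := tendsto_inv_atTop_nhds_zero_nat.mul hloggg
      rwa [zero_mul] at h1
    have h3 := (tendsto_const_nhds (x := Real.log Lr) (f := atTop (α := ℕ))).add h2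
    rwa [add_zero] at h3
  refine Tendsto.congr' ?_ hmain
  filter_upwards [eventually_ge_atTop 1] with n hn
  have hne : (n:ℝ) ≠ 0 := Nat.cast_ne_zero.2 (by omega)
  have hRg : Rn n = Lr ^ n * gg n := by
    show Rn n = Lr ^ n * (Rn n / Lr ^ n)
    field_simp
  have hInt : (∫ x, Real.exp (θ * S n x) * ((ι f : X → ℂ) x).re ∂m) = Rn n := rfl
  rw [hInt, hRg, Real.log_mul (pow_ne_zero n (ne_of_gt hLrpos)) (ne_of_gt (hggpos n)),
    Real.log_pow]
  field_simp
end
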